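/- arXiv:2309.01400 — 6 statements merged into one kernel-verified Lean document; each statement's English description precedes it below -/
import Mathlib

section
/- Let ψ be as above (ψ'' = a ψ, a ≥ 0, ψ(1) = 1, ψ'(1) = 0) and α ≥ 0. Then for all s ∈ [0,1], 0 ≥ s^α ψ'(s) ≥ -(∫₀¹ σ^α a(σ) dσ)·exp(∫₀¹ σ a(σ) dσ). -/
open Set MeasureTheory intervalIntegral Filter Topology

private lemma aux_mono {f f' : ℝ → ℝ}
    (hf : ∀ s ∈ Icc (0:ℝ) 1, HasDerivWithinAt f (f' s) (Icc 0 1) s)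
    {c d : ℝ} (hc : 0 ≤ c) (hd : d ≤ 1)
    (h0 : ∀ s ∈ Icc c d, 0 ≤ f' s) : MonotoneOn f (Icc c d) := by
  rcases le_or_gt c d with hcd | hcd
  · have hsub : Icc c d ⊆ Icc (0:ℝ) 1 := Icc_subset_Icc hc hd
    have hda : ∀ x ∈ Ioo c d, HasDerivAt f (f' x) x := by
      intro x hx
      have hx1 : x ∈ Ioo (0:ℝ) 1 := ⟨lt_of_le_of_lt hc hx.1, lt_of_lt_of_le hx.2 hd⟩
      exact (hf x (Ioo_subset_Icc_self hx1)).hasDerivAt (Icc_mem_nhds hx1.1 hx1.2)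
    have hcont : ContinuousOn f (Icc 0 1) := fun s hs => (hf s hs).continuousWithinAt
    apply monotoneOn_of_deriv_nonneg (convex_Icc c d) (hcont.mono hsub)
    · intro x hx
      rw [interior_Icc] at hx
      exact (hda x hx).differentiableAt.differentiableWithinAt
    · intro x hx
      rw [interior_Icc] at hx
      rw [(hda x hx).deriv]
      exact h0 x (Ioo_subset_Icc_self hx)
  · intro x hx y hy _
    exact absurd hx (by simp [Icc_eq_empty_of_lt hcd])

private lemma aux_anti {f f' : ℝ → ℝ}
    (hf : ∀ s ∈ Icc (0:ℝ) 1, HasDerivWithinAt f (f' s) (Icc 0 1) s)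
    {c d : ℝ} (hc : 0 ≤ c) (hd : d ≤ 1)
    (h0 : ∀ s ∈ Icc c d, f' s ≤ 0) : AntitoneOn f (Icc c d) := by
  have := aux_mono (f := fun s => -f s) (f' := fun s => -f' s)
    (fun s hs => (hf s hs).neg) hc hd (fun s hs => neg_nonneg.mpr (h0 s hs))
  intro x hx y hy hxy
  have h2 := this hx hy hxy
  simp only [neg_le_neg_iff] at h2
  exact h2

/-- Weighted bound for the derivative of the fundamental solution `ψ`:
for `α ≥ 0`, `0 ≥ s^α ψ'(s) ≥ -(∫₀¹ σ^α a(σ) dσ) exp(∫₀¹ σ a(σ) dσ)`. -/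
theorem stmt_3 (a ψ ψ' : ℝ → ℝ) (α : ℝ) (hα : 0 ≤ α)
    (ha_cont : ContinuousOn a (Set.Icc 0 1))
    (ha_nonneg : ∀ s ∈ Set.Icc (0:ℝ) 1, 0 ≤ a s)
    (hψ : ∀ s ∈ Set.Icc (0:ℝ) 1, HasDerivWithinAt ψ (ψ' s) (Set.Icc 0 1) s)
    (hψ' : ∀ s ∈ Set.Icc (0:ℝ) 1, HasDerivWithinAt ψ' (a s * ψ s) (Set.Icc 0 1) s)
    (h0 : ψ 1 = 1) (h1 : ψ' 1 = 0) :
    ∀ s ∈ Set.Icc (0:ℝ) 1,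
      s ^ α * ψ' s ≤ 0 ∧
      -(∫ σ in (0:ℝ)..1, σ ^ α * a σ) * Real.exp (∫ σ in (0:ℝ)..1, σ * a σ)
        ≤ s ^ α * ψ' s := by
  have contψ : ContinuousOn ψ (Icc 0 1) := fun s hs => (hψ s hs).continuousWithinAt
  have contψ' : ContinuousOn ψ' (Icc 0 1) := fun s hs => (hψ' s hs).continuousWithinAt
  -- Lemma A : nonnegativity of ψ on [t,1] upgrades to ψ' ≤ 0 and ψ ≥ 1 there
  have lemA : ∀ t ∈ Icc (0:ℝ) 1, (∀ s ∈ Icc t 1, 0 ≤ ψ s) →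
      ∀ s ∈ Icc t 1, ψ' s ≤ 0 ∧ 1 ≤ ψ s := by
    intro t ht hpos
    have hm : MonotoneOn ψ' (Icc t 1) := aux_mono hψ' ht.1 le_rfl
      (fun s hs => mul_nonneg (ha_nonneg s (Icc_subset_Icc ht.1 le_rfl hs)) (hpos s hs))
    have h1mem : (1:ℝ) ∈ Icc t 1 := right_mem_Icc.mpr ht.2
    have hψ'le : ∀ s ∈ Icc t 1, ψ' s ≤ 0 := by
      intro s hs
      have := hm hs h1mem hs.2
      rwa [h1] at this
    have ha : AntitoneOn ψ (Icc t 1) := aux_anti hψ ht.1 le_rfl hψ'le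
    intro s hs
    refine ⟨hψ'le s hs, ?_⟩
    have := ha hs h1mem hs.2
    rwa [h0] at this
  -- key positivity facts
  have key : ∀ s ∈ Icc (0:ℝ) 1, ψ' s ≤ 0 ∧ 1 ≤ ψ s := by
    set S : Set ℝ := {t ∈ Icc (0:ℝ) 1 | ∀ s ∈ Icc t 1, 0 ≤ ψ s} with hSdef
    have h1S : (1:ℝ) ∈ S := by
      refine ⟨right_mem_Icc.mpr zero_le_one, ?_⟩
      intro s hs
      have : s = 1 := le_antisymm hs.2 hs.1
      rw [this, h0]; norm_num
    have hbdd : BddBelow S := ⟨0, fun t ht => ht.1.1⟩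
    set t₀ := sInf S with ht₀def
    have ht₀0 : 0 ≤ t₀ := le_csInf ⟨1, h1S⟩ (fun t ht => ht.1.1)
    have ht₀1 : t₀ ≤ 1 := csInf_le hbdd h1S
    have hIoc : ∀ s ∈ Ioc t₀ 1, 0 ≤ ψ s := by
      intro s hs
      obtain ⟨t, htS, hts⟩ := exists_lt_of_csInf_lt ⟨1, h1S⟩ hs.1
      exact htS.2 s ⟨hts.le, hs.2⟩
    have ht₀S : ∀ s ∈ Icc t₀ 1, 0 ≤ ψ s := by
      intro s hs
      rcases eq_or_lt_of_le hs.1 with heq | hlt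
      · rw [← heq]
        rcases eq_or_lt_of_le ht₀1 with h1' | h1'
        · rw [h1', h0]; norm_num
        · have hc : ContinuousWithinAt ψ (Ioc t₀ 1) t₀ :=
            (contψ t₀ ⟨ht₀0, ht₀1⟩).mono (fun y hy => ⟨ht₀0.trans hy.1.le, hy.2⟩)
          have hne : (𝓝[Ioc t₀ 1] t₀).NeBot := by
            rw [← mem_closure_iff_nhdsWithin_neBot, closure_Ioc h1'.ne]
            exact left_mem_Icc.mpr ht₀1
          exact ge_of_tendsto hc (eventually_nhdsWithin_of_forall hIoc)
      · exact hIoc s ⟨hlt, hs.2⟩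
    have ht₀mem : t₀ ∈ Icc (0:ℝ) 1 := ⟨ht₀0, ht₀1⟩
    have ht₀eq : t₀ = 0 := by
      by_contra hne0
      have ht₀pos : 0 < t₀ := lt_of_le_of_ne ht₀0 (Ne.symm hne0)
      have hψt₀ : 0 < ψ t₀ := by
        have := (lemA t₀ ht₀mem ht₀S t₀ (left_mem_Icc.mpr ht₀1)).2
        linarith
      have hc : ContinuousWithinAt ψ (Icc 0 1) t₀ := contψ t₀ ht₀mem
      have hev : ∀ᶠ s in 𝓝[Icc (0:ℝ) 1] t₀, 0 < ψ s := hc.eventually (eventually_gt_nhds hψt₀)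
      rw [eventually_nhdsWithin_iff] at hev
      obtain ⟨δ, hδpos, hball⟩ := Metric.eventually_nhds_iff.mp hev
      set t₁ := max 0 (t₀ - δ/2) with ht₁def
      have ht₁lt : t₁ < t₀ := by
        apply max_lt ht₀pos; linarith
      have ht₁S : t₁ ∈ S := by
        refine ⟨⟨le_max_left _ _, le_trans ht₁lt.le ht₀1⟩, ?_⟩
        intro s hs
        rcases le_or_gt t₀ s with h' | h'
        · exact ht₀S s ⟨h', hs.2⟩
        · have hsI : s ∈ Icc (0:ℝ) 1 := ⟨le_trans (le_max_left _ _) hs.1, hs.2⟩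
          have hdist : dist s t₀ < δ := by
            rw [Real.dist_eq, abs_of_nonpos (by linarith)]
            have : t₀ - δ/2 ≤ t₁ := le_max_right _ _
            have := hs.1
            simp only [neg_sub]
            linarith
          exact (hball hdist hsI).le
      have := csInf_le hbdd ht₁S
      linarith
    intro s hs
    exact lemA 0 (left_mem_Icc.mpr zero_le_one) (by rw [ht₀eq] at ht₀S; exact ht₀S) s hs
  -- integral representation of ψ'
  have cont_aψ : ContinuousOn (fun σ => a σ * ψ σ) (Icc 0 1) := ha_cont.mul contψ
  have hrep : ∀ s ∈ Icc (0:ℝ) 1, ψ' s = -∫ σ in s..1, a σ * ψ σ := by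
    intro s hs
    have sub1 : Icc s 1 ⊆ Icc (0:ℝ) 1 := Icc_subset_Icc hs.1 le_rfl
    have := integral_eq_sub_of_hasDeriv_right_of_le hs.2
      (contψ'.mono sub1)
      (fun x hx => by
        have hx1 : x ∈ Ioo (0:ℝ) 1 := ⟨lt_of_le_of_lt hs.1 hx.1, hx.2⟩
        exact ((hψ' x (Ioo_subset_Icc_self hx1)).hasDerivAt
          (Icc_mem_nhds hx1.1 hx1.2)).hasDerivWithinAt)
      ((cont_aψ.mono sub1).intervalIntegrable_of_Icc hs.2)
    rw [this, h1]; ring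
  -- h = ψ - s ψ' and its properties
  set h : ℝ → ℝ := fun s => ψ s - s * ψ' s with hhdef
  have hh' : ∀ s ∈ Icc (0:ℝ) 1, HasDerivWithinAt h (-(s * (a s * ψ s))) (Icc 0 1) s := by
    intro s hs
    have hid : HasDerivWithinAt (fun x : ℝ => x) 1 (Icc 0 1) s := hasDerivWithinAt_id s _
    have := (hψ s hs).sub (hid.mul (hψ' s hs))
    exact this.congr_deriv (by ring)
  have hψleh : ∀ s ∈ Icc (0:ℝ) 1, ψ s ≤ h s := by
    intro s hs
    have hk := key s hs
    have : s * ψ' s ≤ 0 := mul_nonpos_of_nonneg_of_nonpos hs.1 hk.1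
    simp only [hhdef]; linarith
  have hhpos : ∀ s ∈ Icc (0:ℝ) 1, 1 ≤ h s := fun s hs => le_trans (key s hs).2 (hψleh s hs)
  have h1eq : h 1 = 1 := by simp [hhdef, h0, h1]
  have conth : ContinuousOn h (Icc 0 1) :=
    contψ.sub (continuousOn_id.mul contψ')
  -- Gronwall-type bound via log h
  have cont_sa : ContinuousOn (fun σ : ℝ => σ * a σ) (Icc 0 1) := continuousOn_id.mul ha_cont
  have hCb : ∀ s ∈ Icc (0:ℝ) 1, h s ≤ Real.exp (∫ σ in (0:ℝ)..1, σ * a σ) := by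
    intro s hs
    have sub1 : Icc s 1 ⊆ Icc (0:ℝ) 1 := Icc_subset_Icc hs.1 le_rfl
    have hLder : ∀ x ∈ Icc (0:ℝ) 1, HasDerivWithinAt (fun y => Real.log (h y))
        (-(x * (a x * ψ x)) / h x) (Icc 0 1) x := by
      intro x hx
      exact (hh' x hx).log (by have := hhpos x hx; linarith)
    have contL : ContinuousOn (fun y => Real.log (h y)) (Icc 0 1) :=
      fun x hx => (hLder x hx).continuousWithinAt
    have contInt : ContinuousOn (fun x => -(x * (a x * ψ x)) / h x) (Icc 0 1) :=
      ((continuousOn_id.mul cont_aψ).neg).div conth (fun x hx => by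
        have := hhpos x hx; linarith)
    have hftc := integral_eq_sub_of_hasDeriv_right_of_le hs.2
      (contL.mono sub1)
      (fun x hx => by
        have hx1 : x ∈ Ioo (0:ℝ) 1 := ⟨lt_of_le_of_lt hs.1 hx.1, hx.2⟩
        exact ((hLder x (Ioo_subset_Icc_self hx1)).hasDerivAt
          (Icc_mem_nhds hx1.1 hx1.2)).hasDerivWithinAt)
      ((contInt.mono sub1).intervalIntegrable_of_Icc hs.2)
    rw [h1eq, Real.log_one] at hftc
    -- pointwise comparison : -(σ a σ) ≤ integrand
    have hcmp : ∫ σ in s..1, (-(σ * a σ)) ≤ ∫ σ in s..1, -(σ * (a σ * ψ σ)) / h σ := by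
      apply integral_mono_on hs.2
        (((cont_sa.mono sub1).neg).intervalIntegrable_of_Icc hs.2)
        ((contInt.mono sub1).intervalIntegrable_of_Icc hs.2)
      intro x hx
      have hxI : x ∈ Icc (0:ℝ) 1 := sub1 hx
      have hhx : 0 < h x := by have := hhpos x hxI; linarith
      rw [neg_div, Pi.neg_apply, neg_le_neg_iff, div_le_iff₀ hhx]
      have hxa : 0 ≤ x * a x := mul_nonneg hxI.1 (ha_nonneg x hxI)
      have := mul_le_mul_of_nonneg_left (hψleh x hxI) hxa
      calc x * (a x * ψ x) = x * a x * ψ x := by ring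
        _ ≤ x * a x * h x := this
    have hneg : ∫ σ in s..1, (-(σ * a σ)) = -∫ σ in s..1, σ * a σ := by
      simp [intervalIntegral.integral_neg]
    have hstep : -(∫ σ in s..1, σ * a σ) ≤ -Real.log (h s) := by
      rw [hftc] at hcmp
      rw [← hneg]
      linarith
    have hmonoI : ∫ σ in s..1, σ * a σ ≤ ∫ σ in (0:ℝ)..1, σ * a σ := by
      apply integral_mono_interval hs.1 hs.2 le_rfl
      · filter_upwards [ae_restrict_mem measurableSet_Ioc] with x hx
        exact mul_nonneg (le_of_lt hx.1) (ha_nonneg x ⟨hx.1.le, hx.2⟩)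
      · exact cont_sa.intervalIntegrable_of_Icc zero_le_one
    have hlogle : Real.log (h s) ≤ ∫ σ in (0:ℝ)..1, σ * a σ := by linarith
    have hhs : 0 < h s := by have := hhpos s hs; linarith
    exact (Real.log_le_iff_le_exp hhs).mp hlogle
  -- final bounds
  intro s hs
  have hkey := key s hs
  have hsα : 0 ≤ s ^ α := Real.rpow_nonneg hs.1 α
  constructor
  · exact mul_nonpos_of_nonneg_of_nonpos hsα hkey.1
  · -- rewrite ψ' s as an integral
    set C := Real.exp (∫ σ in (0:ℝ)..1, σ * a σ) with hCdef
    have hCpos : 0 < C := Real.exp_pos _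
    have sub1 : Icc s 1 ⊆ Icc (0:ℝ) 1 := Icc_subset_Icc hs.1 le_rfl
    have cont_rpow : ContinuousOn (fun σ : ℝ => σ ^ α) (Icc 0 1) :=
      fun x _ => (Real.continuousAt_rpow_const x α (Or.inr hα)).continuousWithinAt
    have cont_g : ContinuousOn (fun σ : ℝ => σ ^ α * a σ * C) (Icc 0 1) :=
      (cont_rpow.mul ha_cont).mul continuousOn_const
    have hstep1 : ∫ σ in s..1, s ^ α * (a σ * ψ σ) ≤ ∫ σ in s..1, σ ^ α * a σ * C := by
      apply integral_mono_on hs.2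
        (((continuousOn_const.mul cont_aψ).mono sub1).intervalIntegrable_of_Icc hs.2)
        ((cont_g.mono sub1).intervalIntegrable_of_Icc hs.2)
      intro x hx
      have hxI : x ∈ Icc (0:ℝ) 1 := sub1 hx
      have h1' : s ^ α ≤ x ^ α := Real.rpow_le_rpow hs.1 hx.1 hα
      have haψ : 0 ≤ a x * ψ x := mul_nonneg (ha_nonneg x hxI)
        (le_trans zero_le_one (key x hxI).2)
      have hax : 0 ≤ a x := ha_nonneg x hxI
      have hxα : 0 ≤ x ^ α := Real.rpow_nonneg hxI.1 α
      have hψC : ψ x ≤ C := le_trans (hψleh x hxI) (hCb x hxI)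
      calc s ^ α * (a x * ψ x) ≤ x ^ α * (a x * ψ x) :=
            mul_le_mul_of_nonneg_right h1' haψ
        _ = x ^ α * a x * ψ x := by ring
        _ ≤ x ^ α * a x * C :=
            mul_le_mul_of_nonneg_left hψC (mul_nonneg hxα hax)
    have hstep2 : ∫ σ in s..1, σ ^ α * a σ * C ≤ (∫ σ in (0:ℝ)..1, σ ^ α * a σ) * C := by
      rw [← intervalIntegral.integral_mul_const]
      apply integral_mono_interval hs.1 hs.2 le_rfl
      · filter_upwards [ae_restrict_mem measurableSet_Ioc] with x hx
        exact mul_nonneg (mul_nonneg (Real.rpow_nonneg hx.1.le α)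
          (ha_nonneg x ⟨hx.1.le, hx.2⟩)) hCpos.le
      · exact cont_g.intervalIntegrable_of_Icc zero_le_one
    have hpull : s ^ α * ∫ σ in s..1, a σ * ψ σ = ∫ σ in s..1, s ^ α * (a σ * ψ σ) :=
      (intervalIntegral.integral_const_mul _ _).symm
    rw [hrep s hs]
    have : s ^ α * ∫ σ in s..1, a σ * ψ σ ≤ (∫ σ in (0:ℝ)..1, σ ^ α * a σ) * C := by
      rw [hpull]
      exact le_trans hstep1 hstep2
    linarith
end

section
/- Let 1 ≤ p < ∞ and α ∈ ℝ with α + 1/p > 0. Define H(s) = ∫_s^1 h(σ) dσ for h ∈ L¹(0,1). Then (∫₀¹ s^{αp} |H(s)|^p ds)^{1/p} ≤ (α + 1/p)^{-1/p} · ∫₀¹ s^{α+1/p} |h(s)| ds. -/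
open MeasureTheory Set

variable {β : ℝ} {h : ℝ → ℝ}

/-- Fubini step for the Hardy inequality. -/
lemma fub (hβ : 0 < β) (hh : IntegrableOn h (Set.Ioc 0 1)) :
    ∫ s in Set.Ioc (0:ℝ) 1, s ^ (β - 1) *
        ∫ σ in Set.Ioc (0:ℝ) 1, (Set.Ioi s).indicator (fun σ => |h σ|) σ
      = (∫ σ in Set.Ioc (0:ℝ) 1, σ ^ β * |h σ|) / β := by
  set I : Set ℝ := Set.Ioc 0 1 with hIdef
  have hmI : MeasurableSet I := measurableSet_Ioc
  have hhabs : IntegrableOn (fun σ => |h σ|) I := hh.abs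
  have hind : ∀ s : ℝ, IntegrableOn (fun σ => (Set.Ioi s).indicator (fun σ => |h σ|) σ) I :=
    fun s => hhabs.indicator measurableSet_Ioi
  set F : ℝ → ℝ := fun s => ∫ σ in I, (Set.Ioi s).indicator (fun σ => |h σ|) σ with hF
  have hFnn : ∀ s, 0 ≤ F s := fun s =>
    setIntegral_nonneg hmI fun σ _ => Set.indicator_nonneg (fun _ _ => abs_nonneg _) _
  have hFanti : Antitone F := by
    intro s t hst
    exact integral_mono (hind t) (hind s)
      (fun σ => Set.indicator_le_indicator_of_subset (Set.Ioi_subset_Ioi hst)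
        (fun _ => abs_nonneg _) _)
  -- the product function
  set f : ℝ → ℝ → ENNReal := fun s σ =>
    ENNReal.ofReal (s ^ (β - 1)) *
      (ENNReal.ofReal |h σ| * ({q : ℝ × ℝ | q.1 < q.2}.indicator 1 (s, σ))) with hfdef
  have hwm : AEMeasurable (fun s : ℝ => ENNReal.ofReal (s ^ (β - 1))) (volume.restrict I) := by
    apply ENNReal.measurable_ofReal.comp_aemeasurable
    apply ContinuousOn.aemeasurable _ hmI
    intro s hs
    exact (Real.continuousAt_rpow_const s (β - 1) (Or.inl (ne_of_gt hs.1))).continuousWithinAt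
  have hhm : AEMeasurable (fun σ : ℝ => ENNReal.ofReal |h σ|) (volume.restrict I) :=
    ENNReal.measurable_ofReal.comp_aemeasurable hhabs.1.aemeasurable
  have hfmeas : AEMeasurable (Function.uncurry f)
      ((volume.restrict I).prod (volume.restrict I)) := by
    apply AEMeasurable.mul
    · exact hwm.comp_quasiMeasurePreserving Measure.quasiMeasurePreserving_fst
    · apply AEMeasurable.mul
      · exact hhm.comp_quasiMeasurePreserving Measure.quasiMeasurePreserving_snd
      · exact ((measurable_one.indicator
          (measurableSet_lt measurable_fst measurable_snd)).aemeasurable)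
  -- step 1 : rewrite integrand as double lintegral
  have step1 : ∫⁻ s in I, ENNReal.ofReal (s ^ (β - 1) * F s)
      = ∫⁻ s in I, ∫⁻ σ in I, f s σ := by
    refine setLIntegral_congr_fun hmI (fun s hs => ?_)
    rw [ENNReal.ofReal_mul (Real.rpow_nonneg hs.1.le _)]
    have h1 : ENNReal.ofReal (F s)
        = ∫⁻ σ in I, ENNReal.ofReal ((Set.Ioi s).indicator (fun σ => |h σ|) σ) := by
      refine ofReal_integral_eq_lintegral_ofReal (hind s) (ae_of_all _ fun σ => ?_)
      exact Set.indicator_nonneg (fun _ _ => abs_nonneg _) _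
    rw [h1, ← lintegral_const_mul' _ _ ENNReal.ofReal_ne_top]
    refine lintegral_congr fun σ => ?_
    simp only [hfdef, Set.indicator_apply, Set.mem_Ioi, Set.mem_setOf_eq, Pi.one_apply]
    split
    · simp
    · simp
  -- step 2 : swap
  have step2 : ∫⁻ s in I, ∫⁻ σ in I, f s σ = ∫⁻ σ in I, ∫⁻ s in I, f s σ :=
    lintegral_lintegral_swap hfmeas
  -- step 3 : compute inner integral
  have step3 : ∫⁻ σ in I, ∫⁻ s in I, f s σ
      = ∫⁻ σ in I, ENNReal.ofReal (σ ^ β * |h σ| / β) := by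
    refine setLIntegral_congr_fun hmI (fun σ hσ => ?_)
    have hfe : ∀ s : ℝ, f s σ
        = ENNReal.ofReal |h σ| * (Set.Iio σ).indicator (fun s => ENNReal.ofReal (s ^ (β - 1))) s := by
      intro s
      simp only [hfdef, Set.indicator_apply, Set.mem_Iio, Set.mem_setOf_eq, Pi.one_apply]
      split
      · ring
      · simp
    simp only [hfe]
    rw [lintegral_const_mul' _ _ ENNReal.ofReal_ne_top,
      lintegral_indicator measurableSet_Iio]
    have hIinter : I ∩ Set.Iio σ = Set.Ioo 0 σ := by
      ext x
      simp only [hIdef, Set.mem_inter_iff, Set.mem_Ioc, Set.mem_Iio, Set.mem_Ioo]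
      constructor
      · rintro ⟨⟨hx0, _⟩, hxσ⟩; exact ⟨hx0, hxσ⟩
      · rintro ⟨hx0, hxσ⟩; exact ⟨⟨hx0, le_trans hxσ.le hσ.2⟩, hxσ⟩
    rw [Measure.restrict_restrict measurableSet_Iio, Set.inter_comm, hIinter]
    have hval : ∫⁻ s in Set.Ioo (0:ℝ) σ, ENNReal.ofReal (s ^ (β - 1))
        = ENNReal.ofReal (σ ^ β / β) := by
      rw [Measure.restrict_congr_set Ioo_ae_eq_Ioc,
        ← ofReal_integral_eq_lintegral_ofReal
          ((intervalIntegral.intervalIntegrable_rpow' (by linarith : (-1:ℝ) < β - 1)).1)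
          ?_]
      · congr 1
        rw [← intervalIntegral.integral_of_le hσ.1.le,
          integral_rpow (Or.inl (by linarith : (-1:ℝ) < β - 1)), sub_add_cancel,
          Real.zero_rpow (ne_of_gt hβ), sub_zero]
      · filter_upwards [self_mem_ae_restrict (measurableSet_Ioc : MeasurableSet (Set.Ioc (0:ℝ) σ))]
          with x hx
        exact Real.rpow_nonneg hx.1.le _
    rw [hval, ← ENNReal.ofReal_mul (abs_nonneg _)]
    congr 1
    ring
  have hCint : IntegrableOn (fun σ => σ ^ β * |h σ|) I := by
    refine Integrable.mono hhabs ?_ ?_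
    · refine AEStronglyMeasurable.mul ?_ hhabs.1
      refine ContinuousOn.aestronglyMeasurable (fun s hs => ?_) hmI
      exact (Real.continuousAt_rpow_const s β (Or.inl (ne_of_gt hs.1))).continuousWithinAt
    · filter_upwards [self_mem_ae_restrict hmI] with σ hσ
      rw [Real.norm_eq_abs, Real.norm_eq_abs, abs_abs, abs_mul,
        abs_of_nonneg (Real.rpow_nonneg hσ.1.le _), abs_abs]
      nth_rewrite 2 [← one_mul |h σ|]
      exact mul_le_mul_of_nonneg_right (Real.rpow_le_one hσ.1.le hσ.2 hβ.le) (abs_nonneg _)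
  -- step 4 : evaluate
  have step4 : ∫⁻ σ in I, ENNReal.ofReal (σ ^ β * |h σ| / β)
      = ENNReal.ofReal ((∫ σ in I, σ ^ β * |h σ|) / β) := by
    rw [← integral_div]
    refine (ofReal_integral_eq_lintegral_ofReal (hCint.div_const β) ?_).symm
    filter_upwards [self_mem_ae_restrict hmI] with σ hσ
    have : 0 ≤ σ ^ β * |h σ| := mul_nonneg (Real.rpow_nonneg hσ.1.le _) (abs_nonneg _)
    positivity
  -- left side as toReal of lintegral
  have hFm : Measurable F := hFanti.measurable
  have hwmR : AEStronglyMeasurable (fun s : ℝ => s ^ (β - 1)) (volume.restrict I) := by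
    refine ContinuousOn.aestronglyMeasurable (fun s hs => ?_) hmI
    exact (Real.continuousAt_rpow_const s (β - 1) (Or.inl (ne_of_gt hs.1))).continuousWithinAt
  have hL : ∫ s in I, s ^ (β - 1) * F s
      = (∫⁻ s in I, ENNReal.ofReal (s ^ (β - 1) * F s)).toReal := by
    refine integral_eq_lintegral_of_nonneg_ae ?_ (hwmR.mul hFm.aestronglyMeasurable)
    filter_upwards [self_mem_ae_restrict hmI] with s hs
    exact mul_nonneg (Real.rpow_nonneg hs.1.le _) (hFnn s)
  rw [hL, step1, step2, step3, step4, ENNReal.toReal_ofReal]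
  apply div_nonneg _ hβ.le
  exact setIntegral_nonneg hmI fun σ hσ =>
    mul_nonneg (Real.rpow_nonneg hσ.1.le _) (abs_nonneg _)

/-- Hardy-type inequality for the tail integral `H(s) = ∫_s¹ h`:
`‖s^α H‖_{L^p} ≤ (α + 1/p)^{-1/p} ‖s^{α+1/p} h‖_{L¹}` for `1 ≤ p < ∞`, `α + 1/p > 0`. -/
theorem stmt_4 (p α : ℝ) (hp : 1 ≤ p) (hα : 0 < α + 1 / p)
    (h : ℝ → ℝ) (hh : IntegrableOn h (Set.Ioc 0 1)) :
    (∫ s in (0:ℝ)..1, s ^ (α * p) * |∫ σ in s..1, h σ| ^ p) ^ (1 / p)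
      ≤ (α + 1 / p) ^ (-(1 / p)) * ∫ s in (0:ℝ)..1, s ^ (α + 1 / p) * |h s| := by
  have hp0 : 0 < p := lt_of_lt_of_le one_pos hp
  set β := α + 1 / p with hβdef
  have hβ : 0 < β := hα
  set I : Set ℝ := Set.Ioc 0 1 with hIdef
  have hmI : MeasurableSet I := measurableSet_Ioc
  rw [intervalIntegral.integral_of_le zero_le_one, intervalIntegral.integral_of_le zero_le_one]
  have hhabs : IntegrableOn (fun σ => |h σ|) I := hh.abs
  have hind : ∀ s : ℝ, IntegrableOn (fun σ => (Set.Ioi s).indicator (fun σ => |h σ|) σ) I :=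
    fun s => hhabs.indicator measurableSet_Ioi
  set F : ℝ → ℝ := fun s => ∫ σ in I, (Set.Ioi s).indicator (fun σ => |h σ|) σ with hFdef
  set C : ℝ := ∫ σ in I, σ ^ β * |h σ| with hCdef
  have hCnn : 0 ≤ C := setIntegral_nonneg hmI fun σ hσ =>
    mul_nonneg (Real.rpow_nonneg hσ.1.le _) (abs_nonneg _)
  have hFnn : ∀ s, 0 ≤ F s := fun s =>
    setIntegral_nonneg hmI fun σ _ => Set.indicator_nonneg (fun _ _ => abs_nonneg _) _
  have hFanti : Antitone F := by
    intro s t hst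
    exact integral_mono (hind t) (hind s)
      (fun σ => Set.indicator_le_indicator_of_subset (Set.Ioi_subset_Ioi hst)
        (fun _ => abs_nonneg _) _)
  have hCint : IntegrableOn (fun σ => σ ^ β * |h σ|) I := by
    refine Integrable.mono hhabs ?_ ?_
    · refine AEStronglyMeasurable.mul ?_ hhabs.1
      refine ContinuousOn.aestronglyMeasurable (fun s hs => ?_) hmI
      exact (Real.continuousAt_rpow_const s β (Or.inl (ne_of_gt hs.1))).continuousWithinAt
    · filter_upwards [self_mem_ae_restrict hmI] with σ hσ
      rw [Real.norm_eq_abs, Real.norm_eq_abs, abs_abs, abs_mul,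
        abs_of_nonneg (Real.rpow_nonneg hσ.1.le _), abs_abs]
      nth_rewrite 2 [← one_mul |h σ|]
      exact mul_le_mul_of_nonneg_right (Real.rpow_le_one hσ.1.le hσ.2 hβ.le) (abs_nonneg _)
  have hFs : ∀ s ∈ I, F s = ∫ σ in Set.Ioc s 1, |h σ| := by
    intro s hs
    show (∫ σ in I, (Set.Ioi s).indicator (fun σ => |h σ|) σ) = _
    rw [setIntegral_indicator measurableSet_Ioi]
    congr 1
    rw [hIdef, Set.Ioc_inter_Ioi, sup_eq_right.mpr hs.1.le]
  have hkey : ∀ s ∈ I, F s ≤ C / s ^ β := by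
    intro s hs
    have hsβ : (0:ℝ) < s ^ β := Real.rpow_pos_of_pos hs.1 _
    rw [le_div_iff₀ hsβ, mul_comm]
    have hsub : Set.Ioc s 1 ⊆ I := by rw [hIdef]; exact Set.Ioc_subset_Ioc_left hs.1.le
    calc s ^ β * F s = ∫ σ in Set.Ioc s 1, s ^ β * |h σ| := by
          rw [hFs s hs, integral_const_mul]
      _ ≤ ∫ σ in Set.Ioc s 1, σ ^ β * |h σ| := by
          refine setIntegral_mono_on ((hhabs.mono_set hsub).const_mul _)
            (hCint.mono_set hsub) measurableSet_Ioc (fun σ hσ => ?_)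
          exact mul_le_mul_of_nonneg_right
            (Real.rpow_le_rpow hs.1.le hσ.1.le hβ.le) (abs_nonneg _)
      _ ≤ C := by
          refine setIntegral_mono_set hCint ?_ (HasSubset.Subset.eventuallyLE hsub)
          filter_upwards [self_mem_ae_restrict hmI] with σ hσ
          exact mul_nonneg (Real.rpow_nonneg hσ.1.le _) (abs_nonneg _)
  have habsH : ∀ s ∈ I, |∫ σ in s..1, h σ| ≤ F s := by
    intro s hs
    rw [hFs s hs, ← intervalIntegral.integral_of_le hs.2]
    exact intervalIntegral.abs_integral_le_integral_abs hs.2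
  rcases eq_or_lt_of_le hCnn with hC0 | hC0
  · -- C = 0 : everything vanishes
    have hG0 : ∀ s ∈ I, s ^ (α * p) * |∫ σ in s..1, h σ| ^ p = 0 := by
      intro s hs
      have h1 : F s ≤ 0 := by
        have := hkey s hs
        rw [← hC0] at this
        simpa using this
      have h2 : |∫ σ in s..1, h σ| = 0 :=
        le_antisymm (le_trans (habsH s hs) h1) (abs_nonneg _)
      rw [h2, Real.zero_rpow hp0.ne', mul_zero]
    rw [setIntegral_congr_fun hmI hG0]
    simp only [integral_zero]
    rw [Real.zero_rpow (by positivity : (1:ℝ)/p ≠ 0), ← hC0, mul_zero]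
  · -- main case 0 < C
    have hpm1 : (0:ℝ) ≤ p - 1 := by linarith
    -- pointwise bound
    have hpt : ∀ s ∈ I, s ^ (α * p) * |∫ σ in s..1, h σ| ^ p
        ≤ C ^ (p - 1) * (s ^ (β - 1) * F s) := by
      intro s hs
      have hs0 : 0 < s := hs.1
      have h1 : |∫ σ in s..1, h σ| ^ p ≤ F s ^ p :=
        Real.rpow_le_rpow (abs_nonneg _) (habsH s hs) hp0.le
      have step0 : s ^ (α * p) * |∫ σ in s..1, h σ| ^ p ≤ s ^ (α * p) * F s ^ p :=
        mul_le_mul_of_nonneg_left h1 (Real.rpow_nonneg hs0.le _)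
      refine le_trans step0 ?_
      rcases eq_or_lt_of_le (hFnn s) with hF0 | hF0
      · rw [← hF0, Real.zero_rpow hp0.ne', mul_zero]
        positivity
      · have hFp : F s ^ p = F s ^ (p - 1) * F s := by
          nth_rewrite 1 [show p = p - 1 + 1 by ring]
          rw [Real.rpow_add_one hF0.ne']
        rw [hFp]
        have h2 : F s ^ (p - 1) ≤ (C / s ^ β) ^ (p - 1) :=
          Real.rpow_le_rpow (hFnn s) (hkey s hs) hpm1
        have h3 : s ^ (α * p) * (F s ^ (p - 1) * F s)
            ≤ s ^ (α * p) * ((C / s ^ β) ^ (p - 1) * F s) := by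
          apply mul_le_mul_of_nonneg_left _ (Real.rpow_nonneg hs0.le _)
          exact mul_le_mul_of_nonneg_right h2 (hFnn s)
        refine le_trans h3 (le_of_eq ?_)
        rw [Real.div_rpow hCnn (Real.rpow_nonneg hs0.le _), ← Real.rpow_mul hs0.le,
          div_eq_mul_inv, ← Real.rpow_neg hs0.le]
        have hexp : α * p + -(β * (p - 1)) = β - 1 := by
          rw [hβdef]; field_simp; ring
        calc s ^ (α * p) * (C ^ (p - 1) * s ^ (-(β * (p - 1))) * F s)
            = C ^ (p - 1) * (s ^ (α * p) * s ^ (-(β * (p - 1))) * F s) := by ring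
          _ = C ^ (p - 1) * (s ^ (β - 1) * F s) := by rw [← Real.rpow_add hs0, hexp]
    -- integrability of the dominating function
    have hFm : Measurable F := hFanti.measurable
    have h1int : IntegrableOn (fun s : ℝ => s ^ (β - 1)) I :=
      (intervalIntegral.intervalIntegrable_rpow' (by linarith : (-1:ℝ) < β - 1)).1
    have hDint : IntegrableOn (fun s => s ^ (β - 1) * F s) I := by
      have hb : ∀ᵐ s ∂(volume.restrict I), ‖F s‖ ≤ ∫ σ in I, |h σ| := by
        refine ae_of_all _ fun s => ?_
        rw [Real.norm_eq_abs, abs_of_nonneg (hFnn s)]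
        exact integral_mono (hind s) hhabs (fun σ => Set.indicator_le_self' (fun x _ => abs_nonneg _) σ)
      have := Integrable.bdd_mul h1int hFm.aestronglyMeasurable hb
      simpa [mul_comm, IntegrableOn] using this
    -- measurability of the left integrand
    have hHcont : ContinuousOn (fun s => ∫ σ in s..1, h σ) (Set.Icc 0 1) := by
      have hIcc : IntegrableOn h (Set.Icc 0 1) := by
        rw [integrableOn_Icc_iff_integrableOn_Ioc]; exact hh
      have hprim : ContinuousOn (fun s => ∫ σ in Set.Ioc 0 s, h σ) (Set.Icc 0 1) :=
        intervalIntegral.continuousOn_primitive hIcc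
      refine ContinuousOn.congr ((continuousOn_const (c := ∫ σ in Set.Ioc (0:ℝ) 1, h σ)).sub hprim) fun s hs => ?_
      have hi1 : IntervalIntegrable h volume 0 s := by
        rw [intervalIntegrable_iff_integrableOn_Ioc_of_le hs.1]
        exact hh.mono_set (Set.Ioc_subset_Ioc_right hs.2)
      have hi2 : IntervalIntegrable h volume s 1 := by
        rw [intervalIntegrable_iff_integrableOn_Ioc_of_le hs.2]
        exact hh.mono_set (Set.Ioc_subset_Ioc_left hs.1)
      have hsplit := intervalIntegral.integral_add_adjacent_intervals hi1 hi2
      show (∫ σ in s..1, h σ) = _ - _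
      rw [← intervalIntegral.integral_of_le zero_le_one, ← hsplit,
        intervalIntegral.integral_of_le hs.1]
      ring
    have hrpow_cont : Continuous fun x : ℝ => x ^ p :=
      continuous_iff_continuousAt.2 fun x => Real.continuousAt_rpow_const x p (Or.inr hp0.le)
    have hGm : AEStronglyMeasurable
        (fun s => s ^ (α * p) * |∫ σ in s..1, h σ| ^ p) (volume.restrict I) := by
      refine AEStronglyMeasurable.mul ?_ ?_
      · refine ContinuousOn.aestronglyMeasurable (fun s hs => ?_) hmI
        exact (Real.continuousAt_rpow_const s (α * p) (Or.inl (ne_of_gt hs.1))).continuousWithinAt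
      · refine Continuous.comp_aestronglyMeasurable (hrpow_cont.comp continuous_abs) ?_
        exact ((hHcont.mono Set.Ioc_subset_Icc_self).aestronglyMeasurable hmI)
    have hGnn : ∀ s ∈ I, 0 ≤ s ^ (α * p) * |∫ σ in s..1, h σ| ^ p := fun s hs =>
      mul_nonneg (Real.rpow_nonneg hs.1.le _) (Real.rpow_nonneg (abs_nonneg _) _)
    have hGint : IntegrableOn (fun s => s ^ (α * p) * |∫ σ in s..1, h σ| ^ p) I := by
      refine Integrable.mono (hDint.const_mul (C ^ (p - 1))) hGm ?_
      filter_upwards [self_mem_ae_restrict hmI] with s hs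
      rw [Real.norm_eq_abs, Real.norm_eq_abs, abs_of_nonneg (hGnn s hs), abs_of_nonneg
        (mul_nonneg (Real.rpow_nonneg hCnn _) (mul_nonneg (Real.rpow_nonneg hs.1.le _) (hFnn s)))]
      exact hpt s hs
    -- assemble
    have hmono : (∫ s in I, s ^ (α * p) * |∫ σ in s..1, h σ| ^ p)
        ≤ C ^ (p - 1) * (C / β) := by
      have h1 : (∫ s in I, s ^ (α * p) * |∫ σ in s..1, h σ| ^ p)
          ≤ ∫ s in I, C ^ (p - 1) * (s ^ (β - 1) * F s) := by
        refine integral_mono_ae hGint (hDint.const_mul _) ?_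
        filter_upwards [self_mem_ae_restrict hmI] with s hs
        exact hpt s hs
      have h2 : (∫ s in I, C ^ (p - 1) * (s ^ (β - 1) * F s)) = C ^ (p - 1) * (C / β) := by
        rw [integral_const_mul]
        congr 1
        simp only [hFdef, hCdef, hIdef]
        exact fub hβ hh
      exact h1.trans (le_of_eq h2)
    have hLnn : 0 ≤ ∫ s in I, s ^ (α * p) * |∫ σ in s..1, h σ| ^ p :=
      setIntegral_nonneg hmI hGnn
    have hRHS : C ^ (p - 1) * (C / β) = (β ^ (-(1 / p)) * C) ^ p := by
      rw [Real.mul_rpow (Real.rpow_nonneg hβ.le _) hCnn, ← Real.rpow_mul hβ.le]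
      have he : (-(1 / p)) * p = -1 := by field_simp
      rw [he, Real.rpow_neg_one]
      have hCp : C ^ p = C ^ (p - 1) * C := by
        nth_rewrite 1 [show p = p - 1 + 1 by ring]
        rw [Real.rpow_add_one hC0.ne']
      rw [hCp]
      ring
    calc (∫ s in I, s ^ (α * p) * |∫ σ in s..1, h σ| ^ p) ^ (1 / p)
        ≤ ((β ^ (-(1 / p)) * C) ^ p) ^ (1 / p) :=
          Real.rpow_le_rpow hLnn (hmono.trans_eq hRHS) (by positivity)
      _ = β ^ (-(1 / p)) * C := by
          rw [← Real.rpow_mul (mul_nonneg (Real.rpow_nonneg hβ.le _) hCnn),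
            mul_one_div_cancel hp0.ne', Real.rpow_one]
end

section
/- Let 1 ≤ p < ∞, α, β ∈ ℝ with α + 1 > β + 1/p, and u ∈ L^p(0,1) with s^β u ∈ L^p. Define U_α(s) = s^{-(α+1)} ∫₀^s σ^α u(σ) dσ. Then ‖s^β U_α‖_{L^p(0,1)} ≤ (α − β + 1 − 1/p)^{-1} ‖s^β u‖_{L^p(0,1)}. -/
open MeasureTheory
open scoped ENNReal

/-- lintegral of `σ ^ r` on `Ioc 0 s` for `-1 < r`. -/
lemma aux_lint_rpow {r s : ℝ} (hs : 0 < s) (hr : -1 < r) :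
    ∫⁻ σ in Set.Ioc 0 s, ENNReal.ofReal (σ ^ r) = ENNReal.ofReal (s ^ (r+1) / (r+1)) := by
  have hint : IntegrableOn (fun σ : ℝ => σ ^ r) (Set.Ioc 0 s) := by
    have := intervalIntegral.intervalIntegrable_rpow' (a := 0) (b := s) hr
    exact (intervalIntegrable_iff_integrableOn_Ioc_of_le hs.le).mp this
  rw [← ofReal_integral_eq_lintegral_ofReal hint]
  · congr 1
    rw [← intervalIntegral.integral_of_le hs.le,
      integral_rpow (Or.inl hr), Real.zero_rpow (by linarith), sub_zero]
  · filter_upwards [ae_restrict_mem measurableSet_Ioc] with σ hσ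
    exact Real.rpow_nonneg hσ.1.le r

/-- Upper bound for the lintegral of `s ^ (-κ-1)` on `Ioc σ 1`. -/
lemma aux_lint_tail {κ σ : ℝ} (hκ : 0 < κ) (hσ : 0 < σ) (hσ1 : σ ≤ 1) :
    ∫⁻ s in Set.Ioc σ 1, ENNReal.ofReal (s ^ (-κ-1))
      ≤ ENNReal.ofReal (σ ^ (-κ) * κ⁻¹) := by
  have hint : IntegrableOn (fun s : ℝ => s ^ (-κ-1)) (Set.Ioc σ 1) := by
    have := intervalIntegral.intervalIntegrable_rpow (a := σ) (b := 1)
      (μ := volume) (r := -κ-1) (Or.inr (Set.notMem_uIcc_of_lt hσ one_pos))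
    exact (intervalIntegrable_iff_integrableOn_Ioc_of_le hσ1).mp this
  rw [← ofReal_integral_eq_lintegral_ofReal hint]
  · apply ENNReal.ofReal_le_ofReal
    rw [← intervalIntegral.integral_of_le hσ1,
      integral_rpow (Or.inr ⟨by intro h; linarith, Set.notMem_uIcc_of_lt hσ one_pos⟩)]
    have h1 : -κ - 1 + 1 = -κ := by ring
    rw [h1, Real.one_rpow]
    have hσκ : 0 ≤ σ ^ (-κ) := Real.rpow_nonneg hσ.le _
    have h2 : (1 - σ ^ (-κ)) / (-κ) = (σ ^ (-κ) - 1) / κ := by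
      rw [div_neg, ← neg_div, neg_sub]
    rw [h2, ← div_eq_mul_inv]
    gcongr
    linarith
  · filter_upwards [ae_restrict_mem measurableSet_Ioc] with s hs
    exact Real.rpow_nonneg (hσ.trans hs.1).le _

lemma aux_claim (p α β κ : ℝ) (hp : 1 ≤ p) (hκ : 0 < κ) (hκdef : κ = α - β + 1 - 1/p)
    (u m : ℝ → ℝ) (hm : Measurable m) (hm0 : ∀ x, 0 ≤ m x)
    {s : ℝ} (hs : 0 < s)
    (hae : ∀ᵐ σ ∂(volume.restrict (Set.Ioc 0 s)), |u σ| = m σ) :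
    ENNReal.ofReal ((s ^ β * |s ^ (-(α + 1)) * ∫ σ in (0:ℝ)..s, σ ^ α * u σ|) ^ p)
      ≤ ENNReal.ofReal (κ ^ (1-p)) * ENNReal.ofReal (s ^ (-κ-1)) *
        ∫⁻ σ in Set.Ioc 0 s, ENNReal.ofReal (σ ^ κ) * ENNReal.ofReal (σ ^ β * m σ) ^ p := by
  have hp0 : (0:ℝ) < p := lt_of_lt_of_le one_pos hp
  set F := ∫ σ in (0:ℝ)..s, σ ^ α * u σ with hF
  set K := ∫⁻ σ in Set.Ioc 0 s, ENNReal.ofReal (σ ^ κ) * ENNReal.ofReal (σ ^ β * m σ) ^ p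
    with hK
  set J := ∫⁻ σ in Set.Ioc 0 s, ENNReal.ofReal (σ ^ α * m σ) with hJdef
  -- Step 1 : `ofReal |F| ≤ J`
  have step1 : ENNReal.ofReal |F| ≤ J := by
    have h1 : |F| ≤ ∫ σ in (0:ℝ)..s, |σ ^ α * u σ| :=
      intervalIntegral.abs_integral_le_integral_abs hs.le
    rw [intervalIntegral.integral_of_le hs.le] at h1
    by_cases hint : IntegrableOn (fun σ => |σ ^ α * u σ|) (Set.Ioc 0 s)
    · calc ENNReal.ofReal |F| ≤ ENNReal.ofReal (∫ σ in Set.Ioc 0 s, |σ ^ α * u σ|) :=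
            ENNReal.ofReal_le_ofReal h1
        _ = ∫⁻ σ in Set.Ioc 0 s, ENNReal.ofReal |σ ^ α * u σ| :=
            ofReal_integral_eq_lintegral_ofReal hint
              (Filter.Eventually.of_forall fun σ => abs_nonneg _)
        _ = J := by
            apply lintegral_congr_ae
            filter_upwards [hae, ae_restrict_mem measurableSet_Ioc] with σ hσa hσ
            rw [abs_mul, abs_of_nonneg (Real.rpow_nonneg hσ.1.le α), hσa]
    · rw [MeasureTheory.integral_undef hint] at h1
      have : |F| = 0 := le_antisymm h1 (abs_nonneg _)
      simp [this]
  -- Step 2 : Hölder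
  have step2 : J ≤ ENNReal.ofReal (s ^ κ * κ⁻¹) ^ ((p-1)/p) * K ^ (1/p) := by
    by_cases hp1 : p = 1
    · subst hp1
      have hκα : κ = α - β := by rw [hκdef]; ring
      have : J = K := by
        apply lintegral_congr_ae
        filter_upwards [ae_restrict_mem measurableSet_Ioc] with σ hσ
        rw [ENNReal.rpow_one, ← ENNReal.ofReal_mul (Real.rpow_nonneg hσ.1.le κ)]
        congr 1
        rw [← mul_assoc, ← Real.rpow_add hσ.1]
        congr 2
        rw [hκα]; ring
      simp [this]
    · have hp1' : 1 < p := lt_of_le_of_ne hp (Ne.symm hp1)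
      have hpm : (0:ℝ) < p - 1 := by linarith
      set q := p / (p-1) with hq
      have hq1 : 1 < q := (one_lt_div hpm).mpr (by linarith)
      have hconj : q.HolderConjugate p := by
        rw [Real.holderConjugate_iff_eq_conjExponent hq1, hq]
        field_simp
        ring
      set e : ℝ := (κ-1) * (p-1) / p with he
      set f : ℝ → ℝ≥0∞ := fun σ => ENNReal.ofReal (σ ^ e) with hf
      set g : ℝ → ℝ≥0∞ := fun σ => ENNReal.ofReal (σ ^ (α - e) * m σ) with hg
      have hJfg : J = ∫⁻ σ in Set.Ioc 0 s, (f * g) σ := by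
        apply lintegral_congr_ae
        filter_upwards [ae_restrict_mem measurableSet_Ioc] with σ hσ
        rw [Pi.mul_apply, hf, hg, ← ENNReal.ofReal_mul (Real.rpow_nonneg hσ.1.le e)]
        congr 1
        rw [← mul_assoc, ← Real.rpow_add hσ.1]
        congr 2
        ring
      have hfmeas : AEMeasurable f (volume.restrict (Set.Ioc 0 s)) :=
        ((measurable_id.pow measurable_const).ennreal_ofReal).aemeasurable
      have hgmeas : AEMeasurable g (volume.restrict (Set.Ioc 0 s)) :=
        (((measurable_id.pow measurable_const).mul hm).ennreal_ofReal).aemeasurable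
      have holder := ENNReal.lintegral_mul_le_Lp_mul_Lq
        (volume.restrict (Set.Ioc 0 s)) hconj hfmeas hgmeas
      rw [← hJfg] at holder
      have hfq : ∫⁻ σ in Set.Ioc 0 s, f σ ^ q = ENNReal.ofReal (s ^ κ * κ⁻¹) := by
        have h1 : ∫⁻ σ in Set.Ioc 0 s, f σ ^ q
            = ∫⁻ σ in Set.Ioc 0 s, ENNReal.ofReal (σ ^ (κ-1)) := by
          apply lintegral_congr_ae
          filter_upwards [ae_restrict_mem measurableSet_Ioc] with σ hσ
          rw [hf, ENNReal.ofReal_rpow_of_nonneg (Real.rpow_nonneg hσ.1.le e)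
            (by positivity)]
          congr 1
          rw [← Real.rpow_mul hσ.1.le]
          congr 1
          rw [he, hq]
          field_simp
        rw [h1, aux_lint_rpow hs (by linarith)]
        congr 1
        rw [sub_add_cancel, div_eq_mul_inv]
      have hgp : ∫⁻ σ in Set.Ioc 0 s, g σ ^ p = K := by
        apply lintegral_congr_ae
        filter_upwards [ae_restrict_mem measurableSet_Ioc] with σ hσ
        rw [hg, ENNReal.ofReal_rpow_of_nonneg
          (mul_nonneg (Real.rpow_nonneg hσ.1.le _) (hm0 σ)) hp0.le]
        rw [Real.mul_rpow (Real.rpow_nonneg hσ.1.le _) (hm0 σ), ← Real.rpow_mul hσ.1.le]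
        have hexp : (α - e) * p = κ + β * p := by
          rw [he]
          have : κ * p = (α - β + 1) * p - 1 := by
            rw [hκdef]; field_simp
          field_simp
          try nlinarith [this]
        rw [hexp, Real.rpow_add hσ.1, mul_assoc,
          ENNReal.ofReal_mul (Real.rpow_nonneg hσ.1.le κ)]
        congr 1
        rw [ENNReal.ofReal_rpow_of_nonneg
            (mul_nonneg (Real.rpow_nonneg hσ.1.le β) (hm0 σ)) hp0.le]
        congr 1
        rw [Real.mul_rpow (Real.rpow_nonneg hσ.1.le β) (hm0 σ),
          ← Real.rpow_mul hσ.1.le]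
      rw [hfq, hgp] at holder
      have h1q : 1/q = (p-1)/p := by rw [hq]; field_simp
      rw [h1q] at holder
      exact holder
  -- Step 3 : combine
  have hsb : 0 ≤ s ^ (β - (α+1)) := Real.rpow_nonneg hs.le _
  have habs : s ^ β * |s ^ (-(α + 1)) * F| = s ^ (β - (α+1)) * |F| := by
    rw [abs_mul, abs_of_pos (Real.rpow_pos_of_pos hs _), ← mul_assoc, ← Real.rpow_add hs]
    ring_nf
  rw [habs]
  have hLHS : ENNReal.ofReal ((s ^ (β-(α+1)) * |F|) ^ p)
      = (ENNReal.ofReal (s ^ (β-(α+1))) * ENNReal.ofReal |F|) ^ p := by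
    rw [← ENNReal.ofReal_mul hsb, ENNReal.ofReal_rpow_of_nonneg
      (mul_nonneg hsb (abs_nonneg _)) hp0.le]
  rw [hLHS]
  have hbound : ENNReal.ofReal (s ^ (β-(α+1))) * ENNReal.ofReal |F|
      ≤ ENNReal.ofReal (s ^ (β-(α+1))) *
        (ENNReal.ofReal (s ^ κ * κ⁻¹) ^ ((p-1)/p) * K ^ (1/p)) :=
    mul_le_mul_right (step1.trans step2) _
  refine le_trans (ENNReal.rpow_le_rpow hbound hp0.le) ?_
  rw [ENNReal.mul_rpow_of_nonneg _ _ hp0.le, ENNReal.mul_rpow_of_nonneg _ _ hp0.le,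
    ← ENNReal.rpow_mul, ← ENNReal.rpow_mul]
  have e1 : (p-1)/p * p = p - 1 := by field_simp
  have e2 : 1/p * p = 1 := by field_simp
  rw [e1, e2, ENNReal.rpow_one]
  apply le_of_eq
  rw [ENNReal.ofReal_rpow_of_nonneg hsb hp0.le,
    ENNReal.ofReal_rpow_of_nonneg
      (mul_nonneg (Real.rpow_nonneg hs.le κ) (inv_nonneg.mpr hκ.le)) (by linarith),
    Real.mul_rpow (Real.rpow_nonneg hs.le κ) (inv_nonneg.mpr hκ.le),
    ← Real.rpow_mul hs.le, ← Real.rpow_mul hs.le]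
  have e3 : (κ⁻¹) ^ (p-1) = κ ^ (1-p) := by
    rw [Real.inv_rpow hκ.le, ← Real.rpow_neg hκ.le]
    ring_nf
  have hκp : κ * p = (α - β + 1) * p - 1 := by
    rw [hκdef]; field_simp
  have e4 : (β-(α+1))*p + κ*(p-1) = -κ-1 := by linear_combination hκp
  rw [e3, ENNReal.ofReal_mul (Real.rpow_nonneg hs.le _), ← mul_assoc, ← mul_assoc,
    ← ENNReal.ofReal_mul (Real.rpow_nonneg hs.le _), ← Real.rpow_add hs, e4]
  ring

/-- Weighted Hardy inequality for the averaging operator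
`U_α(s) = s^{-(α+1)} ∫₀^s σ^α u(σ) dσ`:
`‖s^β U_α‖_{L^p} ≤ (α - β + 1 - 1/p)⁻¹ ‖s^β u‖_{L^p}` when `α + 1 > β + 1/p`. -/
theorem stmt_5 (p α β : ℝ) (hp : 1 ≤ p) (hαβ : β + 1 / p < α + 1)
    (u : ℝ → ℝ)
    (hu : IntegrableOn (fun s => |u s| ^ p) (Set.Ioc 0 1))
    (hu' : IntegrableOn (fun s => (s ^ β * |u s|) ^ p) (Set.Ioc 0 1)) :
    (∫ s in (0:ℝ)..1,
        (s ^ β * |s ^ (-(α + 1)) * ∫ σ in (0:ℝ)..s, σ ^ α * u σ|) ^ p) ^ (1 / p)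
      ≤ (α - β + 1 - 1 / p)⁻¹ *
        (∫ s in (0:ℝ)..1, (s ^ β * |u s|) ^ p) ^ (1 / p) := by
  have hp0 : (0:ℝ) < p := lt_of_lt_of_le one_pos hp
  set κ := α - β + 1 - 1/p with hκdef
  have hκ : 0 < κ := by rw [hκdef]; linarith
  have hRnn : 0 ≤ ∫ s in (0:ℝ)..1, (s ^ β * |u s|) ^ p := by
    rw [intervalIntegral.integral_of_le zero_le_one]
    apply setIntegral_nonneg measurableSet_Ioc
    intro s hs
    exact Real.rpow_nonneg (mul_nonneg (Real.rpow_nonneg hs.1.le β) (abs_nonneg _)) p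
  by_cases hgint : IntegrableOn
      (fun s => (s ^ β * |s ^ (-(α + 1)) * ∫ σ in (0:ℝ)..s, σ ^ α * u σ|) ^ p)
      (Set.Ioc 0 1)
  case neg =>
    rw [intervalIntegral.integral_undef (fun h => hgint
      ((intervalIntegrable_iff_integrableOn_Ioc_of_le zero_le_one).mp h))]
    rw [Real.zero_rpow (one_div_ne_zero hp0.ne')]
    exact mul_nonneg (inv_nonneg.mpr hκ.le) (Real.rpow_nonneg hRnn _)
  case pos =>
  -- measurable nonneg representative of |u|
  have habsm : AEMeasurable (fun s => |u s|) (volume.restrict (Set.Ioc 0 1)) := by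
    have h1 : AEMeasurable (fun s => |u s| ^ p) (volume.restrict (Set.Ioc 0 1)) :=
      hu.aemeasurable
    have h2 : AEMeasurable (fun s => (|u s| ^ p) ^ (p⁻¹ : ℝ))
        (volume.restrict (Set.Ioc 0 1)) := h1.pow aemeasurable_const
    refine AEMeasurable.congr h2 (Filter.Eventually.of_forall fun s => ?_)
    exact Real.rpow_rpow_inv (abs_nonneg _) hp0.ne'
  set m : ℝ → ℝ := fun x => max (habsm.mk _ x) 0 with hm_def
  have hm : Measurable m := habsm.measurable_mk.max measurable_const
  have hm0 : ∀ x, 0 ≤ m x := fun x => le_max_right _ _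
  have hae : ∀ᵐ σ ∂(volume.restrict (Set.Ioc (0:ℝ) 1)), |u σ| = m σ := by
    filter_upwards [habsm.ae_eq_mk] with σ hσ
    rw [hm_def]; dsimp only; rw [← hσ, max_eq_left (abs_nonneg _)]
  set W : ℝ → ℝ≥0∞ := fun σ => ENNReal.ofReal (σ ^ β * m σ) with hW
  have hWmeas : Measurable W := ((measurable_id.pow measurable_const).mul hm).ennreal_ofReal
  set R := ∫ s in Set.Ioc (0:ℝ) 1, (s ^ β * |u s|) ^ p with hR
  have hWint : ∫⁻ σ in Set.Ioc (0:ℝ) 1, W σ ^ p = ENNReal.ofReal R := by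
    have h1 : ENNReal.ofReal R
        = ∫⁻ σ in Set.Ioc (0:ℝ) 1, ENNReal.ofReal ((σ ^ β * |u σ|) ^ p) := by
      apply ofReal_integral_eq_lintegral_ofReal hu'
      filter_upwards [ae_restrict_mem measurableSet_Ioc] with σ hσ
      exact Real.rpow_nonneg (mul_nonneg (Real.rpow_nonneg hσ.1.le β) (abs_nonneg _)) p
    rw [h1]
    apply lintegral_congr_ae
    filter_upwards [hae, ae_restrict_mem measurableSet_Ioc] with σ hσa hσ
    rw [hW]; dsimp only
    rw [ENNReal.ofReal_rpow_of_nonneg (mul_nonneg (Real.rpow_nonneg hσ.1.le β) (hm0 σ))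
      hp0.le, hσa]
  set C : ℝ → ℝ≥0∞ := fun σ => ENNReal.ofReal (σ ^ κ) * W σ ^ p with hC
  have hCmeas : Measurable C :=
    ((measurable_id.pow measurable_const).ennreal_ofReal).mul (hWmeas.pow measurable_const)
  have hCne : ∀ σ, C σ ≠ ⊤ := fun σ =>
    ENNReal.mul_ne_top ENNReal.ofReal_ne_top
      (ENNReal.rpow_ne_top_of_nonneg hp0.le ENNReal.ofReal_ne_top)
  -- key pointwise estimate integrated
  have key : ∫⁻ s in Set.Ioc (0:ℝ) 1,
        ENNReal.ofReal ((s ^ β * |s ^ (-(α + 1)) * ∫ σ in (0:ℝ)..s, σ ^ α * u σ|) ^ p)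
      ≤ ENNReal.ofReal (κ ^ (1-p)) *
        ∫⁻ s in Set.Ioc (0:ℝ) 1, ENNReal.ofReal (s ^ (-κ-1)) * ∫⁻ σ in Set.Ioc 0 s, C σ := by
    rw [← lintegral_const_mul' _ _ ENNReal.ofReal_ne_top]
    apply lintegral_mono_ae
    filter_upwards [ae_restrict_mem measurableSet_Ioc] with s hs
    have hclaim := aux_claim p α β κ hp hκ hκdef u m hm hm0 hs.1
      (ae_restrict_of_ae_restrict_of_subset (Set.Ioc_subset_Ioc_right hs.2) hae)
    refine hclaim.trans (le_of_eq ?_)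
    rw [mul_assoc]
  -- Tonelli / Fubini part
  set G : ℝ × ℝ → ℝ≥0∞ := fun z =>
    if z.2 ≤ z.1 then ENNReal.ofReal (z.1 ^ (-κ-1)) * C z.2 else 0 with hG
  have hGmeas : Measurable G := by
    apply Measurable.ite (measurableSet_le measurable_snd measurable_fst)
    · exact ((measurable_fst.pow measurable_const).ennreal_ofReal).mul
        (hCmeas.comp measurable_snd)
    · exact measurable_const
  have inner_eq : ∀ s ∈ Set.Ioc (0:ℝ) 1,
      ENNReal.ofReal (s ^ (-κ-1)) * ∫⁻ σ in Set.Ioc 0 s, C σ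
        = ∫⁻ σ in Set.Ioc (0:ℝ) 1, G (s, σ) := by
    intro s hs
    have hsplit : Set.Ioc (0:ℝ) 1 = Set.Ioc 0 s ∪ Set.Ioc s 1 :=
      (Set.Ioc_union_Ioc_eq_Ioc hs.1.le hs.2).symm
    rw [hsplit, lintegral_union measurableSet_Ioc (Set.Ioc_disjoint_Ioc_of_le le_rfl)]
    have h2 : ∫⁻ σ in Set.Ioc s 1, G (s, σ) = 0 := by
      rw [setLIntegral_congr_fun measurableSet_Ioc
        (fun σ (hσ : σ ∈ Set.Ioc s 1) => if_neg (not_le.mpr hσ.1))]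
      exact lintegral_zero
    rw [h2, add_zero, ← lintegral_const_mul' _ _ ENNReal.ofReal_ne_top]
    apply setLIntegral_congr_fun measurableSet_Ioc
    exact fun σ (hσ : σ ∈ Set.Ioc 0 s) => (if_pos hσ.2).symm
  have inner2 : ∀ σ ∈ Set.Ioc (0:ℝ) 1,
      ∫⁻ s in Set.Ioc (0:ℝ) 1, G (s, σ) ≤ C σ * ENNReal.ofReal (σ ^ (-κ) * κ⁻¹) := by
    intro σ hσ
    have hsplit : Set.Ioc (0:ℝ) 1 = Set.Ioc 0 σ ∪ Set.Ioc σ 1 :=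
      (Set.Ioc_union_Ioc_eq_Ioc hσ.1.le hσ.2).symm
    rw [hsplit, lintegral_union measurableSet_Ioc (Set.Ioc_disjoint_Ioc_of_le le_rfl)]
    have h1 : ∫⁻ s in Set.Ioc 0 σ, G (s, σ) = 0 := by
      rw [← setLIntegral_congr (Ioo_ae_eq_Ioc (a := (0:ℝ)) (b := σ))]
      rw [setLIntegral_congr_fun measurableSet_Ioo
        (fun s (hs : s ∈ Set.Ioo 0 σ) => if_neg (not_le.mpr hs.2))]
      exact lintegral_zero
    have h2 : ∫⁻ s in Set.Ioc σ 1, G (s, σ)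
        = C σ * ∫⁻ s in Set.Ioc σ 1, ENNReal.ofReal (s ^ (-κ-1)) := by
      rw [← lintegral_const_mul' _ _ (hCne σ)]
      apply setLIntegral_congr_fun measurableSet_Ioc
      refine fun s (hs : s ∈ Set.Ioc σ 1) => ?_
      rw [hG]; dsimp only; rw [if_pos hs.1.le, mul_comm]
    rw [h1, zero_add, h2]
    exact mul_le_mul_right (aux_lint_tail hκ hσ.1 hσ.2) _
  have tonelli : ∫⁻ s in Set.Ioc (0:ℝ) 1,
        ENNReal.ofReal (s ^ (-κ-1)) * ∫⁻ σ in Set.Ioc 0 s, C σ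
      ≤ ENNReal.ofReal κ⁻¹ * ENNReal.ofReal R := by
    calc ∫⁻ s in Set.Ioc (0:ℝ) 1, ENNReal.ofReal (s ^ (-κ-1)) * ∫⁻ σ in Set.Ioc 0 s, C σ
        = ∫⁻ s in Set.Ioc (0:ℝ) 1, ∫⁻ σ in Set.Ioc (0:ℝ) 1, G (s, σ) := by
          apply lintegral_congr_ae
          filter_upwards [ae_restrict_mem measurableSet_Ioc] with s hs
          exact inner_eq s hs
      _ = ∫⁻ σ in Set.Ioc (0:ℝ) 1, ∫⁻ s in Set.Ioc (0:ℝ) 1, G (s, σ) := by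
          exact lintegral_lintegral_swap hGmeas.aemeasurable
      _ ≤ ∫⁻ σ in Set.Ioc (0:ℝ) 1, C σ * ENNReal.ofReal (σ ^ (-κ) * κ⁻¹) := by
          apply lintegral_mono_ae
          filter_upwards [ae_restrict_mem measurableSet_Ioc] with σ hσ
          exact inner2 σ hσ
      _ = ∫⁻ σ in Set.Ioc (0:ℝ) 1, ENNReal.ofReal κ⁻¹ * W σ ^ p := by
          apply lintegral_congr_ae
          filter_upwards [ae_restrict_mem measurableSet_Ioc] with σ hσ
          rw [hC]; dsimp only
          rw [ENNReal.ofReal_mul (Real.rpow_nonneg hσ.1.le _)]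
          calc ENNReal.ofReal (σ ^ κ) * W σ ^ p
                * (ENNReal.ofReal (σ ^ (-κ)) * ENNReal.ofReal κ⁻¹)
              = (ENNReal.ofReal (σ ^ κ) * ENNReal.ofReal (σ ^ (-κ)))
                * ENNReal.ofReal κ⁻¹ * W σ ^ p := by ring
            _ = ENNReal.ofReal κ⁻¹ * W σ ^ p := by
                rw [← ENNReal.ofReal_mul (Real.rpow_nonneg hσ.1.le _),
                  ← Real.rpow_add hσ.1]
                norm_num
      _ = ENNReal.ofReal κ⁻¹ * ENNReal.ofReal R := by
          rw [lintegral_const_mul' _ _ ENNReal.ofReal_ne_top, hWint]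
  -- final conversion to real integrals
  have final_lint : ∫⁻ s in Set.Ioc (0:ℝ) 1,
        ENNReal.ofReal ((s ^ β * |s ^ (-(α + 1)) * ∫ σ in (0:ℝ)..s, σ ^ α * u σ|) ^ p)
      ≤ ENNReal.ofReal (κ ^ (1-p) * (κ⁻¹ * R)) :=
    (key.trans (mul_le_mul_right tonelli _)).trans (le_of_eq (by
      rw [ENNReal.ofReal_mul (Real.rpow_nonneg hκ.le _),
        ENNReal.ofReal_mul (inv_nonneg.mpr hκ.le)]))
  have hgnn : ∀ᵐ s ∂(volume.restrict (Set.Ioc (0:ℝ) 1)),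
      0 ≤ (s ^ β * |s ^ (-(α + 1)) * ∫ σ in (0:ℝ)..s, σ ^ α * u σ|) ^ p := by
    filter_upwards [ae_restrict_mem measurableSet_Ioc] with s hs
    exact Real.rpow_nonneg (mul_nonneg (Real.rpow_nonneg hs.1.le β) (abs_nonneg _)) p
  rw [intervalIntegral.integral_of_le zero_le_one, intervalIntegral.integral_of_le zero_le_one]
  rw [integral_eq_lintegral_of_nonneg_ae hgnn hgint.aestronglyMeasurable]
  have hRprod : 0 ≤ κ ^ (1-p) * (κ⁻¹ * R) := by
    have : 0 ≤ R := by rwa [intervalIntegral.integral_of_le zero_le_one] at hRnn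
    positivity
  have hle : (∫⁻ s in Set.Ioc (0:ℝ) 1,
        ENNReal.ofReal ((s ^ β * |s ^ (-(α + 1)) * ∫ σ in (0:ℝ)..s, σ ^ α * u σ|) ^ p)).toReal
      ≤ κ ^ (1-p) * (κ⁻¹ * R) := by
    have h := ENNReal.toReal_mono ENNReal.ofReal_ne_top final_lint
    rwa [ENNReal.toReal_ofReal hRprod] at h
  calc (∫⁻ s in Set.Ioc (0:ℝ) 1,
        ENNReal.ofReal ((s ^ β * |s ^ (-(α + 1)) * ∫ σ in (0:ℝ)..s, σ ^ α * u σ|) ^ p)).toReal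
          ^ (1/p)
      ≤ (κ ^ (1-p) * (κ⁻¹ * R)) ^ (1/p) :=
        Real.rpow_le_rpow ENNReal.toReal_nonneg hle (by positivity)
    _ = κ⁻¹ * R ^ (1/p) := by
        have hRnn' : 0 ≤ R := by rwa [intervalIntegral.integral_of_le zero_le_one] at hRnn
        have h1 : κ ^ (1-p) * κ⁻¹ = κ ^ (-p) := by
          rw [← Real.rpow_neg_one κ, ← Real.rpow_add hκ]
          congr 1
          ring
        rw [← mul_assoc, h1, Real.mul_rpow (Real.rpow_nonneg hκ.le _) hRnn',
          ← Real.rpow_mul hκ.le]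
        congr 1
        rw [show -p * (1/p) = -1 by field_simp, Real.rpow_neg_one]
end

section
/- Under the same hypotheses (a ≥ 0, h ≥ 0, c + ‖σh‖_{L¹} e^{−‖σ^{1/2}a^{1/2}‖²} ≥ 0, τ solving -τ''+aτ=h, τ(0)=0, τ'(1)=c), for all s ∈ [0,1]: c − (c + ∫₀¹ h)·∫₀¹ σ a(σ)dσ ≤ τ'(s) ≤ c + ∫₀¹ h(σ)dσ. -/
open MeasureTheory
open intervalIntegral Set

private lemma cont_prim {g : ℝ → ℝ} (hg : Continuous g) :
    Continuous (fun s => ∫ u in (0:ℝ)..s, g u) := by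
  rw [continuous_iff_continuousAt]
  exact fun b => ((hg.integral_hasStrictDerivAt 0 b).hasDerivAt).continuousAt

private lemma prim_hasDerivAt {g : ℝ → ℝ} (hg : Continuous g) (b : ℝ) :
    HasDerivAt (fun s => ∫ u in (0:ℝ)..s, g u) (g b) b :=
  (hg.integral_hasStrictDerivAt 0 b).hasDerivAt

private lemma exists_phi (f : ℝ → ℝ) (hcont : Continuous f) (hnn : ∀ s, 0 ≤ f s)
    (K : ℝ) (hK : ∀ s, f s ≤ K) :
    ∃ φ φd : ℝ → ℝ, Continuous φd ∧ φ 0 = 0 ∧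
      (∀ s, HasDerivAt φ (φd s) s) ∧
      (∀ s ∈ Set.Icc (0:ℝ) 1, HasDerivAt φd (f s * φ s) s) ∧
      (∀ s ∈ Set.Icc (0:ℝ) 1, s ≤ φ s) ∧
      (∀ s ∈ Set.Icc (0:ℝ) 1, 1 ≤ φd s) := by
  have hK0 : 0 ≤ K := le_trans (hnn 0) (hK 0)
  -- the extension of a continuous map on Icc to ℝ
  set I : Set ℝ := Set.Icc (0:ℝ) 1 with hI
  let ext : C(I, ℝ) → ℝ → ℝ := fun q u => q (Set.projIcc (0:ℝ) 1 zero_le_one u)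
  have hext_cont : ∀ q : C(I, ℝ), Continuous (ext q) :=
    fun q => q.continuous.comp continuous_projIcc
  have hext_eq : ∀ (q : C(I, ℝ)) (u : ℝ) (hu : u ∈ I), ext q u = q ⟨u, hu⟩ := by
    intro q u hu
    simp only [ext, Set.projIcc_of_mem zero_le_one hu]
  -- the Picard operator
  let P : C(I, ℝ) → ℝ → ℝ := fun q s =>
    s + s * (∫ u in (0:ℝ)..s, f u * ext q u) - ∫ u in (0:ℝ)..s, u * (f u * ext q u)
  have hPc : ∀ q, Continuous (P q) := by
    intro q
    have h1 := cont_prim (hcont.mul (hext_cont q))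
    have h2 := cont_prim (continuous_id.mul (hcont.mul (hext_cont q)))
    exact (continuous_id.add (continuous_id.mul h1)).sub h2
  let T : C(I, ℝ) → C(I, ℝ) := fun q => ⟨fun x => P q x.1, (hPc q).comp continuous_subtype_val⟩
  -- iterate bound
  have hiter : ∀ (n : ℕ) (q r : C(I, ℝ)) (x : I),
      |T^[n] q x - T^[n] r x| ≤ (2*K)^n * x.1^n / n.factorial * dist q r := by
    intro n
    induction n with
    | zero =>
      intro q r x
      simpa [Real.dist_eq] using ContinuousMap.dist_apply_le_dist (f := q) (g := r) x
    | succ n IH =>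
      intro q r x
      obtain ⟨s, hs⟩ := x
      rw [Function.iterate_succ_apply', Function.iterate_succ_apply']
      set F := T^[n] q with hF
      set G := T^[n] r with hG
      have hs0 : (0:ℝ) ≤ s := hs.1
      have hs1 : s ≤ 1 := hs.2
      set d := dist q r with hd
      have hd0 : (0:ℝ) ≤ d := dist_nonneg
      have h2K : (0:ℝ) ≤ 2*K := by linarith
      set C : ℝ := K * ((2*K)^n / n.factorial * d) with hC
      have hC0 : 0 ≤ C :=
        mul_nonneg hK0 (mul_nonneg (div_nonneg (pow_nonneg h2K _) (by positivity)) hd0)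
      have hcF : Continuous (fun u => f u * ext F u) := hcont.mul (hext_cont F)
      have hcG : Continuous (fun u => f u * ext G u) := hcont.mul (hext_cont G)
      have hΔ : Continuous (fun u => f u * ext F u - f u * ext G u) := hcF.sub hcG
      have hpt : ∀ u ∈ Set.Icc (0:ℝ) s, |f u * ext F u - f u * ext G u| ≤ C * u^n := by
        intro u hu
        have huI : u ∈ I := ⟨hu.1, hu.2.trans hs1⟩
        have h1 : |ext F u - ext G u| ≤ (2*K)^n * u^n / n.factorial * d := by
          rw [hext_eq F u huI, hext_eq G u huI]
          exact IH q r ⟨u, huI⟩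
        have h1' : 0 ≤ (2*K)^n * u^n / n.factorial * d :=
          mul_nonneg (div_nonneg (mul_nonneg (pow_nonneg h2K _) (pow_nonneg hu.1 _))
            (by positivity)) hd0
        calc |f u * ext F u - f u * ext G u| = f u * |ext F u - ext G u| := by
              rw [← mul_sub, abs_mul, abs_of_nonneg (hnn u)]
          _ ≤ K * ((2*K)^n * u^n / n.factorial * d) :=
              mul_le_mul (hK u) h1 (abs_nonneg _) hK0
          _ = C * u^n := by rw [hC]; ring
      have hint_pow : ∫ u in (0:ℝ)..s, C * u^n = C * (s^(n+1)/(n+1)) := by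
        rw [intervalIntegral.integral_const_mul, integral_pow]
        simp
      have hpow_int : IntervalIntegrable (fun u => C * u^n) volume 0 s :=
        (continuous_const.mul (continuous_pow n)).intervalIntegrable 0 s
      have habs1 : |∫ u in (0:ℝ)..s, (f u * ext F u - f u * ext G u)| ≤ C * (s^(n+1)/(n+1)) := by
        refine le_trans (intervalIntegral.abs_integral_le_integral_abs hs0) ?_
        rw [← hint_pow]
        exact intervalIntegral.integral_mono_on hs0 (hΔ.abs.intervalIntegrable 0 s) hpow_int hpt
      have hpt2 : ∀ u ∈ Set.Icc (0:ℝ) s,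
          |u * (f u * ext F u) - u * (f u * ext G u)| ≤ C * u^n := by
        intro u hu
        have : |u * (f u * ext F u) - u * (f u * ext G u)|
            = u * |f u * ext F u - f u * ext G u| := by
          rw [← mul_sub, abs_mul, abs_of_nonneg hu.1]
        rw [this]
        calc u * |f u * ext F u - f u * ext G u| ≤ 1 * (C * u^n) := by
              apply mul_le_mul (hu.2.trans hs1) (hpt u hu) (abs_nonneg _) zero_le_one
          _ = C * u^n := one_mul _
      have hΔ2 : Continuous (fun u => u * (f u * ext F u) - u * (f u * ext G u)) :=
        (continuous_id.mul hcF).sub (continuous_id.mul hcG)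
      have habs2 : |∫ u in (0:ℝ)..s, (u * (f u * ext F u) - u * (f u * ext G u))|
          ≤ C * (s^(n+1)/(n+1)) := by
        refine le_trans (intervalIntegral.abs_integral_le_integral_abs hs0) ?_
        rw [← hint_pow]
        exact intervalIntegral.integral_mono_on hs0 (hΔ2.abs.intervalIntegrable 0 s) hpow_int hpt2
      have hIsub : (∫ u in (0:ℝ)..s, f u * ext F u) - ∫ u in (0:ℝ)..s, f u * ext G u
          = ∫ u in (0:ℝ)..s, (f u * ext F u - f u * ext G u) :=
        (intervalIntegral.integral_sub (hcF.intervalIntegrable 0 s)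
          (hcG.intervalIntegrable 0 s)).symm
      have hJsub : (∫ u in (0:ℝ)..s, u * (f u * ext F u)) - ∫ u in (0:ℝ)..s, u * (f u * ext G u)
          = ∫ u in (0:ℝ)..s, (u * (f u * ext F u) - u * (f u * ext G u)) :=
        (intervalIntegral.integral_sub ((continuous_id.mul hcF).intervalIntegrable 0 s)
          ((continuous_id.mul hcG).intervalIntegrable 0 s)).symm
      show |P F s - P G s| ≤ _
      have hPdiff : P F s - P G s
          = s * (∫ u in (0:ℝ)..s, (f u * ext F u - f u * ext G u))
            - ∫ u in (0:ℝ)..s, (u * (f u * ext F u) - u * (f u * ext G u)) := by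
        simp only [P]
        rw [← hIsub, ← hJsub]
        ring
      have htot : |P F s - P G s| ≤ 2 * (C * (s^(n+1)/(n+1))) := by
        rw [hPdiff]
        refine le_trans (abs_sub _ _) ?_
        have e1 : |s * (∫ u in (0:ℝ)..s, (f u * ext F u - f u * ext G u))|
            ≤ C * (s^(n+1)/(n+1)) := by
          rw [abs_mul, abs_of_nonneg hs0]
          calc s * |∫ u in (0:ℝ)..s, (f u * ext F u - f u * ext G u)|
              ≤ 1 * (C * (s^(n+1)/(n+1))) :=
                mul_le_mul hs1 habs1 (abs_nonneg _) zero_le_one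
            _ = C * (s^(n+1)/(n+1)) := one_mul _
        linarith [habs2, e1]
      refine htot.trans (le_of_eq ?_)
      rw [hC]
      push_cast [Nat.factorial_succ]
      have hnn0 : ((n.factorial : ℝ)) ≠ 0 := by positivity
      have hn1 : ((n:ℝ) + 1) ≠ 0 := by positivity
      field_simp
      ring
  -- contraction for some iterate
  obtain ⟨n, hn⟩ : ∃ n : ℕ, (2*K)^n / n.factorial < 1 := by
    have := FloorSemiring.tendsto_pow_div_factorial_atTop (K := ℝ) (2*K)
    exact (this.eventually_lt_const one_pos).exists
  have hdist : ∀ q r : C(I, ℝ), dist (T^[n] q) (T^[n] r) ≤ ((2*K)^n / n.factorial) * dist q r := by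
    intro q r
    have hnon : (0:ℝ) ≤ ((2*K)^n / n.factorial) * dist q r := by
      apply mul_nonneg (div_nonneg (pow_nonneg (by linarith) _) (by positivity)) dist_nonneg
    rw [ContinuousMap.dist_le hnon]
    intro x
    rw [Real.dist_eq]
    refine le_trans (hiter n q r x) ?_
    rw [div_mul_eq_mul_div, div_mul_eq_mul_div]
    apply div_le_div_of_nonneg_right ?_ (by positivity) |>.trans_eq rfl
    · have hx1 : x.1 ^ n ≤ 1 := pow_le_one₀ x.2.1 x.2.2
      calc (2*K)^n * x.1^n * dist q r ≤ (2*K)^n * 1 * dist q r := by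
            apply mul_le_mul_of_nonneg_right ?_ dist_nonneg
            exact mul_le_mul_of_nonneg_left hx1 (pow_nonneg (by linarith) _)
        _ = (2*K)^n * dist q r := by ring
  -- contraction & fixed point
  set κ : NNReal := Real.toNNReal ((2*K)^n / n.factorial) with hκ
  have hκc : (κ:ℝ) = max ((2*K)^n / n.factorial) 0 := Real.coe_toNNReal' _
  have hκlt : κ < 1 := by
    have h1 : (κ:ℝ) < 1 := by rw [hκc]; exact max_lt hn one_pos
    exact_mod_cast h1
  have hLip : LipschitzWith κ (T^[n]) := by
    apply LipschitzWith.of_dist_le_mul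
    intro q r
    refine le_trans (hdist q r) ?_
    apply mul_le_mul_of_nonneg_right ?_ dist_nonneg
    rw [hκc]; exact le_max_left _ _
  have hCon : ContractingWith κ (T^[n]) := ⟨hκlt, hLip⟩
  haveI : Nonempty C(I, ℝ) := ⟨0⟩
  set W : C(I, ℝ) := hCon.fixedPoint (T^[n]) with hW
  have hfixT : T W = W := hCon.isFixedPt_fixedPoint_iterate
  -- the solution
  set g : ℝ → ℝ := fun u => f u * ext W u with hg
  have hgc : Continuous g := hcont.mul (hext_cont W)
  set φ : ℝ → ℝ := fun t => t + t * (∫ u in (0:ℝ)..t, g u) - ∫ u in (0:ℝ)..t, u * g u with hφ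
  set φd : ℝ → ℝ := fun t => 1 + ∫ u in (0:ℝ)..t, g u with hφd
  have hφP : ∀ t, φ t = P W t := fun t => rfl
  have hcφ : Continuous φ := by rw [hφ]; have := hPc W; exact this
  have hφdc : Continuous φd := continuous_const.add (cont_prim hgc)
  have hφext : ∀ u (huI : u ∈ I), ext W u = φ u := by
    intro u huI
    rw [hext_eq W u huI, hφP]
    have : (T W) ⟨u, huI⟩ = W ⟨u, huI⟩ := by rw [hfixT]
    exact this.symm
  have hφ0 : φ 0 = 0 := by simp [hφ]
  have hder : ∀ s, HasDerivAt φ (φd s) s := by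
    intro s
    have h1 : HasDerivAt (fun t => ∫ u in (0:ℝ)..t, g u) (g s) s := prim_hasDerivAt hgc s
    have h2 : HasDerivAt (fun t => ∫ u in (0:ℝ)..t, u * g u) (s * g s) s :=
      prim_hasDerivAt (continuous_id.mul hgc) s
    have h3 : HasDerivAt (fun t : ℝ => t) 1 s := hasDerivAt_id s
    have h5 := (h3.add (h3.mul h1)).sub h2
    refine h5.congr_deriv ?_
    rw [hφd]; ring
  have hderd : ∀ s, HasDerivAt φd (g s) s := fun s => (prim_hasDerivAt hgc s).const_add 1
  -- conditional bounds
  have hφd_ge : ∀ b ∈ I, (∀ u ∈ Set.Icc (0:ℝ) b, 0 ≤ φ u) →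
      ∀ v ∈ Set.Icc (0:ℝ) b, 1 ≤ φd v := by
    intro b hb hp v hv
    have h0 : 0 ≤ ∫ u in (0:ℝ)..v, g u := by
      apply intervalIntegral.integral_nonneg hv.1
      intro u hu
      have huI : u ∈ I := ⟨hu.1, (hu.2.trans hv.2).trans hb.2⟩
      have : g u = f u * φ u := by
        show f u * ext W u = f u * φ u
        rw [hφext u huI]
      rw [this]
      exact mul_nonneg (hnn u) (hp u ⟨hu.1, hu.2.trans hv.2⟩)
    rw [hφd]; simp only []; linarith
  have hφ_ge : ∀ b ∈ I, (∀ v ∈ Set.Icc (0:ℝ) b, 1 ≤ φd v) →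
      ∀ s ∈ Set.Icc (0:ℝ) b, s ≤ φ s := by
    intro b hb h1 s hsb
    have hint : IntervalIntegrable φd volume 0 s := hφdc.intervalIntegrable 0 s
    have hFTC : ∫ u in (0:ℝ)..s, φd u = φ s - φ 0 :=
      intervalIntegral.integral_eq_sub_of_hasDerivAt (fun x _ => hder x) hint
    rw [hφ0, sub_zero] at hFTC
    have hmono : ∫ u in (0:ℝ)..s, (1:ℝ) ≤ ∫ u in (0:ℝ)..s, φd u := by
      apply intervalIntegral.integral_mono_on hsb.1 intervalIntegrable_const hint
      intro u hu; exact h1 u ⟨hu.1, hu.2.trans hsb.2⟩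
    rw [hFTC] at hmono
    simpa using hmono
  -- positivity
  have hpos : ∀ s ∈ I, 0 ≤ φ s := by
    by_contra hcon
    push_neg at hcon
    obtain ⟨s₀, hs₀I, hs₀⟩ := hcon
    set N : Set ℝ := {u | u ∈ I ∧ φ u < 0} with hN
    have hNne : N.Nonempty := ⟨s₀, hs₀I, hs₀⟩
    have hNbdd : BddBelow N := ⟨0, fun u hu => hu.1.1⟩
    set b : ℝ := sInf N with hb
    have hb0 : 0 ≤ b := le_csInf hNne (fun u hu => hu.1.1)
    have hbs₀ : b ≤ s₀ := csInf_le hNbdd ⟨hs₀I, hs₀⟩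
    have hbI : b ∈ I := ⟨hb0, hbs₀.trans hs₀I.2⟩
    have hIco : ∀ u ∈ Set.Ico (0:ℝ) b, 0 ≤ φ u := by
      intro u hu
      by_contra hneg
      push_neg at hneg
      have huN : u ∈ N := ⟨⟨hu.1, hu.2.le.trans hbI.2⟩, hneg⟩
      exact absurd (csInf_le hNbdd huN) (not_le.2 hu.2)
    have hφb : 0 ≤ φ b := by
      by_contra hneg
      push_neg at hneg
      have hbpos : 0 < b := by
        rcases eq_or_lt_of_le hb0 with h | h
        · exfalso; rw [← h, hφ0] at hneg; exact absurd hneg (lt_irrefl 0)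
        · exact h
      have hopen : IsOpen {x : ℝ | φ x < 0} := isOpen_lt hcφ continuous_const
      obtain ⟨δ, hδ0, hball⟩ := Metric.isOpen_iff.1 hopen b hneg
      set u : ℝ := max 0 (b - δ/2) with hu
      have hu0 : 0 ≤ u := le_max_left _ _
      have hub : u < b := max_lt hbpos (by linarith)
      have hud : dist u b < δ := by
        rw [Real.dist_eq, abs_of_nonpos (by linarith)]
        have : b - δ/2 ≤ u := le_max_right _ _
        linarith
      have : φ u < 0 := hball (Metric.mem_ball.2 hud)
      exact absurd this (not_lt.2 (hIco u ⟨hu0, hub⟩))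
    have hposb : ∀ u ∈ Set.Icc (0:ℝ) b, 0 ≤ φ u := by
      intro u hu
      rcases lt_or_eq_of_le hu.2 with h | h
      · exact hIco u ⟨hu.1, h⟩
      · rw [h]; exact hφb
    have hφdb := hφd_ge b hbI hposb
    have hφdbpos : 1 ≤ φd b := hφdb b ⟨hb0, le_refl b⟩
    have hopen2 : IsOpen {x : ℝ | 1/2 < φd x} := isOpen_lt continuous_const hφdc
    obtain ⟨δ, hδ0, hball⟩ := Metric.isOpen_iff.1 hopen2 b (show (1:ℝ)/2 < φd b from lt_of_lt_of_le one_half_lt_one hφdbpos)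
    set ε : ℝ := min (δ/2) 1 with hε
    have hε0 : 0 < ε := lt_min (by linarith) one_pos
    obtain ⟨m, hmN, hm⟩ := exists_lt_of_csInf_lt hNne (show b < b + ε by linarith)
    have hmb : b ≤ m := csInf_le hNbdd hmN
    have hφdpos : ∀ v ∈ Set.Icc b m, (0:ℝ) ≤ φd v := by
      intro v hv
      have hvd : dist v b < δ := by
        rw [Real.dist_eq, abs_of_nonneg (by linarith [hv.1])]
        have h1 : v ≤ m := hv.2
        have h2 : m < b + ε := hm
        have h3 : ε ≤ δ/2 := min_le_left _ _
        linarith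
      have := hball (Metric.mem_ball.2 hvd)
      have h4 : (1:ℝ)/2 < φd v := this
      exact le_of_lt (lt_trans one_half_pos h4)
    have hphim : 0 ≤ φ m := by
      have hFTC : ∫ u in b..m, φd u = φ m - φ b :=
        intervalIntegral.integral_eq_sub_of_hasDerivAt (fun x _ => hder x)
          (hφdc.intervalIntegrable b m)
      have hintpos : 0 ≤ ∫ u in b..m, φd u :=
        intervalIntegral.integral_nonneg hmb hφdpos
      linarith
    exact absurd hmN.2 (not_lt.2 hphim)
  -- conclude
  have h1I : (1:ℝ) ∈ I := ⟨zero_le_one, le_refl 1⟩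
  have hφd1 : ∀ v ∈ I, 1 ≤ φd v := by
    intro v hv
    exact hφd_ge 1 h1I (fun u hu => hpos u hu) v hv
  refine ⟨φ, φd, hφdc, hφ0, hder, ?_, ?_, hφd1⟩
  · intro s hsI
    have h := hderd s
    have he : g s = f s * φ s := by
      show f s * ext W s = f s * φ s
      rw [hφext s hsI]
    rwa [he] at h
  · intro s hsI
    exact hφ_ge 1 h1I hφd1 s hsI

/-- Two-sided bound for the derivative of the solution of the tension BVP
`-τ'' + a τ = h`, `τ(0)=0`, `τ'(1)=c` with nonnegative data:
`c - (c + ∫₀¹ h) ∫₀¹ σ a ≤ τ'(s) ≤ c + ∫₀¹ h`. -/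
theorem stmt_12 (a h : ℝ → ℝ) (c : ℝ)
    (ha_cont : ContinuousOn a (Set.Icc 0 1))
    (ha_nonneg : ∀ s ∈ Set.Icc (0:ℝ) 1, 0 ≤ a s)
    (hh_cont : ContinuousOn h (Set.Icc 0 1))
    (hh_nonneg : ∀ s ∈ Set.Icc (0:ℝ) 1, 0 ≤ h s)
    (hc : 0 ≤ c + (∫ σ in (0:ℝ)..1, σ * h σ) * Real.exp (-∫ σ in (0:ℝ)..1, σ * a σ))
    (τ τ' : ℝ → ℝ)
    (hτ : ∀ s ∈ Set.Icc (0:ℝ) 1, HasDerivWithinAt τ (τ' s) (Set.Icc 0 1) s)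
    (hτ' : ∀ s ∈ Set.Icc (0:ℝ) 1, HasDerivWithinAt τ' (a s * τ s - h s) (Set.Icc 0 1) s)
    (hτ0 : τ 0 = 0) (hτ'1 : τ' 1 = c) :
    ∀ s ∈ Set.Icc (0:ℝ) 1,
      c - (c + ∫ σ in (0:ℝ)..1, h σ) * ∫ σ in (0:ℝ)..1, σ * a σ ≤ τ' s ∧
      τ' s ≤ c + ∫ σ in (0:ℝ)..1, h σ := by
  -- clamped extension of `a`
  set cl : ℝ → ℝ := fun t => max 0 (min 1 t) with hcl
  have hcl_cont : Continuous cl := continuous_const.max (continuous_const.min continuous_id)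
  have hcl_mem : ∀ t, cl t ∈ Set.Icc (0:ℝ) 1 :=
    fun t => ⟨le_max_left _ _, max_le zero_le_one (min_le_left _ _)⟩
  have hcl_eq : ∀ t ∈ Set.Icc (0:ℝ) 1, cl t = t := by
    intro t ht
    rw [hcl]
    simp only [min_eq_right ht.2, max_eq_right ht.1]
  set aext : ℝ → ℝ := fun t => a (cl t) with haext
  have haextc : Continuous aext := ha_cont.comp_continuous hcl_cont hcl_mem
  have haext_eq : ∀ t ∈ Set.Icc (0:ℝ) 1, aext t = a t := by
    intro t ht
    show a (cl t) = a t
    rw [hcl_eq t ht]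
  have haextnn : ∀ t, 0 ≤ aext t := fun t => ha_nonneg _ (hcl_mem t)
  obtain ⟨xm, hxmI, hxmax⟩ :=
    isCompact_Icc.exists_isMaxOn (Set.nonempty_Icc.2 zero_le_one) ha_cont
  have hKb : ∀ t, aext t ≤ a xm := fun t => hxmax (hcl_mem t)
  obtain ⟨φ, φd, hφdc, hφ0, hder, hdd, hφ_ge_s, hφd1⟩ := exists_phi aext haextc haextnn (a xm) hKb
  have h1I : (1:ℝ) ∈ Set.Icc (0:ℝ) 1 := ⟨zero_le_one, le_refl 1⟩
  have hφc : Continuous φ := by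
    rw [continuous_iff_continuousAt]; exact fun t => (hder t).continuousAt
  have hφnn : ∀ t ∈ Set.Icc (0:ℝ) 1, 0 ≤ φ t := fun t ht => le_trans ht.1 (hφ_ge_s t ht)
  have hφ1pos : 0 < φ 1 := lt_of_lt_of_le one_pos (hφ_ge_s 1 h1I)
  have hφd1pos : 0 < φd 1 := lt_of_lt_of_le one_pos (hφd1 1 h1I)
  -- continuity of τ, τ'
  have hτc : ContinuousOn τ (Set.Icc 0 1) := fun x hx => (hτ x hx).continuousWithinAt
  have hτ'c : ContinuousOn τ' (Set.Icc 0 1) := fun x hx => (hτ' x hx).continuousWithinAt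
  have hτD : ∀ x ∈ Set.Ioo (0:ℝ) 1, HasDerivAt τ (τ' x) x := fun x hx =>
    (hτ x (Set.Ioo_subset_Icc_self hx)).hasDerivAt (Icc_mem_nhds hx.1 hx.2)
  have hτ'D : ∀ x ∈ Set.Ioo (0:ℝ) 1, HasDerivAt τ' (a x * τ x - h x) x := fun x hx =>
    (hτ' x (Set.Ioo_subset_Icc_self hx)).hasDerivAt (Icc_mem_nhds hx.1 hx.2)
  -- the function A
  set A : ℝ → ℝ := fun t => ∫ u in (0:ℝ)..t, u * aext u with hA
  have hAc : Continuous fun u => u * aext u := continuous_id.mul haextc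
  have hAd : ∀ t, HasDerivAt A (t * aext t) t := fun t => prim_hasDerivAt hAc t
  have hAcont : Continuous A := by
    rw [continuous_iff_continuousAt]; exact fun t => (hAd t).continuousAt
  have hA0 : A 0 = 0 := by rw [hA]; simp
  have hA1 : A 1 = ∫ σ in (0:ℝ)..1, σ * a σ := by
    rw [hA]
    apply intervalIntegral.integral_congr
    intro u hu
    rw [Set.uIcc_of_le zero_le_one] at hu
    show u * aext u = u * a u
    rw [haext_eq u hu]
  have hAnn : ∀ t ∈ Set.Icc (0:ℝ) 1, 0 ≤ A t := by
    intro t ht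
    exact intervalIntegral.integral_nonneg ht.1
      (fun u hu => mul_nonneg hu.1 (haextnn u))
  -- φ t ≤ t * φd t  on [0,1]
  have hφdmono : MonotoneOn φd (Set.Icc (0:ℝ) 1) := by
    apply monotoneOn_of_deriv_nonneg (convex_Icc 0 1) hφdc.continuousOn
    · intro t ht
      rw [interior_Icc] at ht
      exact (hdd t (Set.Ioo_subset_Icc_self ht)).differentiableAt.differentiableWithinAt
    · intro t ht
      rw [interior_Icc] at ht
      rw [(hdd t (Set.Ioo_subset_Icc_self ht)).deriv]
      exact mul_nonneg (haextnn t) (hφnn t (Set.Ioo_subset_Icc_self ht))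
  have hrpos : ∀ t ∈ Set.Icc (0:ℝ) 1, φ t ≤ t * φd t := by
    intro t ht
    have hFTC : ∫ u in (0:ℝ)..t, φd u = φ t - φ 0 :=
      intervalIntegral.integral_eq_sub_of_hasDerivAt (fun x _ => hder x)
        (hφdc.intervalIntegrable 0 t)
    rw [hφ0, sub_zero] at hFTC
    have hmon : ∫ u in (0:ℝ)..t, φd u ≤ ∫ u in (0:ℝ)..t, φd t := by
      apply intervalIntegral.integral_mono_on ht.1 (hφdc.intervalIntegrable 0 t)
        intervalIntegrable_const
      intro u hu
      exact hφdmono ⟨hu.1, hu.2.trans ht.2⟩ ht hu.2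
    rw [hFTC] at hmon
    simpa using hmon
  -- t * φd t ≤ (1 + A t) * φ t on [0,1]
  have hrA : ∀ t ∈ Set.Icc (0:ℝ) 1, t * φd t ≤ (1 + A t) * φ t := by
    have hWc : ContinuousOn (fun x => (1 + A x) * φ x - x * φd x) (Set.Icc (0:ℝ) 1) :=
      (((continuous_const.add hAcont).mul hφc).sub (continuous_id.mul hφdc)).continuousOn
    have hWmono : MonotoneOn (fun x => (1 + A x) * φ x - x * φd x) (Set.Icc (0:ℝ) 1) := by
      apply monotoneOn_of_deriv_nonneg (convex_Icc 0 1) hWc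
      · intro x hx
        rw [interior_Icc] at hx
        have hxI := Set.Ioo_subset_Icc_self hx
        exact ((((hasDerivAt_const x (1:ℝ)).add (hAd x)).mul (hder x)).sub
          ((hasDerivAt_id x).mul (hdd x hxI))).differentiableAt.differentiableWithinAt
      · intro x hx
        rw [interior_Icc] at hx
        have hxI := Set.Ioo_subset_Icc_self hx
        have hd1 : HasDerivAt (fun x => (1 + A x) * φ x - x * φd x)
            ((0 + x * aext x) * φ x + (1 + A x) * φd x - (1 * φd x + x * (aext x * φ x))) x :=
          (((hasDerivAt_const x (1:ℝ)).add (hAd x)).mul (hder x)).sub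
            ((hasDerivAt_id x).mul (hdd x hxI))
        rw [hd1.deriv]
        have he : (0 + x * aext x) * φ x + (1 + A x) * φd x - (1 * φd x + x * (aext x * φ x))
            = A x * φd x := by ring
        rw [he]
        exact mul_nonneg (hAnn x hxI) (le_trans zero_le_one (hφd1 x hxI))
    intro t ht
    have h0I : (0:ℝ) ∈ Set.Icc (0:ℝ) 1 := ⟨le_refl 0, zero_le_one⟩
    have hm := hWmono h0I ht ht.1
    simp only [] at hm
    rw [hφ0, hA0] at hm
    nlinarith [hm]
  -- the key pointwise estimate
  have hkey : ∀ u ∈ Set.Icc (0:ℝ) 1, φ 1 * u * Real.exp (-(A 1)) ≤ φ u := by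
    intro u hu
    rcases eq_or_lt_of_le hu.1 with h0 | h0
    · rw [← h0, hφ0]
      simp
    rcases eq_or_lt_of_le hu.2 with h1 | h1
    · rw [h1]
      rw [mul_comm (φ 1 * 1)]
      rw [mul_one]
      calc Real.exp (-(A 1)) * φ 1 ≤ 1 * φ 1 := by
            apply mul_le_mul_of_nonneg_right ?_ hφ1pos.le
            rw [Real.exp_le_one_iff]
            linarith [hAnn 1 h1I]
        _ = φ 1 := one_mul _
    -- now 0 < u < 1
    have hsubI : Set.Icc u 1 ⊆ Set.Icc (0:ℝ) 1 := Set.Icc_subset_Icc hu.1 (le_refl 1)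
    have hφposx : ∀ x ∈ Set.Icc u 1, 0 < φ x := fun x hx =>
      lt_of_lt_of_le (lt_of_lt_of_le h0 hx.1) (hφ_ge_s x (hsubI hx))
    set Ψ : ℝ → ℝ :=
      fun t => A t - (t * φd t - φ t) / φ t - Real.log (φ t) + Real.log t with hΨ
    have hΨc : ContinuousOn Ψ (Set.Icc u 1) := by
      apply ContinuousOn.add
      apply ContinuousOn.sub
      apply ContinuousOn.sub
      · exact hAcont.continuousOn
      · exact ((continuous_id.mul hφdc).sub hφc).continuousOn.div
          hφc.continuousOn (fun x hx => (hφposx x hx).ne')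
      · exact hφc.continuousOn.log (fun x hx => (hφposx x hx).ne')
      · exact Real.continuousOn_log.mono
          (fun x hx => ne_of_gt (lt_of_lt_of_le h0 hx.1))
    have hΨd : ∀ t ∈ Set.Ioo u 1,
        HasDerivAt Ψ (((t * φd t - φ t) / φ t)^2 / t) t := by
      intro t htI
      have htI' : t ∈ Set.Icc (0:ℝ) 1 := hsubI (Set.Ioo_subset_Icc_self htI)
      have hφt : 0 < φ t := hφposx t (Set.Ioo_subset_Icc_self htI)
      have ht0 : 0 < t := lt_trans h0 htI.1
      have hN : HasDerivAt (fun x => x * φd x - φ x)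
          (1 * φd t + t * (aext t * φ t) - φd t) t :=
        ((hasDerivAt_id t).mul (hdd t htI')).sub (hder t)
      have hR : HasDerivAt (fun x => (x * φd x - φ x) / φ x)
          (((1 * φd t + t * (aext t * φ t) - φd t) * φ t - (t * φd t - φ t) * φd t)
            / (φ t)^2) t := hN.div (hder t) hφt.ne'
      have hlogφ : HasDerivAt (fun x => Real.log (φ x)) (φd t / φ t) t :=
        (hder t).log hφt.ne'
      have hlogt : HasDerivAt Real.log t⁻¹ t := Real.hasDerivAt_log ht0.ne'
      have hsum := (((hAd t).sub hR).sub hlogφ).add hlogt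
      refine hsum.congr_deriv ?_
      field_simp
      ring
    have hmono : MonotoneOn Ψ (Set.Icc u 1) := by
      apply monotoneOn_of_deriv_nonneg (convex_Icc u 1) hΨc
      · intro t ht
        rw [interior_Icc] at ht
        exact (hΨd t ht).differentiableAt.differentiableWithinAt
      · intro t ht
        rw [interior_Icc] at ht
        rw [(hΨd t ht).deriv]
        have ht0 : 0 < t := lt_trans h0 ht.1
        positivity
    have hle := hmono (Set.left_mem_Icc.2 hu.2) (Set.right_mem_Icc.2 hu.2) hu.2
    have hφu : 0 < φ u := hφposx u (Set.left_mem_Icc.2 hu.2)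
    have hRu : (u * φd u - φ u) / φ u ≤ A u := by
      rw [div_le_iff₀ hφu]
      have := hrA u hu
      nlinarith [hAnn u hu, hφu]
    have hR1 : 0 ≤ (1 * φd 1 - φ 1) / φ 1 := by
      apply div_nonneg ?_ hφ1pos.le
      have := hrpos 1 h1I
      linarith
    have hΨu : Ψ u = A u - (u * φd u - φ u) / φ u - Real.log (φ u) + Real.log u := rfl
    have hΨ1 : Ψ 1 = A 1 - (1 * φd 1 - φ 1) / φ 1 - Real.log (φ 1) + Real.log 1 := rfl
    rw [hΨu, hΨ1, Real.log_one] at hle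
    have hlog : Real.log (φ 1) + Real.log u ≤ A 1 + Real.log (φ u) := by
      linarith [hAnn u hu]
    have hexp : φ 1 * u ≤ Real.exp (A 1) * φ u := by
      have hl : Real.exp (Real.log (φ 1) + Real.log u)
          ≤ Real.exp (A 1 + Real.log (φ u)) := Real.exp_le_exp.2 hlog
      rw [Real.exp_add, Real.exp_add, Real.exp_log hφ1pos, Real.exp_log h0,
        Real.exp_log hφu] at hl
      exact hl
    calc φ 1 * u * Real.exp (-(A 1)) ≤ Real.exp (A 1) * φ u * Real.exp (-(A 1)) :=
          mul_le_mul_of_nonneg_right hexp (Real.exp_pos _).le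
      _ = φ u := by
          rw [Real.exp_neg]
          field_simp
  -- the Wronskian identity
  have hwron : ∀ t ∈ Set.Icc (0:ℝ) 1,
      φ t * τ' t - φd t * τ t = - ∫ u in (0:ℝ)..t, φ u * h u := by
    intro t ht
    have hsub : Set.Icc (0:ℝ) t ⊆ Set.Icc (0:ℝ) 1 := Set.Icc_subset_Icc (le_refl 0) ht.2
    have hwc : ContinuousOn (fun x => φ x * τ' x - φd x * τ x) (Set.Icc 0 t) :=
      ((hφc.continuousOn.mono hsub).mul (hτ'c.mono hsub)).sub
        ((hφdc.continuousOn.mono hsub).mul (hτc.mono hsub))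
    have hwd : ∀ x ∈ Set.Ioo (0:ℝ) t,
        HasDerivWithinAt (fun x => φ x * τ' x - φd x * τ x) (-(φ x * h x)) (Set.Ioi x) x := by
      intro x hx
      have hxIoo : x ∈ Set.Ioo (0:ℝ) 1 := ⟨hx.1, lt_of_lt_of_le hx.2 ht.2⟩
      have hxI : x ∈ Set.Icc (0:ℝ) 1 := Set.Ioo_subset_Icc_self hxIoo
      have hd1 : HasDerivAt (fun x => φ x * τ' x - φd x * τ x)
          ((φd x * τ' x + φ x * (a x * τ x - h x)) - ((aext x * φ x) * τ x + φd x * τ' x)) x :=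
        ((hder x).mul (hτ'D x hxIoo)).sub ((hdd x hxI).mul (hτD x hxIoo))
      have he : (φd x * τ' x + φ x * (a x * τ x - h x)) - ((aext x * φ x) * τ x + φd x * τ' x)
          = -(φ x * h x) := by
        rw [haext_eq x hxI]; ring
      rw [he] at hd1
      exact hd1.hasDerivWithinAt
    have hint : IntervalIntegrable (fun x => -(φ x * h x)) volume 0 t := by
      apply ContinuousOn.intervalIntegrable
      rw [Set.uIcc_of_le ht.1]
      exact ((hφc.continuousOn.mono hsub).mul (hh_cont.mono hsub)).neg
    have hFTC := intervalIntegral.integral_eq_sub_of_hasDeriv_right_of_le ht.1 hwc hwd hint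
    have hw0 : φ 0 * τ' 0 - φd 0 * τ 0 = 0 := by rw [hφ0, hτ0]; ring
    rw [hw0, sub_zero, intervalIntegral.integral_neg] at hFTC
    exact hFTC.symm
  -- τ 1 ≥ 0
  have hτ1 : 0 ≤ τ 1 := by
    have hw1 := hwron 1 h1I
    rw [hτ'1] at hw1
    have hmono2 : ∫ u in (0:ℝ)..1, φ 1 * Real.exp (-(A 1)) * (u * h u)
        ≤ ∫ u in (0:ℝ)..1, φ u * h u := by
      apply intervalIntegral.integral_mono_on zero_le_one
      · apply ContinuousOn.intervalIntegrable
        rw [Set.uIcc_of_le zero_le_one]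
        exact continuousOn_const.mul (continuousOn_id.mul hh_cont)
      · apply ContinuousOn.intervalIntegrable
        rw [Set.uIcc_of_le zero_le_one]
        exact hφc.continuousOn.mul hh_cont
      · intro u hu
        have he : φ 1 * Real.exp (-(A 1)) * (u * h u)
            = (φ 1 * u * Real.exp (-(A 1))) * h u := by ring
        rw [he]
        exact mul_le_mul_of_nonneg_right (hkey u hu) (hh_nonneg u hu)
    rw [intervalIntegral.integral_const_mul] at hmono2
    have hI1 : (∫ u in (0:ℝ)..1, u * h u) = ∫ σ in (0:ℝ)..1, σ * h σ := rfl
    have hφd1τ : φd 1 * τ 1 = φ 1 * c + ∫ u in (0:ℝ)..1, φ u * h u := by linarith [hw1]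
    have hge : φ 1 * (c + (∫ σ in (0:ℝ)..1, σ * h σ) * Real.exp (-(A 1)))
        ≤ φ 1 * c + ∫ u in (0:ℝ)..1, φ u * h u := by
      rw [hI1] at hmono2
      nlinarith [hmono2]
    have hcc : 0 ≤ c + (∫ σ in (0:ℝ)..1, σ * h σ) * Real.exp (-(A 1)) := by
      rw [hA1]
      exact hc
    nlinarith [hφd1pos, hφ1pos, hcc, hge, hφd1τ]
  -- τ ≥ 0 on [0,1]
  have hτpos : ∀ t ∈ Set.Icc (0:ℝ) 1, 0 ≤ τ t := by
    intro t ht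
    rcases eq_or_lt_of_le ht.1 with h0 | h0
    · rw [← h0, hτ0]
    have hsub : Set.Icc t 1 ⊆ Set.Icc (0:ℝ) 1 := Set.Icc_subset_Icc ht.1 (le_refl 1)
    have hφposx : ∀ x ∈ Set.Icc t 1, 0 < φ x := fun x hx =>
      lt_of_lt_of_le (lt_of_lt_of_le h0 hx.1) (hφ_ge_s x (hsub hx))
    have hqc : ContinuousOn (fun x => τ x / φ x) (Set.Icc t 1) :=
      (hτc.mono hsub).div (hφc.continuousOn.mono hsub) (fun x hx => (hφposx x hx).ne')
    have hqd : ∀ x ∈ Set.Ioo t 1,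
        HasDerivAt (fun x => τ x / φ x) ((τ' x * φ x - τ x * φd x) / (φ x)^2) x := by
      intro x hx
      have hxIoo : x ∈ Set.Ioo (0:ℝ) 1 := ⟨lt_trans h0 hx.1, hx.2⟩
      exact (hτD x hxIoo).div (hder x)
        (hφposx x (Set.Ioo_subset_Icc_self hx)).ne'
    have hanti : AntitoneOn (fun x => τ x / φ x) (Set.Icc t 1) := by
      apply antitoneOn_of_deriv_nonpos (convex_Icc t 1) hqc
      · intro x hx
        rw [interior_Icc] at hx
        exact (hqd x hx).differentiableAt.differentiableWithinAt
      · intro x hx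
        rw [interior_Icc] at hx
        rw [(hqd x hx).deriv]
        have hxI : x ∈ Set.Icc (0:ℝ) 1 := hsub (Set.Ioo_subset_Icc_self hx)
        have hnum : τ' x * φ x - τ x * φd x = - ∫ u in (0:ℝ)..x, φ u * h u := by
          have := hwron x hxI
          linarith
        have hintn : 0 ≤ ∫ u in (0:ℝ)..x, φ u * h u := by
          apply intervalIntegral.integral_nonneg hxI.1
          intro u hu
          have huI : u ∈ Set.Icc (0:ℝ) 1 := ⟨hu.1, hu.2.trans hxI.2⟩
          exact mul_nonneg (hφnn u huI) (hh_nonneg u huI)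
        apply div_nonpos_of_nonpos_of_nonneg
        · rw [hnum]; linarith
        · positivity
    have hle := hanti (Set.left_mem_Icc.2 ht.2) (Set.right_mem_Icc.2 ht.2) ht.2
    have hq1 : 0 ≤ τ 1 / φ 1 := div_nonneg hτ1 hφ1pos.le
    have hqt : 0 ≤ τ t / φ t := le_trans hq1 hle
    have hφt : 0 < φ t := hφposx t (Set.left_mem_Icc.2 ht.2)
    have := mul_nonneg hqt hφt.le
    rwa [div_mul_cancel₀ _ hφt.ne'] at this
  -- FTC for τ' on [t,1]
  have hFTCτ' : ∀ t ∈ Set.Icc (0:ℝ) 1,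
      (∫ u in t..1, (a u * τ u - h u)) = c - τ' t := by
    intro t ht
    have hsub : Set.Icc t 1 ⊆ Set.Icc (0:ℝ) 1 := Set.Icc_subset_Icc ht.1 (le_refl 1)
    have hint : IntervalIntegrable (fun u => a u * τ u - h u) volume t 1 := by
      apply ContinuousOn.intervalIntegrable
      rw [Set.uIcc_of_le ht.2]
      exact ((ha_cont.mono hsub).mul (hτc.mono hsub)).sub (hh_cont.mono hsub)
    have hFTC := intervalIntegral.integral_eq_sub_of_hasDeriv_right_of_le ht.2
      (hτ'c.mono hsub)
      (fun x hx => ((hτ' x ⟨le_trans ht.1 hx.1.le, hx.2.le⟩).hasDerivAt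
        (Icc_mem_nhds (lt_of_le_of_lt ht.1 hx.1) hx.2)).hasDerivWithinAt) hint
    rw [hFTC, hτ'1]
  -- split form of τ'
  have hsplit : ∀ t ∈ Set.Icc (0:ℝ) 1,
      τ' t = c + (∫ u in t..1, h u) - ∫ u in t..1, a u * τ u := by
    intro t ht
    have hsub : Set.Icc t 1 ⊆ Set.Icc (0:ℝ) 1 := Set.Icc_subset_Icc ht.1 (le_refl 1)
    have hint1 : IntervalIntegrable (fun u => a u * τ u) volume t 1 := by
      apply ContinuousOn.intervalIntegrable
      rw [Set.uIcc_of_le ht.2]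
      exact (ha_cont.mono hsub).mul (hτc.mono hsub)
    have hint2 : IntervalIntegrable h volume t 1 := by
      apply ContinuousOn.intervalIntegrable
      rw [Set.uIcc_of_le ht.2]
      exact hh_cont.mono hsub
    have hF := hFTCτ' t ht
    rw [intervalIntegral.integral_sub hint1 hint2] at hF
    linarith
  -- upper bound
  have hup : ∀ t ∈ Set.Icc (0:ℝ) 1, τ' t ≤ c + ∫ σ in (0:ℝ)..1, h σ := by
    intro t ht
    have hsub : Set.Icc t 1 ⊆ Set.Icc (0:ℝ) 1 := Set.Icc_subset_Icc ht.1 (le_refl 1)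
    have h1 : 0 ≤ ∫ u in t..1, a u * τ u := by
      apply intervalIntegral.integral_nonneg ht.2
      intro u hu
      have huI : u ∈ Set.Icc (0:ℝ) 1 := hsub hu
      exact mul_nonneg (ha_nonneg u huI) (hτpos u huI)
    have hint0 : IntervalIntegrable h volume 0 t := by
      apply ContinuousOn.intervalIntegrable
      rw [Set.uIcc_of_le ht.1]
      exact hh_cont.mono (Set.Icc_subset_Icc (le_refl 0) ht.2)
    have hintt : IntervalIntegrable h volume t 1 := by
      apply ContinuousOn.intervalIntegrable
      rw [Set.uIcc_of_le ht.2]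
      exact hh_cont.mono hsub
    have hadd : (∫ u in (0:ℝ)..t, h u) + (∫ u in t..1, h u) = ∫ u in (0:ℝ)..1, h u :=
      intervalIntegral.integral_add_adjacent_intervals hint0 hintt
    have h0t : 0 ≤ ∫ u in (0:ℝ)..t, h u := by
      apply intervalIntegral.integral_nonneg ht.1
      intro u hu
      exact hh_nonneg u ⟨hu.1, hu.2.trans ht.2⟩
    have h2 : (∫ u in t..1, h u) ≤ ∫ σ in (0:ℝ)..1, h σ := by
      have : (∫ u in (0:ℝ)..1, h u) = ∫ σ in (0:ℝ)..1, h σ := rfl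
      linarith
    linarith [hsplit t ht]
  -- c + ∫ h ≥ 0
  have hKpos : 0 ≤ c + ∫ σ in (0:ℝ)..1, h σ := by
    have hJσnn : 0 ≤ ∫ σ in (0:ℝ)..1, σ * h σ := by
      apply intervalIntegral.integral_nonneg zero_le_one
      intro u hu
      exact mul_nonneg hu.1 (hh_nonneg u hu)
    have hJle : (∫ σ in (0:ℝ)..1, σ * h σ) ≤ ∫ σ in (0:ℝ)..1, h σ := by
      apply intervalIntegral.integral_mono_on zero_le_one
      · apply ContinuousOn.intervalIntegrable
        rw [Set.uIcc_of_le zero_le_one]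
        exact continuousOn_id.mul hh_cont
      · apply ContinuousOn.intervalIntegrable
        rw [Set.uIcc_of_le zero_le_one]
        exact hh_cont
      · intro u hu
        exact mul_le_of_le_one_left (hh_nonneg u hu) hu.2
    have hexp1 : Real.exp (-∫ σ in (0:ℝ)..1, σ * a σ) ≤ 1 := by
      rw [Real.exp_le_one_iff]
      have : 0 ≤ ∫ σ in (0:ℝ)..1, σ * a σ := by
        rw [← hA1]
        exact hAnn 1 h1I
      linarith
    nlinarith [Real.exp_pos (-∫ σ in (0:ℝ)..1, σ * a σ)]
  -- τ t ≤ t * (c + ∫ h)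
  have hτub : ∀ t ∈ Set.Icc (0:ℝ) 1, τ t ≤ t * (c + ∫ σ in (0:ℝ)..1, h σ) := by
    intro t ht
    have hsub : Set.Icc (0:ℝ) t ⊆ Set.Icc (0:ℝ) 1 := Set.Icc_subset_Icc (le_refl 0) ht.2
    have hτ'int : IntervalIntegrable τ' volume 0 t := by
      apply ContinuousOn.intervalIntegrable
      rw [Set.uIcc_of_le ht.1]
      exact hτ'c.mono hsub
    have hFTC := intervalIntegral.integral_eq_sub_of_hasDeriv_right_of_le ht.1
      (hτc.mono hsub)
      (fun x hx => ((hτ x ⟨hx.1.le, hx.2.le.trans ht.2⟩).hasDerivAt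
        (Icc_mem_nhds hx.1 (lt_of_lt_of_le hx.2 ht.2))).hasDerivWithinAt) hτ'int
    rw [hτ0, sub_zero] at hFTC
    have hmon : (∫ u in (0:ℝ)..t, τ' u) ≤ ∫ u in (0:ℝ)..t, (c + ∫ σ in (0:ℝ)..1, h σ) := by
      apply intervalIntegral.integral_mono_on ht.1 hτ'int intervalIntegrable_const
      intro u hu
      exact hup u ⟨hu.1, hu.2.trans ht.2⟩
    rw [hFTC] at hmon
    simp only [intervalIntegral.integral_const, smul_eq_mul, sub_zero] at hmon
    linarith [hmon]
  -- final
  intro s hs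
  constructor
  · -- lower bound
    have hsub : Set.Icc s 1 ⊆ Set.Icc (0:ℝ) 1 := Set.Icc_subset_Icc hs.1 (le_refl 1)
    have hint1 : IntervalIntegrable (fun u => a u * τ u) volume s 1 := by
      apply ContinuousOn.intervalIntegrable
      rw [Set.uIcc_of_le hs.2]
      exact (ha_cont.mono hsub).mul (hτc.mono hsub)
    have hint2 : IntervalIntegrable (fun u => (c + ∫ σ in (0:ℝ)..1, h σ) * (u * a u))
        volume s 1 := by
      apply ContinuousOn.intervalIntegrable
      rw [Set.uIcc_of_le hs.2]
      exact continuousOn_const.mul (continuousOn_id.mul (ha_cont.mono hsub))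
    have hm1 : (∫ u in s..1, a u * τ u)
        ≤ ∫ u in s..1, (c + ∫ σ in (0:ℝ)..1, h σ) * (u * a u) := by
      apply intervalIntegral.integral_mono_on hs.2 hint1 hint2
      intro u hu
      have huI : u ∈ Set.Icc (0:ℝ) 1 := hsub hu
      have hub := hτub u huI
      have hanng := ha_nonneg u huI
      calc a u * τ u ≤ a u * (u * (c + ∫ σ in (0:ℝ)..1, h σ)) :=
            mul_le_mul_of_nonneg_left hub hanng
        _ = (c + ∫ σ in (0:ℝ)..1, h σ) * (u * a u) := by ring
    rw [intervalIntegral.integral_const_mul] at hm1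
    have hm2 : (∫ u in s..1, u * a u) ≤ ∫ σ in (0:ℝ)..1, σ * a σ := by
      have hint0 : IntervalIntegrable (fun u => u * a u) volume 0 s := by
        apply ContinuousOn.intervalIntegrable
        rw [Set.uIcc_of_le hs.1]
        exact continuousOn_id.mul (ha_cont.mono (Set.Icc_subset_Icc (le_refl 0) hs.2))
      have hints : IntervalIntegrable (fun u => u * a u) volume s 1 := by
        apply ContinuousOn.intervalIntegrable
        rw [Set.uIcc_of_le hs.2]
        exact continuousOn_id.mul (ha_cont.mono hsub)
      have hadd : (∫ u in (0:ℝ)..s, u * a u) + (∫ u in s..1, u * a u)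
          = ∫ u in (0:ℝ)..1, u * a u :=
        intervalIntegral.integral_add_adjacent_intervals hint0 hints
      have h0s : 0 ≤ ∫ u in (0:ℝ)..s, u * a u := by
        apply intervalIntegral.integral_nonneg hs.1
        intro u hu
        exact mul_nonneg hu.1 (ha_nonneg u ⟨hu.1, hu.2.trans hs.2⟩)
      have : (∫ u in (0:ℝ)..1, u * a u) = ∫ σ in (0:ℝ)..1, σ * a σ := rfl
      linarith
    have hm3 : (c + ∫ σ in (0:ℝ)..1, h σ) * (∫ u in s..1, u * a u)
        ≤ (c + ∫ σ in (0:ℝ)..1, h σ) * ∫ σ in (0:ℝ)..1, σ * a σ :=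
      mul_le_mul_of_nonneg_left hm2 hKpos
    have hh1 : 0 ≤ ∫ u in s..1, h u := by
      apply intervalIntegral.integral_nonneg hs.2
      intro u hu
      exact hh_nonneg u (hsub hu)
    have hsp := hsplit s hs
    linarith
  · exact hup s hs
end

section
/- Let a ∈ C([0,1]) be nonnegative with ∫₀¹ σ a(σ)dσ ≤ M². Then there is C = C(M) such that for any h ∈ C([0,1]), c ∈ ℝ, α ∈ [0,1], the solution τ of -τ''+aτ = h, τ(0)=0, τ'(1)=c satisfies |τ(s)| ≤ C(|c| s + s^{1−α} ∫₀¹ σ^α |h(σ)|dσ) and s^α|τ'(s)| ≤ C(|c| s^α + ∫₀¹ σ^α |h(σ)|dσ) for all s ∈ [0,1]. -/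
open MeasureTheory

open Set intervalIntegral in
/-- Maximum principle: if `-v'' + a v ≥ 0` with `a ≥ 0`, `v(0) = 0`, `v'(1) ≥ 0`,
then `v ≥ 0` on `[0,1]`. -/
lemma maxprin_aux_stmt13 (a g v v' : ℝ → ℝ)
    (hv : ∀ s ∈ Icc (0:ℝ) 1, HasDerivWithinAt v (v' s) (Icc 0 1) s)
    (hv' : ∀ s ∈ Icc (0:ℝ) 1, HasDerivWithinAt v' (a s * v s - g s) (Icc 0 1) s)
    (ha : ∀ s ∈ Icc (0:ℝ) 1, 0 ≤ a s)
    (hg : ∀ s ∈ Icc (0:ℝ) 1, 0 ≤ g s)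
    (hv0 : v 0 = 0) (hv1 : 0 ≤ v' 1) :
    ∀ s ∈ Icc (0:ℝ) 1, 0 ≤ v s := by
  by_contra hcon
  push_neg at hcon
  obtain ⟨s0, hs0, hs0neg⟩ := hcon
  have hvc : ContinuousOn v (Icc 0 1) := fun s hs => (hv s hs).continuousWithinAt
  have hv'c : ContinuousOn v' (Icc 0 1) := fun s hs => (hv' s hs).continuousWithinAt
  obtain ⟨m, hm, hmin⟩ := (isCompact_Icc (a := (0:ℝ)) (b := 1)).exists_isMinOn
    (nonempty_Icc.2 zero_le_one) hvc
  have hvm : v m < 0 := lt_of_le_of_lt (hmin hs0) hs0neg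
  have hm0 : m ≠ 0 := fun h => by rw [h, hv0] at hvm; exact absurd hvm (lt_irrefl 0)
  have hmpos : 0 < m := lt_of_le_of_ne hm.1 (Ne.symm hm0)
  have hDA : ∀ x ∈ Ioo (0:ℝ) 1, HasDerivAt v (v' x) x := fun x hx =>
    (hv x (Ioo_subset_Icc_self hx)).hasDerivAt (Icc_mem_nhds hx.1 hx.2)
  have hDA' : ∀ x ∈ Ioo (0:ℝ) 1, HasDerivAt v' (a x * v x - g x) x := fun x hx =>
    (hv' x (Ioo_subset_Icc_self hx)).hasDerivAt (Icc_mem_nhds hx.1 hx.2)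
  have hv'm : 0 ≤ v' m := by
    rcases eq_or_lt_of_le hm.2 with h1 | h1
    · rw [h1]; exact hv1
    · have hda := hDA m ⟨hmpos, h1⟩
      have hloc : IsLocalMin v m := hmin.isLocalMin (Icc_mem_nhds hmpos h1)
      rw [hloc.hasDerivAt_eq_zero hda]
  have hIccm : Icc (0:ℝ) m ⊆ Icc 0 1 := Icc_subset_Icc le_rfl hm.2
  set S : Set ℝ := Icc 0 m ∩ v ⁻¹' (Ici 0) with hSdef
  have hSne : S.Nonempty := ⟨0, ⟨le_refl 0, hm.1⟩, le_of_eq hv0.symm⟩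
  have hSbdd : BddAbove S := ⟨m, fun t ht => ht.1.2⟩
  have hSclosed : IsClosed S :=
    (hvc.mono hIccm).preimage_isClosed_of_isClosed isClosed_Icc isClosed_Ici
  set s1 := sSup S with hs1def
  have hs1S : s1 ∈ S := hSclosed.csSup_mem hSne hSbdd
  have hs1m : s1 ≤ m := hs1S.1.2
  have hs1nn : 0 ≤ s1 := hs1S.1.1
  have hvs1 : 0 ≤ v s1 := hs1S.2
  have hneg : ∀ t ∈ Ioc s1 m, v t < 0 := by
    intro t ht
    by_contra hh
    push_neg at hh
    exact absurd (le_csSup hSbdd (⟨⟨le_trans hs1nn ht.1.le, ht.2⟩, hh⟩ : t ∈ S)) (not_le.2 ht.1)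
  have hsub : Ioo s1 m ⊆ Ioo (0:ℝ) 1 := fun x hx =>
    ⟨lt_of_le_of_lt hs1nn hx.1, lt_of_lt_of_le hx.2 hm.2⟩
  have hsubIcc : Icc s1 m ⊆ Icc (0:ℝ) 1 := fun x hx =>
    ⟨le_trans hs1nn hx.1, le_trans hx.2 hm.2⟩
  have hanti : AntitoneOn v' (Icc s1 m) := by
    apply antitoneOn_of_deriv_nonpos (convex_Icc s1 m) (hv'c.mono hsubIcc)
    · rw [interior_Icc]
      exact fun x hx => ((hDA' x (hsub hx)).differentiableAt).differentiableWithinAt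
    · rw [interior_Icc]
      intro x hx
      rw [(hDA' x (hsub hx)).deriv]
      have hvx : v x < 0 := hneg x ⟨hx.1, hx.2.le⟩
      have hax : 0 ≤ a x := ha x (Ioo_subset_Icc_self (hsub hx))
      have hgx : 0 ≤ g x := hg x (Ioo_subset_Icc_self (hsub hx))
      nlinarith
  have hv'pos : ∀ t ∈ Icc s1 m, 0 ≤ v' t := fun t ht =>
    le_trans hv'm (hanti ht (right_mem_Icc.2 hs1m) ht.2)
  have hmono : MonotoneOn v (Icc s1 m) := by
    apply monotoneOn_of_deriv_nonneg (convex_Icc s1 m) (hvc.mono hsubIcc)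
    · rw [interior_Icc]
      exact fun x hx => ((hDA x (hsub hx)).differentiableAt).differentiableWithinAt
    · rw [interior_Icc]
      intro x hx
      rw [(hDA x (hsub hx)).deriv]
      exact hv'pos x (Ioo_subset_Icc_self hx)
  have : v s1 ≤ v m := hmono (left_mem_Icc.2 hs1m) (right_mem_Icc.2 hs1m) hs1m
  linarith

open Set intervalIntegral in
/-- Weighted pointwise estimates for the solution of the BVP `-τ'' + a τ = h`,
`τ(0)=0`, `τ'(1)=c` without sign conditions: for `∫₀¹ σ a ≤ M²` there is `C = C(M)`
with `|τ(s)| ≤ C(|c| s + s^{1-α} ∫₀¹ σ^α |h|)` and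
`s^α |τ'(s)| ≤ C(|c| s^α + ∫₀¹ σ^α |h|)` for all `α ∈ [0,1]`. -/
theorem stmt_13 (M : ℝ) (hM : 0 < M) :
    ∃ C > (0:ℝ), ∀ (a h : ℝ → ℝ) (c α : ℝ),
      ContinuousOn a (Set.Icc 0 1) →
      (∀ s ∈ Set.Icc (0:ℝ) 1, 0 ≤ a s) →
      (∫ σ in (0:ℝ)..1, σ * a σ) ≤ M ^ 2 →
      ContinuousOn h (Set.Icc 0 1) →
      0 ≤ α → α ≤ 1 →
      ∀ τ τ' : ℝ → ℝ,
        (∀ s ∈ Set.Icc (0:ℝ) 1, HasDerivWithinAt τ (τ' s) (Set.Icc 0 1) s) →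
        (∀ s ∈ Set.Icc (0:ℝ) 1, HasDerivWithinAt τ' (a s * τ s - h s) (Set.Icc 0 1) s) →
        τ 0 = 0 → τ' 1 = c →
        ∀ s ∈ Set.Icc (0:ℝ) 1,
          |τ s| ≤ C * (|c| * s + s ^ (1 - α) * ∫ σ in (0:ℝ)..1, σ ^ α * |h σ|) ∧
          s ^ α * |τ' s| ≤ C * (|c| * s ^ α + ∫ σ in (0:ℝ)..1, σ ^ α * |h σ|) := by
  refine ⟨2 + 2 * M ^ 2, by positivity, ?_⟩
  intro a h c α hacont hann haM hhcont hα0 hα1 τ τ' hτd hτ'd hτ0 hτ'1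
  have hτc : ContinuousOn τ (Icc 0 1) := fun s hs => (hτd s hs).continuousWithinAt
  have hτ'c : ContinuousOn τ' (Icc 0 1) := fun s hs => (hτ'd s hs).continuousWithinAt
  -- the clamped version of |h|, continuous on all of ℝ
  have hprojmem : ∀ x : ℝ, max 0 (min 1 x) ∈ Icc (0:ℝ) 1 :=
    fun x => ⟨le_max_left _ _, max_le zero_le_one (min_le_left _ _)⟩
  have hprojc : Continuous fun x : ℝ => max 0 (min 1 x) := by fun_prop
  set f : ℝ → ℝ := fun x => |h (max 0 (min 1 x))| with hfdef
  have hfc : Continuous f := (hhcont.comp_continuous hprojc hprojmem).abs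
  have hfnn : ∀ x, 0 ≤ f x := fun x => abs_nonneg _
  have hfeq : ∀ x ∈ Icc (0:ℝ) 1, f x = |h x| := by
    intro x hx
    rw [hfdef]
    simp only []
    rw [min_eq_right hx.2, max_eq_right hx.1]
  -- `F t = ∫ t..1 f`
  set F : ℝ → ℝ := fun t => (∫ x in (0:ℝ)..1, f x) - ∫ x in (0:ℝ)..t, f x with hFdef
  have hFc : Continuous F :=
    continuous_const.sub (continuous_primitive (fun u v => hfc.intervalIntegrable u v) 0)
  have hFeq : ∀ t, F t = ∫ x in t..(1:ℝ), f x := fun t =>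
    integral_interval_sub_left (hfc.intervalIntegrable 0 1) (hfc.intervalIntegrable 0 t)
  have hFd : ∀ t, HasDerivAt F (-(f t)) t := fun t =>
    (integral_hasDerivAt_right (hfc.intervalIntegrable _ _)
      (hfc.stronglyMeasurableAtFilter _ _) hfc.continuousAt).const_sub _
  have hFnn : ∀ t, t ≤ 1 → 0 ≤ F t := fun t ht => by
    rw [hFeq]; exact integral_nonneg ht (fun u _ => hfnn u)
  -- the barrier `w`
  set w : ℝ → ℝ := fun s => |c| * s + ∫ t in (0:ℝ)..s, F t with hwdef
  set w' : ℝ → ℝ := fun s => |c| + F s with hw'def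
  have hwd : ∀ s, HasDerivAt w (w' s) s := by
    intro s
    have h1 : HasDerivAt (fun x : ℝ => |c| * x) |c| s := by
      simpa using (hasDerivAt_id s).const_mul |c|
    exact h1.add (integral_hasDerivAt_right (hFc.intervalIntegrable _ _)
      (hFc.stronglyMeasurableAtFilter _ _) hFc.continuousAt)
  have hw'd : ∀ s, HasDerivAt w' (-(f s)) s := fun s => (hFd s).const_add _
  have hwnn : ∀ s ∈ Icc (0:ℝ) 1, 0 ≤ w s := fun s hs =>
    add_nonneg (mul_nonneg (abs_nonneg c) hs.1)
      (integral_nonneg hs.1 (fun t ht => hFnn t (le_trans ht.2 hs.2)))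
  have hw0 : w 0 = 0 := by simp [hwdef]
  have hw'1 : w' 1 = |c| := by
    rw [hw'def]; simp only []; rw [hFeq 1, integral_same, add_zero]
  -- comparison from above
  have hub : ∀ s ∈ Icc (0:ℝ) 1, 0 ≤ w s - τ s := by
    apply maxprin_aux_stmt13 a (fun s => f s - h s + a s * w s) _ (fun s => w' s - τ' s)
    · exact fun s hs => ((hwd s).hasDerivWithinAt).sub (hτd s hs)
    · intro s hs
      have hd := ((hw'd s).hasDerivWithinAt).sub (hτ'd s hs)
      exact hd.congr_deriv (by ring)
    · exact hann
    · intro s hs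
      have h1 : f s = |h s| := hfeq s hs
      have h2 : h s ≤ |h s| := le_abs_self _
      have h3 : 0 ≤ a s * w s := mul_nonneg (hann s hs) (hwnn s hs)
      linarith
    · rw [hw0, hτ0, sub_zero]
    · rw [hw'1, hτ'1]
      have := le_abs_self c
      linarith
  -- comparison from below
  have hlb : ∀ s ∈ Icc (0:ℝ) 1, 0 ≤ w s + τ s := by
    apply maxprin_aux_stmt13 a (fun s => f s + h s + a s * w s) _ (fun s => w' s + τ' s)
    · exact fun s hs => ((hwd s).hasDerivWithinAt).add (hτd s hs)
    · intro s hs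
      have hd := ((hw'd s).hasDerivWithinAt).add (hτ'd s hs)
      exact hd.congr_deriv (by ring)
    · exact hann
    · intro s hs
      have h1 : f s = |h s| := hfeq s hs
      have h2 : -|h s| ≤ h s := neg_abs_le _
      have h3 : 0 ≤ a s * w s := mul_nonneg (hann s hs) (hwnn s hs)
      linarith
    · rw [hw0, hτ0, add_zero]
    · rw [hw'1, hτ'1]
      have := neg_abs_le c
      linarith
  have habsw : ∀ s ∈ Icc (0:ℝ) 1, |τ s| ≤ w s := fun s hs =>
    abs_le.2 ⟨by linarith [hlb s hs], by linarith [hub s hs]⟩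
  -- the identity `∫₀ˢ F = ∫₀ˢ x f x dx + s F s`
  have hgc : Continuous fun x : ℝ => x * f x := continuous_id.mul hfc
  have hLR : ∀ s, (∫ t in (0:ℝ)..s, F t) = (∫ x in (0:ℝ)..s, x * f x) + s * F s := by
    have hRd : ∀ s, HasDerivAt (fun u => (∫ x in (0:ℝ)..u, x * f x) + u * F u) (F s) s := by
      intro s
      have h1 : HasDerivAt (fun u => ∫ x in (0:ℝ)..u, x * f x) (s * f s) s :=
        integral_hasDerivAt_right (hgc.intervalIntegrable _ _)
          (hgc.stronglyMeasurableAtFilter _ _) hgc.continuousAt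
      have h2 : HasDerivAt (fun u : ℝ => u * F u) (1 * F s + s * -(f s)) s :=
        (hasDerivAt_id s).mul (hFd s)
      have := h1.add h2
      exact this.congr_deriv (by ring)
    have hLd : ∀ s, HasDerivAt (fun u => ∫ t in (0:ℝ)..u, F t) (F s) s := fun s =>
      integral_hasDerivAt_right (hFc.intervalIntegrable _ _)
        (hFc.stronglyMeasurableAtFilter _ _) hFc.continuousAt
    intro s
    have hdiff : Differentiable ℝ
        (fun u => (∫ t in (0:ℝ)..u, F t) - ((∫ x in (0:ℝ)..u, x * f x) + u * F u)) :=
      fun u => ((hLd u).sub (hRd u)).differentiableAt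
    have hz : ∀ u, deriv
        (fun u => (∫ t in (0:ℝ)..u, F t) - ((∫ x in (0:ℝ)..u, x * f x) + u * F u)) u = 0 :=
      fun u => (((hLd u).sub (hRd u)).deriv).trans (sub_self _)
    have hc := is_const_of_deriv_eq_zero hdiff hz s 0
    simp only [integral_same, zero_mul, add_zero, sub_zero, zero_add] at hc
    linarith [hc]
  -- the weighted integral `Hα`
  have hpowc : Continuous fun x : ℝ => x ^ α :=
    continuous_iff_continuousAt.2 fun x => Real.continuousAt_rpow_const x α (Or.inr hα0)
  have hpafc : Continuous fun x : ℝ => x ^ α * f x := hpowc.mul hfc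
  set Hα : ℝ := ∫ x in (0:ℝ)..1, x ^ α * f x with hHαdef
  have hHnn : 0 ≤ Hα := integral_nonneg zero_le_one
    (fun u hu => mul_nonneg (Real.rpow_nonneg hu.1 α) (hfnn u))
  have hHpart : ∀ u v : ℝ, 0 ≤ u → u ≤ v → v ≤ 1 → (∫ x in u..v, x ^ α * f x) ≤ Hα := by
    intro u v hu huv hv
    have e1 : (∫ x in (0:ℝ)..u, x ^ α * f x) + (∫ x in u..v, x ^ α * f x)
        = ∫ x in (0:ℝ)..v, x ^ α * f x :=
      integral_add_adjacent_intervals (hpafc.intervalIntegrable _ _) (hpafc.intervalIntegrable _ _)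
    have e2 : (∫ x in (0:ℝ)..v, x ^ α * f x) + (∫ x in v..(1:ℝ), x ^ α * f x) = Hα :=
      integral_add_adjacent_intervals (hpafc.intervalIntegrable _ _) (hpafc.intervalIntegrable _ _)
    have n1 : 0 ≤ ∫ x in (0:ℝ)..u, x ^ α * f x := integral_nonneg hu
      (fun x hx => mul_nonneg (Real.rpow_nonneg hx.1 α) (hfnn x))
    have n2 : 0 ≤ ∫ x in v..(1:ℝ), x ^ α * f x := integral_nonneg hv
      (fun x hx => mul_nonneg (Real.rpow_nonneg (le_trans (le_trans hu huv) hx.1) α) (hfnn x))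
    linarith
  have hHeq : Hα = ∫ σ in (0:ℝ)..1, σ ^ α * |h σ| := by
    apply integral_congr
    intro x hx
    rw [uIcc_of_le zero_le_one] at hx
    simp only []
    rw [hfeq x hx]
  -- integrability and bound for `x * a x`
  have haC : ∀ s ∈ Icc (0:ℝ) 1, IntervalIntegrable (fun x => x * a x) volume s 1 := by
    intro s hs
    apply ContinuousOn.intervalIntegrable
    rw [uIcc_of_le hs.2]
    exact (continuousOn_id.mul (hacont.mono (Icc_subset_Icc hs.1 le_rfl)))
  have haM' : ∀ s ∈ Icc (0:ℝ) 1, (∫ x in s..1, x * a x) ≤ M ^ 2 := by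
    intro s hs
    have e1 : (∫ x in (0:ℝ)..s, x * a x) + (∫ x in s..(1:ℝ), x * a x)
        = ∫ x in (0:ℝ)..1, x * a x := by
      apply integral_add_adjacent_intervals
      · apply ContinuousOn.intervalIntegrable
        rw [uIcc_of_le hs.1]
        exact continuousOn_id.mul (hacont.mono (Icc_subset_Icc le_rfl hs.2))
      · exact haC s hs
    have n1 : 0 ≤ ∫ x in (0:ℝ)..s, x * a x := integral_nonneg hs.1
      (fun x hx => mul_nonneg hx.1 (hann x ⟨hx.1, le_trans hx.2 hs.2⟩))
    linarith
  -- the bound `w s ≤ |c| s + 2 s^(1-α) Hα`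
  have hwB : ∀ s ∈ Icc (0:ℝ) 1, w s ≤ |c| * s + 2 * (s ^ (1 - α) * Hα) := by
    intro s hs
    have hsnn := hs.1
    have hs1 := hs.2
    have hs1α : (0:ℝ) ≤ s ^ (1 - α) := Real.rpow_nonneg hsnn _
    have p1 : (∫ x in (0:ℝ)..s, x * f x) ≤ s ^ (1 - α) * Hα := by
      have step : (∫ x in (0:ℝ)..s, x * f x)
          ≤ ∫ x in (0:ℝ)..s, s ^ (1 - α) * (x ^ α * f x) := by
        apply integral_mono_on hsnn (hgc.intervalIntegrable _ _)
          ((continuous_const.mul hpafc).intervalIntegrable _ _)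
        intro x hx
        have hkey : x ≤ s ^ (1 - α) * x ^ α := by
          calc x = x ^ ((1 - α) + α) := by rw [sub_add_cancel, Real.rpow_one]
          _ = x ^ (1 - α) * x ^ α := Real.rpow_add' hx.1 (by rw [sub_add_cancel]; norm_num)
          _ ≤ s ^ (1 - α) * x ^ α :=
              mul_le_mul_of_nonneg_right (Real.rpow_le_rpow hx.1 hx.2 (by linarith))
                (Real.rpow_nonneg hx.1 α)
        calc x * f x ≤ (s ^ (1 - α) * x ^ α) * f x :=
              mul_le_mul_of_nonneg_right hkey (hfnn x)
        _ = s ^ (1 - α) * (x ^ α * f x) := by ring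
      rw [intervalIntegral.integral_const_mul] at step
      exact step.trans (mul_le_mul_of_nonneg_left (hHpart 0 s le_rfl hsnn hs1) hs1α)
    have p2 : s * F s ≤ s ^ (1 - α) * Hα := by
      have step : (∫ x in s..(1:ℝ), s * f x)
          ≤ ∫ x in s..(1:ℝ), s ^ (1 - α) * (x ^ α * f x) := by
        apply integral_mono_on hs1 ((continuous_const.mul hfc).intervalIntegrable _ _)
          ((continuous_const.mul hpafc).intervalIntegrable _ _)
        intro x hx
        have hkey : s ≤ s ^ (1 - α) * x ^ α := by
          calc s = s ^ ((1 - α) + α) := by rw [sub_add_cancel, Real.rpow_one]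
          _ = s ^ (1 - α) * s ^ α := Real.rpow_add' hsnn (by rw [sub_add_cancel]; norm_num)
          _ ≤ s ^ (1 - α) * x ^ α :=
              mul_le_mul_of_nonneg_left (Real.rpow_le_rpow hsnn hx.1 hα0) hs1α
        calc s * f x ≤ (s ^ (1 - α) * x ^ α) * f x :=
              mul_le_mul_of_nonneg_right hkey (hfnn x)
        _ = s ^ (1 - α) * (x ^ α * f x) := by ring
      calc s * F s = ∫ x in s..(1:ℝ), s * f x := by rw [hFeq, intervalIntegral.integral_const_mul]
      _ ≤ ∫ x in s..(1:ℝ), s ^ (1 - α) * (x ^ α * f x) := step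
      _ = s ^ (1 - α) * ∫ x in s..(1:ℝ), x ^ α * f x := intervalIntegral.integral_const_mul _ _
      _ ≤ s ^ (1 - α) * Hα := mul_le_mul_of_nonneg_left (hHpart s 1 hsnn hs1 le_rfl) hs1α
    rw [hwdef]
    simp only []
    rw [hLR]
    linarith
  have hτb : ∀ x ∈ Icc (0:ℝ) 1, |τ x| ≤ |c| * x + 2 * (x ^ (1 - α) * Hα) :=
    fun x hx => (habsw x hx).trans (hwB x hx)
  have hHpart1 : ∀ s ∈ Icc (0:ℝ) 1, (∫ x in s..1, x ^ α * |h x|) ≤ Hα := by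
    intro s hs
    have e : (∫ x in s..(1:ℝ), x ^ α * |h x|) = ∫ x in s..(1:ℝ), x ^ α * f x := by
      apply integral_congr
      intro x hx
      rw [uIcc_of_le hs.2] at hx
      simp only []
      rw [hfeq x ⟨le_trans hs.1 hx.1, hx.2⟩]
    rw [e]
    exact hHpart s 1 hs.1 hs.2 le_rfl
  -- the final estimates
  intro s hs
  rw [← hHeq]
  have hsa : (0:ℝ) ≤ s ^ α := Real.rpow_nonneg hs.1 α
  have hs1α : (0:ℝ) ≤ s ^ (1 - α) := Real.rpow_nonneg hs.1 _
  constructor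
  · have h1 := hτb s hs
    nlinarith [mul_nonneg (abs_nonneg c) hs.1, mul_nonneg hs1α hHnn, sq_nonneg M,
      mul_nonneg (mul_nonneg (abs_nonneg c) hs.1) (sq_nonneg M),
      mul_nonneg (mul_nonneg hs1α hHnn) (sq_nonneg M)]
  · -- derivative estimate
    have hsub : Icc s 1 ⊆ Icc (0:ℝ) 1 := Icc_subset_Icc hs.1 le_rfl
    have hKcont : ContinuousOn (fun x => a x * τ x - h x) (Icc s 1) :=
      ((hacont.mono hsub).mul (hτc.mono hsub)).sub (hhcont.mono hsub)
    have hKint : IntervalIntegrable (fun x => a x * τ x - h x) volume s 1 := by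
      apply ContinuousOn.intervalIntegrable; rwa [uIcc_of_le hs.2]
    set K := ∫ x in s..1, (a x * τ x - h x) with hKdef
    have hI1 : τ' s = c - K := by
      have hftc := integral_eq_sub_of_hasDeriv_right_of_le hs.2
        (hτ'c.mono hsub)
        (fun x hx => ((hτ'd x ⟨le_trans hs.1 hx.1.le, hx.2.le⟩).hasDerivAt
          (Icc_mem_nhds (lt_of_le_of_lt hs.1 hx.1) hx.2)).hasDerivWithinAt)
        hKint
      rw [hτ'1] at hftc
      rw [hKdef, hftc]; ring
    have hKabs : |K| ≤ ∫ x in s..1, |a x * τ x - h x| := abs_integral_le_integral_abs hs.2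
    have habsint : IntervalIntegrable (fun x => |a x * τ x - h x|) volume s 1 := by
      apply ContinuousOn.intervalIntegrable; rw [uIcc_of_le hs.2]; exact hKcont.abs
    have hQint : IntervalIntegrable
        (fun x => (|c| * s ^ α + 2 * Hα) * (x * a x) + x ^ α * |h x|) volume s 1 := by
      apply IntervalIntegrable.add ((haC s hs).const_mul _)
      apply ContinuousOn.intervalIntegrable
      rw [uIcc_of_le hs.2]
      exact (hpowc.continuousOn.mul (hhcont.mono hsub).abs)
    have hmono : (∫ x in s..1, s ^ α * |a x * τ x - h x|)
        ≤ ∫ x in s..1, ((|c| * s ^ α + 2 * Hα) * (x * a x) + x ^ α * |h x|) := by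
      apply integral_mono_on hs.2 (habsint.const_mul _) hQint
      intro x hx
      have hx01 : x ∈ Icc (0:ℝ) 1 := hsub hx
      have hax : 0 ≤ a x := hann x hx01
      have habs : |a x * τ x - h x| ≤ a x * |τ x| + |h x| := by
        calc |a x * τ x - h x| ≤ |a x * τ x| + |h x| := abs_sub _ _
        _ = a x * |τ x| + |h x| := by rw [abs_mul, abs_of_nonneg hax]
      have hτbx := hτb x hx01
      have hsx : s ^ α ≤ x ^ α := Real.rpow_le_rpow hs.1 hx.1 hα0
      have hx1a : (0:ℝ) ≤ x ^ (1 - α) := Real.rpow_nonneg hx01.1 _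
      have hxx : x ^ α * x ^ (1 - α) = x := by
        rw [← Real.rpow_add' hx01.1 (by norm_num)]
        rw [show α + (1 - α) = 1 by ring, Real.rpow_one]
      calc s ^ α * |a x * τ x - h x| ≤ s ^ α * (a x * |τ x| + |h x|) :=
            mul_le_mul_of_nonneg_left habs hsa
      _ = s ^ α * (a x * |τ x|) + s ^ α * |h x| := by ring
      _ ≤ s ^ α * (a x * (|c| * x + 2 * (x ^ (1 - α) * Hα))) + x ^ α * |h x| :=
          add_le_add
            (mul_le_mul_of_nonneg_left (mul_le_mul_of_nonneg_left hτbx hax) hsa)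
            (mul_le_mul_of_nonneg_right hsx (abs_nonneg _))
      _ = |c| * s ^ α * (x * a x) + (s ^ α * x ^ (1 - α)) * (2 * Hα * a x) + x ^ α * |h x| := by
          ring
      _ ≤ |c| * s ^ α * (x * a x) + (x ^ α * x ^ (1 - α)) * (2 * Hα * a x) + x ^ α * |h x| := by
          have h1 : s ^ α * x ^ (1 - α) ≤ x ^ α * x ^ (1 - α) :=
            mul_le_mul_of_nonneg_right hsx hx1a
          have h2 : (0:ℝ) ≤ 2 * Hα * a x := mul_nonneg (by linarith) hax
          nlinarith [mul_le_mul_of_nonneg_right h1 h2]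
      _ = (|c| * s ^ α + 2 * Hα) * (x * a x) + x ^ α * |h x| := by rw [hxx]; ring
    have hsplit : (∫ x in s..1, ((|c| * s ^ α + 2 * Hα) * (x * a x) + x ^ α * |h x|))
        = (|c| * s ^ α + 2 * Hα) * (∫ x in s..1, x * a x) + ∫ x in s..1, x ^ α * |h x| := by
      rw [integral_add ((haC s hs).const_mul _) (by
        apply ContinuousOn.intervalIntegrable
        rw [uIcc_of_le hs.2]
        exact (hpowc.continuousOn.mul (hhcont.mono hsub).abs)), intervalIntegral.integral_const_mul]
    have hcoeff : (0:ℝ) ≤ |c| * s ^ α + 2 * Hα := by positivity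
    have hfin1 : (|c| * s ^ α + 2 * Hα) * (∫ x in s..1, x * a x)
        ≤ (|c| * s ^ α + 2 * Hα) * M ^ 2 :=
      mul_le_mul_of_nonneg_left (haM' s hs) hcoeff
    have hfin2 := hHpart1 s hs
    have hKbound : s ^ α * |K| ≤ (|c| * s ^ α + 2 * Hα) * M ^ 2 + Hα := by
      have e : s ^ α * (∫ x in s..1, |a x * τ x - h x|)
          = ∫ x in s..1, s ^ α * |a x * τ x - h x| := (intervalIntegral.integral_const_mul _ _).symm
      have hmul := mul_le_mul_of_nonneg_left hKabs hsa
      rw [e] at hmul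
      calc s ^ α * |K| ≤ ∫ x in s..1, s ^ α * |a x * τ x - h x| := hmul
      _ ≤ _ := hmono
      _ = _ := hsplit
      _ ≤ (|c| * s ^ α + 2 * Hα) * M ^ 2 + Hα := add_le_add hfin1 hfin2
    have habs2 : |τ' s| ≤ |c| + |K| := by
      rw [hI1]; exact abs_sub _ _
    have hmain : s ^ α * |τ' s| ≤ |c| * s ^ α + ((|c| * s ^ α + 2 * Hα) * M ^ 2 + Hα) := by
      calc s ^ α * |τ' s| ≤ s ^ α * (|c| + |K|) := mul_le_mul_of_nonneg_left habs2 hsa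
      _ = |c| * s ^ α + s ^ α * |K| := by ring
      _ ≤ _ := by linarith
    nlinarith [mul_nonneg (abs_nonneg c) hsa, sq_nonneg M,
      mul_nonneg (mul_nonneg (abs_nonneg c) hsa) (sq_nonneg M),
      mul_nonneg hHnn (sq_nonneg M)]
end

section
/- Let a ∈ C([0,1]) be nonnegative with ∫₀¹ σ a(σ)dσ ≤ M². Then there is C = C(M) such that for any p ∈ [1,∞], α ≥ 0 with α + 1/p ≤ 1, any h ∈ C([0,1]) and c ∈ ℝ, the solution τ of -τ''+aτ=h, τ(0)=0, τ'(1)=c satisfies ‖s^α τ'‖_{L^p(0,1)} ≤ C(|c| + ∫₀¹ s^{α+1/p}|h(s)|ds). -/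
open MeasureTheory ENNReal
open Set intervalIntegral

namespace Stmt14

lemma ii {f : ℝ → ℝ} (hf : ContinuousOn f (Icc 0 1)) {u v : ℝ} (h0 : 0 ≤ u) (huv : u ≤ v)
    (h1 : v ≤ 1) : IntervalIntegrable f volume u v :=
  (hf.mono (Icc_subset_Icc h0 h1)).intervalIntegrable_of_Icc huv

lemma tail_deriv {g : ℝ → ℝ} (hg : ContinuousOn g (Icc 0 1)) :
    ∀ s ∈ Icc (0:ℝ) 1,
      HasDerivWithinAt (fun u => ∫ t in u..(1:ℝ), g t) (-g s) (Icc 0 1) s := by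
  intro s hs
  haveI : Fact (s ∈ Icc (0:ℝ) 1) := ⟨hs⟩
  have hmeas : StronglyMeasurableAtFilter g (nhdsWithin s (Icc (0:ℝ) 1)) volume :=
    ⟨Icc 0 1, self_mem_nhdsWithin, hg.aestronglyMeasurable measurableSet_Icc⟩
  exact intervalIntegral.integral_hasDerivWithinAt_left (ii hg hs.1 hs.2 le_rfl) hmeas (hg s hs)

lemma head_deriv {g : ℝ → ℝ} (hg : ContinuousOn g (Icc 0 1)) :
    ∀ s ∈ Icc (0:ℝ) 1,
      HasDerivWithinAt (fun u => ∫ t in (0:ℝ)..u, g t) (g s) (Icc 0 1) s := by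
  intro s hs
  haveI : Fact (s ∈ Icc (0:ℝ) 1) := ⟨hs⟩
  have hmeas : StronglyMeasurableAtFilter g (nhdsWithin s (Icc (0:ℝ) 1)) volume :=
    ⟨Icc 0 1, self_mem_nhdsWithin, hg.aestronglyMeasurable measurableSet_Icc⟩
  exact intervalIntegral.integral_hasDerivWithinAt_right (ii hg le_rfl hs.1 hs.2) hmeas (hg s hs)

lemma aux6 {q : ℝ} (hq : 1 ≤ q) : (1 + q) ^ q⁻¹ ≤ 6 := by
  have hq0 : 0 < q := by linarith
  have step1 : (1 + q) ^ q⁻¹ ≤ (2 * q) ^ q⁻¹ :=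
    Real.rpow_le_rpow (by linarith) (by linarith) (by positivity)
  have step2 : (2 * q) ^ q⁻¹ = 2 ^ q⁻¹ * q ^ q⁻¹ := Real.mul_rpow (by norm_num) hq0.le
  have h2 : (2:ℝ) ^ q⁻¹ ≤ 2 := by
    calc (2:ℝ) ^ q⁻¹ ≤ 2 ^ (1:ℝ) :=
          Real.rpow_le_rpow_of_exponent_le one_le_two (inv_le_one_of_one_le₀ hq)
      _ = 2 := Real.rpow_one 2
  have h3 : q ^ q⁻¹ ≤ 3 := by
    rw [Real.rpow_def_of_pos hq0]
    have hl : Real.log q ≤ q := (Real.log_le_sub_one_of_pos hq0).trans (by linarith)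
    have hle : Real.log q * q⁻¹ ≤ 1 := by
      have := mul_le_mul_of_nonneg_right hl (inv_nonneg.mpr hq0.le)
      rwa [mul_inv_cancel₀ hq0.ne'] at this
    calc Real.exp (Real.log q * q⁻¹) ≤ Real.exp 1 := Real.exp_le_exp.mpr hle
      _ ≤ 3 := by have := Real.exp_one_lt_d9; linarith
  have h0 : (0:ℝ) ≤ q ^ q⁻¹ := Real.rpow_nonneg hq0.le _
  calc (1 + q) ^ q⁻¹ ≤ 2 ^ q⁻¹ * q ^ q⁻¹ := by rw [← step2]; exact step1
    _ ≤ 2 * 3 := mul_le_mul h2 h3 h0 (by norm_num)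
    _ = 6 := by norm_num

lemma mp {a f w w' : ℝ → ℝ}
    (ha : ∀ s ∈ Icc (0:ℝ) 1, 0 ≤ a s)
    (hf : ∀ s ∈ Icc (0:ℝ) 1, 0 ≤ f s)
    (hw : ∀ s ∈ Icc (0:ℝ) 1, HasDerivWithinAt w (w' s) (Icc 0 1) s)
    (hw' : ∀ s ∈ Icc (0:ℝ) 1, HasDerivWithinAt w' (a s * w s - f s) (Icc 0 1) s)
    (h0 : w 0 = 0) (h1 : 0 ≤ w' 1) :
    ∀ s ∈ Icc (0:ℝ) 1, 0 ≤ w s := by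
  have key : ∀ ε > (0:ℝ), ∀ u ∈ Icc (0:ℝ) 1, 0 ≤ w u + ε * (3 * u - u ^ 2) := by
    intro ε hε
    set v : ℝ → ℝ := fun u => w u + ε * (3 * u - u ^ 2) with hvdef
    set v' : ℝ → ℝ := fun u => w' u + ε * (3 - 2 * u) with hvdef'
    have hv : ∀ u ∈ Icc (0:ℝ) 1, HasDerivWithinAt v (v' u) (Icc 0 1) u := by
      intro u hu
      have hpoly : HasDerivWithinAt (fun x : ℝ => 3 * x - x ^ 2) (3 - 2 * u) (Icc 0 1) u := by
        have h1 : HasDerivWithinAt (fun x : ℝ => 3 * x) 3 (Icc 0 1) u := by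
          simpa using (hasDerivWithinAt_id u (Icc (0:ℝ) 1)).const_mul (3:ℝ)
        have h2 : HasDerivWithinAt (fun x : ℝ => x ^ 2) (2 * u) (Icc 0 1) u := by
          simpa using (hasDerivWithinAt_pow 2 u : HasDerivWithinAt (fun x : ℝ => x ^ 2) _ (Icc (0:ℝ) 1) u)
        exact h1.sub h2
      exact (hw u hu).add (hpoly.const_mul ε)
    have hvc : ContinuousOn v (Icc 0 1) := fun u hu => (hv u hu).continuousWithinAt
    obtain ⟨s₀, hs₀, hmin⟩ :=
      isCompact_Icc.exists_isMinOn (nonempty_Icc.mpr zero_le_one) hvc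
    suffices hv0 : 0 ≤ v s₀ by
      intro u hu; exact le_trans hv0 (hmin hu)
    by_contra hneg
    push_neg at hneg
    have hs00 : s₀ ≠ 0 := by
      intro h
      rw [h] at hneg
      simp [hvdef, h0] at hneg
    rcases eq_or_lt_of_le hs₀.2 with h1' | hlt
    · -- s₀ = 1
      have hd : HasDerivWithinAt v (v' 1) (Icc 0 1) 1 := hv 1 (by norm_num)
      have hpos : 0 < v' 1 := by
        have : v' 1 = w' 1 + ε * 1 := by simp [hvdef']; ring
        rw [this]; linarith
      have hslope := hasDerivWithinAt_iff_tendsto_slope.mp hd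
      have hev : ∀ᶠ x in nhdsWithin 1 (Icc (0:ℝ) 1 \ {1}), 0 < slope v 1 x :=
        hslope.eventually (eventually_gt_nhds hpos)
      have hset : Icc (0:ℝ) 1 \ {1} = Ico (0:ℝ) 1 := by
        ext x
        simp only [mem_diff, mem_Icc, mem_singleton_iff, mem_Ico]
        constructor
        · rintro ⟨⟨hx0, hx1⟩, hne⟩; exact ⟨hx0, lt_of_le_of_ne hx1 hne⟩
        · rintro ⟨hx0, hx1⟩; exact ⟨⟨hx0, hx1.le⟩, ne_of_lt hx1⟩
      have hne : (nhdsWithin (1:ℝ) (Icc (0:ℝ) 1 \ {1})).NeBot := by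
        rw [hset]
        refine mem_closure_iff_nhdsWithin_neBot.mp ?_
        have : closure (Ico (0:ℝ) 1) = Icc 0 1 := closure_Ico (by norm_num)
        rw [this]
        exact right_mem_Icc.mpr zero_le_one
      obtain ⟨x, hx, hxmem⟩ := (hev.and (eventually_mem_nhdsWithin)).exists
      have hx1 : x < 1 := by rw [hset] at hxmem; exact hxmem.2
      have hxI : x ∈ Icc (0:ℝ) 1 := by rw [hset] at hxmem; exact ⟨hxmem.1, hx1.le⟩
      have hslope_val : slope v 1 x = (v x - v 1) / (x - 1) := by
        rw [slope_def_field]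
      rw [hslope_val] at hx
      have hden : x - 1 < 0 := by linarith
      have hlt0 : v x - v 1 < 0 := by
        by_contra hcon
        push_neg at hcon
        have : (v x - v 1) / (x - 1) ≤ 0 := div_nonpos_of_nonneg_of_nonpos hcon hden.le
        linarith
      have hge : v 1 ≤ v x := by rw [← h1']; exact hmin hxI
      linarith
    · -- 0 < s₀ < 1
      have hs0pos : 0 < s₀ := lt_of_le_of_ne hs₀.1 (Ne.symm hs00)
      have hmem : Icc (0:ℝ) 1 ∈ nhds s₀ := Icc_mem_nhds hs0pos hlt
      have hdv : HasDerivAt v (v' s₀) s₀ := (hv s₀ hs₀).hasDerivAt hmem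
      have hloc : IsLocalMin v s₀ := hmin.isLocalMin hmem
      have hzero : v' s₀ = 0 := hloc.hasDerivAt_eq_zero hdv
      have hdv' : HasDerivAt v' (a s₀ * w s₀ - f s₀ - 2 * ε) s₀ := by
        have hbase : HasDerivAt w' (a s₀ * w s₀ - f s₀) s₀ := (hw' s₀ hs₀).hasDerivAt hmem
        have hlin : HasDerivAt (fun u : ℝ => ε * (3 - 2 * u)) (ε * (-2)) s₀ := by
          have : HasDerivAt (fun u : ℝ => 3 - 2 * u) (-2) s₀ := by
            simpa using ((hasDerivAt_id s₀).const_mul (2:ℝ)).const_sub 3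
          simpa using this.const_mul ε
        have := hbase.add hlin
        convert this using 1
        · rfl
        · rfl
        · rfl
        ring
      have hDneg : a s₀ * w s₀ - f s₀ - 2 * ε < 0 := by
        have hws : w s₀ < 0 := by
          have hpoly : 0 ≤ ε * (3 * s₀ - s₀ ^ 2) := by
            have h' : 0 ≤ ε * (s₀ * (3 - s₀)) :=
              mul_nonneg hε.le (mul_nonneg hs₀.1 (by linarith [hs₀.2]))
            calc (0:ℝ) ≤ ε * (s₀ * (3 - s₀)) := h'
              _ = ε * (3 * s₀ - s₀ ^ 2) := by ring
          have : v s₀ = w s₀ + ε * (3 * s₀ - s₀ ^ 2) := rfl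
          linarith
        have haw : a s₀ * w s₀ ≤ 0 := mul_nonpos_of_nonneg_of_nonpos (ha s₀ hs₀) hws.le
        have := hf s₀ hs₀
        linarith
      have hslope := hasDerivAt_iff_tendsto_slope.mp hdv'
      have hev : ∀ᶠ x in nhdsWithin s₀ {s₀}ᶜ, slope v' s₀ x < 0 :=
        hslope.eventually (eventually_lt_nhds hDneg)
      rw [eventually_nhdsWithin_iff, Metric.eventually_nhds_iff] at hev
      obtain ⟨δ, hδ0, hδ⟩ := hev
      set r : ℝ := max (s₀ - δ / 2) (s₀ / 2) with hrdef
      have hr0 : 0 < r := lt_of_lt_of_le (by positivity) (le_max_right _ _)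
      have hrs : r < s₀ := by
        apply max_lt <;> linarith
      have hrd : s₀ - r < δ := by
        have : s₀ - δ / 2 ≤ r := le_max_left _ _
        linarith
      have hpos : ∀ x ∈ Ioo r s₀, 0 < v' x := by
        intro x hx
        have hxd : dist x s₀ < δ := by
          rw [Real.dist_eq, abs_of_nonpos (by linarith [hx.2] : x - s₀ ≤ 0)]
          linarith [hx.1]
        have hxne : x ∈ ({s₀}ᶜ : Set ℝ) := by
          simp only [mem_compl_iff, mem_singleton_iff]
          exact ne_of_lt hx.2
        have hsl := hδ hxd hxne
        rw [slope_def_field, hzero] at hsl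
        have hden : x - s₀ < 0 := by linarith [hx.2]
        have hsl' : (v' x - 0) / (x - s₀) < 0 := by simpa using hsl
        rcases div_neg_iff.mp hsl' with ⟨h1, h2⟩ | ⟨h1, h2⟩
        · linarith
        · linarith
      have hsub : Icc r s₀ ⊆ Icc (0:ℝ) 1 := Icc_subset_Icc hr0.le hs₀.2
      have hcont : ContinuousOn v (Icc r s₀) := hvc.mono hsub
      have hmono : StrictMonoOn v (Icc r s₀) := by
        apply strictMonoOn_of_deriv_pos (convex_Icc r s₀) hcont
        intro x hx
        rw [interior_Icc] at hx
        have hxIcc : x ∈ Icc (0:ℝ) 1 := ⟨by linarith [hx.1, hr0], by linarith [hx.2, hlt]⟩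
        have hxmem : Icc (0:ℝ) 1 ∈ nhds x :=
          Icc_mem_nhds (by linarith [hx.1, hr0]) (by linarith [hx.2, hlt])
        rw [((hv x hxIcc).hasDerivAt hxmem).deriv]
        exact hpos x hx
      have : v r < v s₀ :=
        hmono (left_mem_Icc.mpr hrs.le) (right_mem_Icc.mpr hrs.le) hrs
      exact absurd (hmin (hsub (left_mem_Icc.mpr hrs.le))) (not_le.mpr this)
  intro s hs
  refine le_of_forall_pos_le_add ?_
  intro ε hε
  have h3 : 0 < ε / 3 := by linarith
  have hk := key (ε / 3) h3 s hs
  have hb : (0:ℝ) ≤ 3 - 3 * s + s ^ 2 := by nlinarith [hs.1, hs.2]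
  have := mul_nonneg h3.le hb
  nlinarith [hk, this]


/-- Hardy-type inequality via integration by parts. -/
lemma hardy {g : ℝ → ℝ} (hg : ContinuousOn g (Icc 0 1)) (hg0 : ∀ s ∈ Icc (0:ℝ) 1, 0 ≤ g s)
    {c0 α q : ℝ} (hc0 : 0 ≤ c0) (hα : 0 ≤ α) (hq : 1 ≤ q) :
    ∫ s in (0:ℝ)..1, (s ^ α * (c0 + ∫ t in s..(1:ℝ), g t)) ^ q
      ≤ (1 + q) * (c0 + ∫ t in (0:ℝ)..1, t ^ (α + q⁻¹) * g t) ^ q := by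
  have hq0 : 0 < q := lt_of_lt_of_le one_pos hq
  set β : ℝ := α + q⁻¹ with hβdef
  have hβ0 : 0 < β := by positivity
  set G : ℝ → ℝ := fun s => c0 + ∫ t in s..(1:ℝ), g t with hGdef
  have hGd : ∀ s ∈ Icc (0:ℝ) 1, HasDerivWithinAt G (-g s) (Icc 0 1) s := fun s hs =>
    (tail_deriv hg s hs).const_add c0
  have hGc : ContinuousOn G (Icc 0 1) := fun s hs => (hGd s hs).continuousWithinAt
  have hG0 : ∀ s ∈ Icc (0:ℝ) 1, 0 ≤ G s := by
    intro s hs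
    have : 0 ≤ ∫ t in s..(1:ℝ), g t :=
      intervalIntegral.integral_nonneg hs.2 (fun t ht => hg0 t ⟨le_trans hs.1 ht.1, ht.2⟩)
    simpa [hGdef] using add_nonneg hc0 this
  -- the weighted integral of g
  have hφc : ContinuousOn (fun t : ℝ => t ^ β * g t) (Icc 0 1) :=
    ((Real.continuous_rpow_const hβ0.le).continuousOn).mul hg
  set I : ℝ := ∫ t in (0:ℝ)..1, t ^ β * g t with hIdef
  have hI0 : 0 ≤ I :=
    intervalIntegral.integral_nonneg zero_le_one
      (fun t ht => mul_nonneg (Real.rpow_nonneg ht.1 β) (hg0 t ht))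
  set B : ℝ := c0 + I with hBdef
  have hB0 : 0 ≤ B := add_nonneg hc0 hI0
  -- the sup bound N
  have hN : ∀ s ∈ Icc (0:ℝ) 1, s ^ β * G s ≤ B := by
    intro s hs
    have hs1 : s ^ β ≤ 1 := Real.rpow_le_one hs.1 hs.2 hβ0.le
    have hsnn : 0 ≤ s ^ β := Real.rpow_nonneg hs.1 β
    have t1 : s ^ β * c0 ≤ c0 := by nlinarith
    have t2 : s ^ β * ∫ t in s..(1:ℝ), g t = ∫ t in s..(1:ℝ), s ^ β * g t :=
      (intervalIntegral.integral_const_mul _ _).symm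
    have t3 : ∫ t in s..(1:ℝ), s ^ β * g t ≤ ∫ t in s..(1:ℝ), t ^ β * g t := by
      apply intervalIntegral.integral_mono_on hs.2
      · exact ii (continuousOn_const.mul hg) hs.1 hs.2 le_rfl
      · exact ii hφc hs.1 hs.2 le_rfl
      · intro t ht
        have htI : t ∈ Icc (0:ℝ) 1 := ⟨le_trans hs.1 ht.1, ht.2⟩
        exact mul_le_mul_of_nonneg_right
          (Real.rpow_le_rpow hs.1 ht.1 hβ0.le) (hg0 t htI)
    have t4 : ∫ t in s..(1:ℝ), t ^ β * g t ≤ I := by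
      have hsplit : (∫ t in (0:ℝ)..s, t ^ β * g t) + ∫ t in s..(1:ℝ), t ^ β * g t = I :=
        intervalIntegral.integral_add_adjacent_intervals
          (ii hφc le_rfl hs.1 hs.2) (ii hφc hs.1 hs.2 le_rfl)
      have hfirst : 0 ≤ ∫ t in (0:ℝ)..s, t ^ β * g t :=
        intervalIntegral.integral_nonneg hs.1
          (fun t ht => mul_nonneg (Real.rpow_nonneg ht.1 β)
            (hg0 t ⟨ht.1, le_trans ht.2 hs.2⟩))
      linarith
    calc s ^ β * G s = s ^ β * c0 + s ^ β * ∫ t in s..(1:ℝ), g t := by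
          simp [hGdef]; ring
      _ ≤ c0 + ∫ t in s..(1:ℝ), t ^ β * g t := by rw [t2]; linarith
      _ ≤ c0 + I := by linarith
  -- integration by parts
  set e : ℝ := α * q + 1 with hedef
  have he1 : 1 ≤ e := by nlinarith
  have he0 : 0 < e := lt_of_lt_of_le one_pos he1
  have heβ : β * q = e := by
    rw [hβdef, hedef, add_mul, inv_mul_cancel₀ hq0.ne']
  set U : ℝ → ℝ := fun s => s ^ e * G s ^ q with hUdef
  set U' : ℝ → ℝ := fun s => e * s ^ (e - 1) * G s ^ q + s ^ e * (-g s * q * G s ^ (q - 1))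
    with hU'def
  have hU' : ∀ x ∈ Ioo (0:ℝ) 1, HasDerivAt U (U' x) x := by
    intro x hx
    have hx0 : x ≠ 0 := ne_of_gt hx.1
    have hxI : x ∈ Icc (0:ℝ) 1 := ⟨hx.1.le, hx.2.le⟩
    have hGx : HasDerivAt G (-g x) x :=
      (hGd x hxI).hasDerivAt (Icc_mem_nhds hx.1 hx.2)
    have h1 : HasDerivAt (fun s : ℝ => s ^ e) (e * x ^ (e - 1)) x :=
      Real.hasDerivAt_rpow_const (Or.inl hx0)
    have h2 : HasDerivAt (fun s : ℝ => G s ^ q) (-g x * q * G x ^ (q - 1)) x :=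
      hGx.rpow_const (Or.inr hq)
    exact h1.mul h2
  have hUc : ContinuousOn U (Icc 0 1) :=
    ((Real.continuous_rpow_const he0.le).continuousOn).mul
      (hGc.rpow_const (fun s hs => Or.inr hq0.le))
  have he10 : 0 ≤ e - 1 := by linarith
  have hU'c : ContinuousOn U' (Icc 0 1) := by
    apply ContinuousOn.add
    · exact (continuousOn_const.mul
        ((Real.continuous_rpow_const he10).continuousOn)).mul
        (hGc.rpow_const (fun s hs => Or.inr hq0.le))
    · exact ((Real.continuous_rpow_const he0.le).continuousOn).mul
        (((hg.neg.mul continuousOn_const)).mul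
          (hGc.rpow_const (fun s hs => Or.inr (by linarith))))
  have hU'int : IntervalIntegrable U' volume 0 1 := ii hU'c le_rfl zero_le_one le_rfl
  have hftc : ∫ s in (0:ℝ)..1, U' s = U 1 - U 0 :=
    intervalIntegral.integral_eq_sub_of_hasDeriv_right_of_le zero_le_one hUc
      (fun x hx => (hU' x hx).hasDerivWithinAt) hU'int
  have hU1 : U 1 = c0 ^ q := by
    simp [hUdef, hGdef, Real.one_rpow, intervalIntegral.integral_same]
  have hU0 : U 0 = 0 := by
    simp [hUdef, Real.zero_rpow (ne_of_gt he0)]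
  -- split the FTC identity
  set J : ℝ := ∫ s in (0:ℝ)..1, s ^ (e - 1) * G s ^ q with hJdef
  set Jq : ℝ := ∫ s in (0:ℝ)..1, s ^ e * (G s ^ (q - 1) * g s) with hJqdef
  have hJc : ContinuousOn (fun s : ℝ => s ^ (e - 1) * G s ^ q) (Icc 0 1) :=
    ((Real.continuous_rpow_const he10).continuousOn).mul
      (hGc.rpow_const (fun s hs => Or.inr hq0.le))
  have hJqc : ContinuousOn (fun s : ℝ => s ^ e * (G s ^ (q - 1) * g s)) (Icc 0 1) :=
    ((Real.continuous_rpow_const he0.le).continuousOn).mul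
      ((hGc.rpow_const (fun s hs => Or.inr (by linarith))).mul hg)
  have hsplit : ∫ s in (0:ℝ)..1, U' s = e * J - q * Jq := by
    have : ∀ s : ℝ, U' s = e * (s ^ (e - 1) * G s ^ q) - q * (s ^ e * (G s ^ (q - 1) * g s)) := by
      intro s; simp only [hU'def]; ring
    rw [intervalIntegral.integral_congr (fun s _ => this s)]
    rw [intervalIntegral.integral_sub
      ((ii hJc le_rfl zero_le_one le_rfl).const_mul e)
      ((ii hJqc le_rfl zero_le_one le_rfl).const_mul q),
      intervalIntegral.integral_const_mul, intervalIntegral.integral_const_mul]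
  have hkey : e * J - q * Jq = c0 ^ q := by rw [← hsplit, hftc, hU1, hU0]; ring
  -- bound Jq
  have hJq_bd : Jq ≤ B ^ (q - 1) * I := by
    have hmono : ∀ s ∈ Icc (0:ℝ) 1,
        s ^ e * (G s ^ (q - 1) * g s) ≤ B ^ (q - 1) * (s ^ β * g s) := by
      intro s hs
      have hsnn : (0:ℝ) ≤ s := hs.1
      have hGnn := hG0 s hs
      have hpow : (s ^ β) ^ (q - 1) * s ^ β = s ^ e := by
        rw [← Real.rpow_mul hsnn]
        rw [← Real.rpow_add' hsnn
          (by rw [show β * (q - 1) + β = β * q by ring, heβ]; exact ne_of_gt he0)]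
        rw [show β * (q - 1) + β = β * q by ring, heβ]
      have hfact : s ^ e * G s ^ (q - 1) = (s ^ β * G s) ^ (q - 1) * s ^ β := by
        rw [Real.mul_rpow (Real.rpow_nonneg hsnn β) hGnn, ← hpow]
        ring
      have hb : (s ^ β * G s) ^ (q - 1) ≤ B ^ (q - 1) :=
        Real.rpow_le_rpow (mul_nonneg (Real.rpow_nonneg hsnn β) hGnn) (hN s hs) (by linarith)
      calc s ^ e * (G s ^ (q - 1) * g s) = ((s ^ β * G s) ^ (q - 1) * s ^ β) * g s := by
            rw [← hfact]; ring
        _ ≤ (B ^ (q - 1) * s ^ β) * g s := by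
            apply mul_le_mul_of_nonneg_right _ (hg0 s hs)
            exact mul_le_mul_of_nonneg_right hb (Real.rpow_nonneg hsnn β)
        _ = B ^ (q - 1) * (s ^ β * g s) := by ring
    have := intervalIntegral.integral_mono_on zero_le_one
      (ii hJqc le_rfl zero_le_one le_rfl)
      ((ii hφc le_rfl zero_le_one le_rfl).const_mul _) hmono
    rwa [intervalIntegral.integral_const_mul] at this
  -- conclude
  have hJ_eq : ∫ s in (0:ℝ)..1, (s ^ α * G s) ^ q = J := by
    apply intervalIntegral.integral_congr
    intro s hs
    rw [uIcc_of_le zero_le_one] at hs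
    have hsnn : (0:ℝ) ≤ s := hs.1
    show (s ^ α * G s) ^ q = s ^ (e - 1) * G s ^ q
    rw [Real.mul_rpow (Real.rpow_nonneg hsnn α) (hG0 s hs), ← Real.rpow_mul hsnn]
    rw [show α * q = e - 1 by rw [hedef]; ring]
  have hJq0 : 0 ≤ Jq :=
    intervalIntegral.integral_nonneg zero_le_one (fun s hs =>
      mul_nonneg (Real.rpow_nonneg hs.1 e)
        (mul_nonneg (Real.rpow_nonneg (hG0 s hs) _) (hg0 s hs)))
  have hc0q : c0 ^ q ≤ B ^ q := Real.rpow_le_rpow hc0 (by linarith) hq0.le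
  have hBq : B ^ (q - 1) * I ≤ B ^ q := by
    have : B ^ (q - 1) * I ≤ B ^ (q - 1) * B :=
      mul_le_mul_of_nonneg_left (by linarith) (Real.rpow_nonneg hB0 _)
    calc B ^ (q - 1) * I ≤ B ^ (q - 1) * B := this
      _ = B ^ (q - 1) * B ^ (1:ℝ) := by rw [Real.rpow_one]
      _ = B ^ q := by
          rw [← Real.rpow_add' hB0 (by simpa using hq0.ne')]
          norm_num
  have hJval : J = (c0 ^ q + q * Jq) / e := by field_simp [ne_of_gt he0]; linarith [hkey]
  have hnum : 0 ≤ c0 ^ q + q * Jq := by positivity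
  have hJle : J ≤ c0 ^ q + q * Jq := by
    rw [hJval]
    exact div_le_self hnum he1
  rw [hJ_eq]
  calc J ≤ c0 ^ q + q * Jq := hJle
    _ ≤ B ^ q + q * (B ^ (q - 1) * I) := by
        have := mul_le_mul_of_nonneg_left hJq_bd hq0.le
        linarith
    _ ≤ B ^ q + q * B ^ q := by
        have := mul_le_mul_of_nonneg_left hBq hq0.le
        linarith
    _ = (1 + q) * B ^ q := by ring


lemma nbd {g : ℝ → ℝ} (hg : ContinuousOn g (Icc 0 1)) (hg0 : ∀ s ∈ Icc (0:ℝ) 1, 0 ≤ g s)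
    {c0 β : ℝ} (hc0 : 0 ≤ c0) (hβ : 0 ≤ β) :
    ∀ s ∈ Icc (0:ℝ) 1,
      s ^ β * (c0 + ∫ t in s..(1:ℝ), g t) ≤ c0 + ∫ t in (0:ℝ)..1, t ^ β * g t := by
  have hφc : ContinuousOn (fun t : ℝ => t ^ β * g t) (Icc 0 1) :=
    ((Real.continuous_rpow_const hβ).continuousOn).mul hg
  intro s hs
  have hs1 : s ^ β ≤ 1 := Real.rpow_le_one hs.1 hs.2 hβ
  have hsnn : 0 ≤ s ^ β := Real.rpow_nonneg hs.1 β
  have t1 : s ^ β * c0 ≤ c0 := by nlinarith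
  have t2 : s ^ β * ∫ t in s..(1:ℝ), g t = ∫ t in s..(1:ℝ), s ^ β * g t :=
    (intervalIntegral.integral_const_mul _ _).symm
  have t3 : ∫ t in s..(1:ℝ), s ^ β * g t ≤ ∫ t in s..(1:ℝ), t ^ β * g t := by
    apply intervalIntegral.integral_mono_on hs.2
    · exact ii (continuousOn_const.mul hg) hs.1 hs.2 le_rfl
    · exact ii hφc hs.1 hs.2 le_rfl
    · intro t ht
      exact mul_le_mul_of_nonneg_right (Real.rpow_le_rpow hs.1 ht.1 hβ)
        (hg0 t ⟨le_trans hs.1 ht.1, ht.2⟩)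
  have t4 : ∫ t in s..(1:ℝ), t ^ β * g t ≤ ∫ t in (0:ℝ)..1, t ^ β * g t := by
    have hsplit : (∫ t in (0:ℝ)..s, t ^ β * g t) + ∫ t in s..(1:ℝ), t ^ β * g t
        = ∫ t in (0:ℝ)..1, t ^ β * g t :=
      intervalIntegral.integral_add_adjacent_intervals
        (ii hφc le_rfl hs.1 hs.2) (ii hφc hs.1 hs.2 le_rfl)
    have hfirst : 0 ≤ ∫ t in (0:ℝ)..s, t ^ β * g t :=
      intervalIntegral.integral_nonneg hs.1
        (fun t ht => mul_nonneg (Real.rpow_nonneg ht.1 β)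
          (hg0 t ⟨ht.1, le_trans ht.2 hs.2⟩))
    linarith
  calc s ^ β * (c0 + ∫ t in s..(1:ℝ), g t)
      = s ^ β * c0 + s ^ β * ∫ t in s..(1:ℝ), g t := by ring
    _ ≤ c0 + ∫ t in s..(1:ℝ), t ^ β * g t := by rw [t2]; linarith
    _ ≤ c0 + ∫ t in (0:ℝ)..1, t ^ β * g t := by linarith

end Stmt14


open Stmt14 in
/-- Sharp weighted `L^p` estimate for `τ'`, the derivative of the solution of the BVP
`-τ'' + a τ = h`, `τ(0)=0`, `τ'(1)=c`: for `∫₀¹ σ a ≤ M²` there is `C = C(M)` such that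
`‖s^α τ'‖_{L^p} ≤ C(|c| + ∫₀¹ s^{α+1/p}|h|)` whenever `p ∈ [1,∞]`, `α ≥ 0`, `α + 1/p ≤ 1`. -/
theorem stmt_14 (M : ℝ) (hM : 0 < M) :
    ∃ C > (0:ℝ), ∀ (a h : ℝ → ℝ) (c α : ℝ) (p : ℝ≥0∞),
      ContinuousOn a (Set.Icc 0 1) →
      (∀ s ∈ Set.Icc (0:ℝ) 1, 0 ≤ a s) →
      (∫ σ in (0:ℝ)..1, σ * a σ) ≤ M ^ 2 →
      ContinuousOn h (Set.Icc 0 1) →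
      1 ≤ p → 0 ≤ α → α + (1 / p).toReal ≤ 1 →
      ∀ τ τ' : ℝ → ℝ,
        (∀ s ∈ Set.Icc (0:ℝ) 1, HasDerivWithinAt τ (τ' s) (Set.Icc 0 1) s) →
        (∀ s ∈ Set.Icc (0:ℝ) 1, HasDerivWithinAt τ' (a s * τ s - h s) (Set.Icc 0 1) s) →
        τ 0 = 0 → τ' 1 = c →
        eLpNorm (fun s => s ^ α * τ' s) p (volume.restrict (Set.Ioc (0:ℝ) 1))
          ≤ ENNReal.ofReal
              (C * (|c| + ∫ s in (0:ℝ)..1, s ^ (α + (1 / p).toReal) * |h s|)) := by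
  classical
  refine ⟨6 * (1 + M ^ 2), by positivity, ?_⟩
  intro a h c α p ha hapos haM hh hp1 hα hαp τ τ' hd1 hd2 hτ0 hτ'1
  set β : ℝ := α + (1 / p).toReal with hβdef
  have hβ0 : 0 ≤ β := add_nonneg hα ENNReal.toReal_nonneg
  have hβ1 : β ≤ 1 := hαp
  have h1β : 0 ≤ 1 - β := by linarith
  -- basic continuity
  have habs : ContinuousOn (fun t : ℝ => |h t|) (Icc 0 1) := hh.abs
  have hτc : ContinuousOn τ (Icc 0 1) := fun s hs => (hd1 s hs).continuousWithinAt
  have hτ'c : ContinuousOn τ' (Icc 0 1) := fun s hs => (hd2 s hs).continuousWithinAt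
  set Ih : ℝ := ∫ s in (0:ℝ)..1, s ^ β * |h s| with hIhdef
  have hIhc : ContinuousOn (fun t : ℝ => t ^ β * |h t|) (Icc 0 1) :=
    ((Real.continuous_rpow_const hβ0).continuousOn).mul habs
  have hIh0 : 0 ≤ Ih :=
    intervalIntegral.integral_nonneg zero_le_one
      (fun t ht => mul_nonneg (Real.rpow_nonneg ht.1 β) (abs_nonneg _))
  set K : ℝ := |c| + Ih with hKdef
  have hK0 : 0 ≤ K := add_nonneg (abs_nonneg _) hIh0
  -- the comparison function χ
  set χ : ℝ → ℝ :=
    fun s => |c| * s + (∫ t in (0:ℝ)..s, t * |h t|) + s * ∫ t in s..(1:ℝ), |h t| with hχdef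
  set χd : ℝ → ℝ := fun s => |c| + ∫ t in s..(1:ℝ), |h t| with hχddef
  have hth : ContinuousOn (fun t : ℝ => t * |h t|) (Icc 0 1) :=
    (continuous_id.continuousOn).mul habs
  have htail := tail_deriv habs
  have hχd_deriv : ∀ s ∈ Icc (0:ℝ) 1, HasDerivWithinAt χd (-|h s|) (Icc 0 1) s :=
    fun s hs => (htail s hs).const_add _
  have hχ_deriv : ∀ s ∈ Icc (0:ℝ) 1, HasDerivWithinAt χ (χd s) (Icc 0 1) s := by
    intro s hs
    have h1 : HasDerivWithinAt (fun u : ℝ => |c| * u) |c| (Icc 0 1) s := by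
      simpa using (hasDerivWithinAt_id s (Icc (0:ℝ) 1)).const_mul |c|
    have h2 := head_deriv hth s hs
    have h3 : HasDerivWithinAt (fun u : ℝ => u * ∫ t in u..(1:ℝ), |h t|)
        (1 * (∫ t in s..(1:ℝ), |h t|) + s * -|h s|) (Icc 0 1) s :=
      (hasDerivWithinAt_id s (Icc (0:ℝ) 1)).mul (htail s hs)
    have := (h1.add h2).add h3
    convert this using 1
    · rfl
    · rfl
    · rfl
    simp only [hχddef]
    ring
  have hχc : ContinuousOn χ (Icc 0 1) := fun s hs => (hχ_deriv s hs).continuousWithinAt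
  have hχ0 : χ 0 = 0 := by simp [hχdef]
  have hχnn : ∀ s ∈ Icc (0:ℝ) 1, 0 ≤ χ s := by
    intro s hs
    have t1 : 0 ≤ |c| * s := mul_nonneg (abs_nonneg _) hs.1
    have t2 : 0 ≤ ∫ t in (0:ℝ)..s, t * |h t| :=
      intervalIntegral.integral_nonneg hs.1 (fun t ht => mul_nonneg ht.1 (abs_nonneg _))
    have t3 : 0 ≤ ∫ t in s..(1:ℝ), |h t| :=
      intervalIntegral.integral_nonneg hs.2 (fun t _ => abs_nonneg _)
    have := mul_nonneg hs.1 t3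
    simp only [hχdef]
    positivity
  -- |τ| ≤ χ by the maximum principle
  have hup : ∀ s ∈ Icc (0:ℝ) 1, 0 ≤ χ s - τ s := by
    apply mp (a := a) (f := fun s => a s * χ s + (|h s| - h s)) (w' := fun s => χd s - τ' s)
      hapos
    · intro s hs
      have := mul_nonneg (hapos s hs) (hχnn s hs)
      have := abs_nonneg (h s)
      have := le_abs_self (h s)
      linarith
    · exact fun s hs => (hχ_deriv s hs).sub (hd1 s hs)
    · intro s hs
      have := (hχd_deriv s hs).sub (hd2 s hs)
      convert this using 1
      · rfl
      · rfl
      · rfl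
      ring
    · rw [hχ0, hτ0]; ring
    · have : χd 1 = |c| := by simp [hχddef]
      rw [this, hτ'1]
      linarith [le_abs_self c]
  have hdn : ∀ s ∈ Icc (0:ℝ) 1, 0 ≤ χ s + τ s := by
    apply mp (a := a) (f := fun s => a s * χ s + (|h s| + h s)) (w' := fun s => χd s + τ' s)
      hapos
    · intro s hs
      have := mul_nonneg (hapos s hs) (hχnn s hs)
      have := neg_abs_le (h s)
      linarith
    · exact fun s hs => (hχ_deriv s hs).add (hd1 s hs)
    · intro s hs
      have := (hχd_deriv s hs).add (hd2 s hs)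
      convert this using 1
      · rfl
      · rfl
      · rfl
      ring
    · rw [hχ0, hτ0]; ring
    · have : χd 1 = |c| := by simp [hχddef]
      rw [this, hτ'1]
      linarith [neg_abs_le c]
  have hτχ : ∀ s ∈ Icc (0:ℝ) 1, |τ s| ≤ χ s := by
    intro s hs
    rw [abs_le]
    constructor
    · linarith [hdn s hs]
    · linarith [hup s hs]
  -- pointwise bound on χ
  have hχbd : ∀ t ∈ Icc (0:ℝ) 1, χ t ≤ t ^ (1 - β) * K := by
    intro t ht
    rcases eq_or_lt_of_le ht.1 with h0t | h0t
    · rw [← h0t, hχ0]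
      exact mul_nonneg (Real.rpow_nonneg le_rfl _) hK0
    · have hP1 : |c| * t ≤ |c| * t ^ (1 - β) := by
        apply mul_le_mul_of_nonneg_left _ (abs_nonneg c)
        calc t = t ^ (1:ℝ) := (Real.rpow_one t).symm
          _ ≤ t ^ (1 - β) := Real.rpow_le_rpow_of_exponent_ge h0t ht.2 (by linarith)
      have hP2 : (∫ σ in (0:ℝ)..t, σ * |h σ|)
          ≤ t ^ (1 - β) * ∫ σ in (0:ℝ)..t, σ ^ β * |h σ| := by
        rw [← intervalIntegral.integral_const_mul]
        apply intervalIntegral.integral_mono_on ht.1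
          (ii hth le_rfl ht.1 ht.2) (ii (continuousOn_const.mul hIhc) le_rfl ht.1 ht.2)
        intro σ hσ
        have hσ0 : (0:ℝ) ≤ σ := hσ.1
        have e1 : σ ^ (1 - β) * σ ^ β = σ := by
          rw [← Real.rpow_add' hσ0 (by norm_num)]
          rw [show (1 - β) + β = (1:ℝ) by ring, Real.rpow_one]
        calc σ * |h σ| = σ ^ (1 - β) * σ ^ β * |h σ| := by rw [e1]
          _ ≤ t ^ (1 - β) * σ ^ β * |h σ| := by
              apply mul_le_mul_of_nonneg_right _ (abs_nonneg _)
              exact mul_le_mul_of_nonneg_right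
                (Real.rpow_le_rpow hσ0 hσ.2 h1β) (Real.rpow_nonneg hσ0 β)
          _ = t ^ (1 - β) * (σ ^ β * |h σ|) := by ring
      have hP3 : t * (∫ σ in t..(1:ℝ), |h σ|)
          ≤ t ^ (1 - β) * ∫ σ in t..(1:ℝ), σ ^ β * |h σ| := by
        rw [← intervalIntegral.integral_const_mul, ← intervalIntegral.integral_const_mul]
        apply intervalIntegral.integral_mono_on ht.2
          (ii (continuousOn_const.mul habs) ht.1 ht.2 le_rfl)
          (ii (continuousOn_const.mul hIhc) ht.1 ht.2 le_rfl)
        intro σ hσ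
        have hσ0 : (0:ℝ) ≤ σ := le_trans ht.1 hσ.1
        have e1 : t ^ (1 - β) * t ^ β = t := by
          rw [← Real.rpow_add' ht.1 (by norm_num)]
          rw [show (1 - β) + β = (1:ℝ) by ring, Real.rpow_one]
        calc t * |h σ| = t ^ (1 - β) * t ^ β * |h σ| := by rw [e1]
          _ ≤ t ^ (1 - β) * σ ^ β * |h σ| := by
              apply mul_le_mul_of_nonneg_right _ (abs_nonneg _)
              exact mul_le_mul_of_nonneg_left
                (Real.rpow_le_rpow ht.1 hσ.1 hβ0) (Real.rpow_nonneg ht.1 _)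
          _ = t ^ (1 - β) * (σ ^ β * |h σ|) := by ring
      have hXY : (∫ σ in (0:ℝ)..t, σ ^ β * |h σ|) + (∫ σ in t..(1:ℝ), σ ^ β * |h σ|) = Ih :=
        intervalIntegral.integral_add_adjacent_intervals
          (ii hIhc le_rfl ht.1 ht.2) (ii hIhc ht.1 ht.2 le_rfl)
      have hexp : t ^ (1 - β) * K
          = |c| * t ^ (1 - β) + (t ^ (1 - β) * ∫ σ in (0:ℝ)..t, σ ^ β * |h σ|)
            + (t ^ (1 - β) * ∫ σ in t..(1:ℝ), σ ^ β * |h σ|) := by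
        rw [hKdef, ← hXY]; ring
      rw [hexp]
      simp only [hχdef]
      linarith
  -- the majorant G for |τ'|
  set g : ℝ → ℝ := fun t => |h t| + a t * χ t with hgdef
  have hgc : ContinuousOn g (Icc 0 1) := habs.add (ha.mul hχc)
  have hg0 : ∀ t ∈ Icc (0:ℝ) 1, 0 ≤ g t := fun t ht =>
    add_nonneg (abs_nonneg _) (mul_nonneg (hapos t ht) (hχnn t ht))
  set G : ℝ → ℝ := fun s => |c| + ∫ t in s..(1:ℝ), g t with hGdef
  have hGd : ∀ s ∈ Icc (0:ℝ) 1, HasDerivWithinAt G (-g s) (Icc 0 1) s := fun s hs =>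
    (tail_deriv hgc s hs).const_add _
  have hGc : ContinuousOn G (Icc 0 1) := fun s hs => (hGd s hs).continuousWithinAt
  have hG0 : ∀ s ∈ Icc (0:ℝ) 1, 0 ≤ G s := by
    intro s hs
    have : 0 ≤ ∫ t in s..(1:ℝ), g t :=
      intervalIntegral.integral_nonneg hs.2 (fun t ht => hg0 t ⟨le_trans hs.1 ht.1, ht.2⟩)
    have := abs_nonneg c
    simp only [hGdef]
    linarith
  -- FTC representation and bound for τ'
  have hτ'bd : ∀ s ∈ Icc (0:ℝ) 1, |τ' s| ≤ G s := by
    intro s hs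
    have heq : ∫ t in s..(1:ℝ), (a t * τ t - h t) = τ' 1 - τ' s := by
      apply intervalIntegral.integral_eq_sub_of_hasDeriv_right_of_le hs.2
        (hτ'c.mono (Icc_subset_Icc hs.1 le_rfl))
      · intro x hx
        have hxI : x ∈ Icc (0:ℝ) 1 := ⟨le_trans hs.1 hx.1.le, hx.2.le⟩
        have hx0 : 0 < x := lt_of_le_of_lt hs.1 hx.1
        exact ((hd2 x hxI).hasDerivAt (Icc_mem_nhds hx0 hx.2)).hasDerivWithinAt
      · exact ii ((ha.mul hτc).sub hh) hs.1 hs.2 le_rfl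
    have hτ's : τ' s = c - ∫ t in s..(1:ℝ), (a t * τ t - h t) := by
      rw [heq, hτ'1]; ring
    have habsint : |∫ t in s..(1:ℝ), (a t * τ t - h t)|
        ≤ ∫ t in s..(1:ℝ), |a t * τ t - h t| :=
      intervalIntegral.abs_integral_le_integral_abs hs.2
    have hmono2 : ∫ t in s..(1:ℝ), |a t * τ t - h t| ≤ ∫ t in s..(1:ℝ), g t := by
      apply intervalIntegral.integral_mono_on hs.2
        (ii ((ha.mul hτc).sub hh).abs hs.1 hs.2 le_rfl)
        (ii hgc hs.1 hs.2 le_rfl)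
      intro t ht
      have htI : t ∈ Icc (0:ℝ) 1 := ⟨le_trans hs.1 ht.1, ht.2⟩
      have h1 : |a t * τ t - h t| ≤ |a t * τ t| + |h t| := abs_sub _ _
      have h2 : |a t * τ t| = a t * |τ t| := by
        rw [abs_mul, abs_of_nonneg (hapos t htI)]
      have h3 : a t * |τ t| ≤ a t * χ t :=
        mul_le_mul_of_nonneg_left (hτχ t htI) (hapos t htI)
      show |a t * τ t - h t| ≤ g t
      simp only [hgdef]
      linarith
    calc |τ' s| = |c - ∫ t in s..(1:ℝ), (a t * τ t - h t)| := by rw [← hτ's]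
      _ ≤ |c| + |∫ t in s..(1:ℝ), (a t * τ t - h t)| := abs_sub _ _
      _ ≤ |c| + ∫ t in s..(1:ℝ), g t := by linarith
      _ = G s := rfl
  -- bound on the weighted integral of g
  set Ig : ℝ := ∫ t in (0:ℝ)..1, t ^ β * g t with hIgdef
  have hIgc : ContinuousOn (fun t : ℝ => t ^ β * g t) (Icc 0 1) :=
    ((Real.continuous_rpow_const hβ0).continuousOn).mul hgc
  have haχc : ContinuousOn (fun t : ℝ => t ^ β * (a t * χ t)) (Icc 0 1) :=
    ((Real.continuous_rpow_const hβ0).continuousOn).mul (ha.mul hχc)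
  have hIg_bd : Ig ≤ Ih + M ^ 2 * K := by
    have hsplit : Ig = Ih + ∫ t in (0:ℝ)..1, t ^ β * (a t * χ t) := by
      rw [hIgdef, hIhdef, ← intervalIntegral.integral_add
        (ii hIhc le_rfl zero_le_one le_rfl) (ii haχc le_rfl zero_le_one le_rfl)]
      apply intervalIntegral.integral_congr
      intro t _
      simp only [hgdef]
      ring
    have hmono3 : ∫ t in (0:ℝ)..1, t ^ β * (a t * χ t)
        ≤ ∫ t in (0:ℝ)..1, (t * a t) * K := by
      apply intervalIntegral.integral_mono_on zero_le_one
        (ii haχc le_rfl zero_le_one le_rfl)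
        (ii (((continuous_id.continuousOn).mul ha).mul continuousOn_const)
          le_rfl zero_le_one le_rfl)
      intro t ht
      have e1 : t ^ β * t ^ (1 - β) = t := by
        rw [← Real.rpow_add' ht.1 (by norm_num)]
        rw [show β + (1 - β) = (1:ℝ) by ring, Real.rpow_one]
      calc t ^ β * (a t * χ t) ≤ t ^ β * (a t * (t ^ (1 - β) * K)) := by
            apply mul_le_mul_of_nonneg_left _ (Real.rpow_nonneg ht.1 β)
            exact mul_le_mul_of_nonneg_left (hχbd t ht) (hapos t ht)
        _ = (t ^ β * t ^ (1 - β)) * (a t * K) := by ring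
        _ = (t * a t) * K := by rw [e1]; ring
    have hconst : ∫ t in (0:ℝ)..1, (t * a t) * K = (∫ t in (0:ℝ)..1, t * a t) * K :=
      intervalIntegral.integral_mul_const _ _
    have : (∫ t in (0:ℝ)..1, t * a t) * K ≤ M ^ 2 * K :=
      mul_le_mul_of_nonneg_right haM hK0
    linarith
  have hBbd : |c| + Ig ≤ (1 + M ^ 2) * K := by
    have : |c| + Ih = K := rfl
    nlinarith [hIg_bd]
  have hB0 : 0 ≤ |c| + Ig := by
    have hIg0 : 0 ≤ Ig :=
      intervalIntegral.integral_nonneg zero_le_one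
        (fun t ht => mul_nonneg (Real.rpow_nonneg ht.1 β) (hg0 t ht))
    positivity
  -- N bound
  have hNbd := nbd hgc hg0 (abs_nonneg c) hβ0
  -- split on p = ∞
  rcases eq_or_ne p ∞ with hp | hp
  · -- p = ∞
    have hβα : β = α := by simp [hβdef, hp]
    have hbound : ∀ᵐ s ∂(volume.restrict (Ioc (0:ℝ) 1)), ‖s ^ α * τ' s‖ ≤ |c| + Ig := by
      rw [ae_restrict_iff' measurableSet_Ioc]
      apply ae_of_all
      intro s hs
      have hsI : s ∈ Icc (0:ℝ) 1 := ⟨hs.1.le, hs.2⟩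
      have hn : ‖s ^ α * τ' s‖ = s ^ α * |τ' s| := by
        rw [Real.norm_eq_abs, abs_mul, abs_of_nonneg (Real.rpow_nonneg hs.1.le _)]
      calc ‖s ^ α * τ' s‖ = s ^ α * |τ' s| := hn
        _ ≤ s ^ α * G s :=
            mul_le_mul_of_nonneg_left (hτ'bd s hsI) (Real.rpow_nonneg hs.1.le _)
        _ = s ^ β * G s := by rw [hβα]
        _ ≤ |c| + Ig := hNbd s hsI
    have hmeasure : (volume.restrict (Ioc (0:ℝ) 1)) Set.univ = 1 := by
      rw [Measure.restrict_apply_univ, Real.volume_Ioc]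
      norm_num
    calc eLpNorm (fun s => s ^ α * τ' s) p (volume.restrict (Ioc (0:ℝ) 1))
        ≤ (volume.restrict (Ioc (0:ℝ) 1)) Set.univ ^ p.toReal⁻¹
            * ENNReal.ofReal (|c| + Ig) := eLpNorm_le_of_ae_bound hbound
      _ = ENNReal.ofReal (|c| + Ig) := by rw [hmeasure, ENNReal.one_rpow, one_mul]
      _ ≤ ENNReal.ofReal (6 * (1 + M ^ 2) * (|c| + Ih)) := by
          apply ENNReal.ofReal_le_ofReal
          have hKK : |c| + Ih = K := rfl
          nlinarith [hBbd, hK0]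
  · -- 1 ≤ p < ∞
    have hp0 : p ≠ 0 := (lt_of_lt_of_le zero_lt_one hp1).ne'
    set q : ℝ := p.toReal with hqdef
    have hq1 : 1 ≤ q := by
      have := ENNReal.toReal_mono hp hp1
      simpa using this
    have hq0 : 0 < q := lt_of_lt_of_le one_pos hq1
    have hβq : β = α + q⁻¹ := by
      rw [hβdef, one_div, ENNReal.toReal_inv]
    set Φ : ℝ → ℝ := fun s => s ^ α * G s with hΦdef
    have hΦc : ContinuousOn Φ (Icc 0 1) :=
      ((Real.continuous_rpow_const hα).continuousOn).mul hGc
    have hΦnn : ∀ s ∈ Icc (0:ℝ) 1, 0 ≤ Φ s := fun s hs =>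
      mul_nonneg (Real.rpow_nonneg hs.1 _) (hG0 s hs)
    have hmono : eLpNorm (fun s => s ^ α * τ' s) p (volume.restrict (Ioc (0:ℝ) 1))
        ≤ eLpNorm Φ p (volume.restrict (Ioc (0:ℝ) 1)) := by
      apply eLpNorm_mono_ae
      rw [ae_restrict_iff' measurableSet_Ioc]
      apply ae_of_all
      intro s hs
      have hsI : s ∈ Icc (0:ℝ) 1 := ⟨hs.1.le, hs.2⟩
      have h1 : |s ^ α * τ' s| = s ^ α * |τ' s| := by
        rw [abs_mul, abs_of_nonneg (Real.rpow_nonneg hs.1.le _)]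
      have h2 : s ^ α * |τ' s| ≤ s ^ α * G s :=
        mul_le_mul_of_nonneg_left (hτ'bd s hsI) (Real.rpow_nonneg hs.1.le _)
      rw [Real.norm_eq_abs, Real.norm_eq_abs, h1]
      exact le_trans h2 (le_abs_self _)
    refine le_trans hmono ?_
    -- compute the Lp norm of Φ
    set T : ℝ := ∫ s in Ioc (0:ℝ) 1, Φ s ^ q with hTdef
    have hΦqc : ContinuousOn (fun s => Φ s ^ q) (Icc 0 1) :=
      hΦc.rpow_const (fun s hs => Or.inr hq0.le)
    have hInt : IntegrableOn (fun s => Φ s ^ q) (Ioc (0:ℝ) 1) volume :=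
      (hΦqc.integrableOn_Icc).mono_set Ioc_subset_Icc_self
    have hnn : 0 ≤ᵐ[volume.restrict (Ioc (0:ℝ) 1)] fun s => Φ s ^ q := by
      have h' : ∀ᵐ s ∂(volume.restrict (Ioc (0:ℝ) 1)), 0 ≤ Φ s ^ q := by
        rw [ae_restrict_iff' measurableSet_Ioc]
        exact ae_of_all _ fun s hs => Real.rpow_nonneg (hΦnn s ⟨hs.1.le, hs.2⟩) q
      exact h'
    have hlint : (∫⁻ s in Ioc (0:ℝ) 1, (‖Φ s‖₊ : ℝ≥0∞) ^ q) = ENNReal.ofReal T := by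
      have hcong : ∀ᵐ s ∂(volume.restrict (Ioc (0:ℝ) 1)),
          (‖Φ s‖₊ : ℝ≥0∞) ^ q = ENNReal.ofReal (Φ s ^ q) := by
        rw [ae_restrict_iff' measurableSet_Ioc]
        apply ae_of_all
        intro s hs
        have hΦs : 0 ≤ Φ s := hΦnn s ⟨hs.1.le, hs.2⟩
        rw [← enorm_eq_nnnorm, ← ofReal_norm_eq_enorm, Real.norm_eq_abs, abs_of_nonneg hΦs,
          ENNReal.ofReal_rpow_of_nonneg hΦs hq0.le]
      rw [lintegral_congr_ae hcong, ← ofReal_integral_eq_lintegral_ofReal hInt hnn]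
    have hThardy : T ≤ (1 + q) * (|c| + Ig) ^ q := by
      have hTint : T = ∫ s in (0:ℝ)..1, (s ^ α * G s) ^ q := by
        rw [hTdef, intervalIntegral.integral_of_le zero_le_one]
      rw [hTint]
      have := hardy hgc hg0 (abs_nonneg c) hα hq1
      rw [← hβq] at this
      exact this
    rw [eLpNorm_eq_lintegral_rpow_enorm_toReal hp0 hp, ← hqdef]
    simp only [enorm_eq_nnnorm]
    rw [hlint]
    have hstep1 : ENNReal.ofReal T ^ (1 / q)
        ≤ ENNReal.ofReal ((1 + q) * (|c| + Ig) ^ q) ^ (1 / q) :=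
      ENNReal.rpow_le_rpow (ENNReal.ofReal_le_ofReal hThardy) (by positivity)
    refine le_trans hstep1 ?_
    rw [ENNReal.ofReal_rpow_of_nonneg (by positivity) (by positivity)]
    apply ENNReal.ofReal_le_ofReal
    have hsplitpow : ((1 + q) * (|c| + Ig) ^ q) ^ (1 / q)
        = (1 + q) ^ (1 / q) * ((|c| + Ig) ^ q) ^ (1 / q) :=
      Real.mul_rpow (by positivity) (Real.rpow_nonneg hB0 q)
    have hpowq : ((|c| + Ig) ^ q) ^ (1 / q) = |c| + Ig := by
      rw [← Real.rpow_mul hB0]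
      rw [show q * (1 / q) = (1:ℝ) by field_simp, Real.rpow_one]
    have h6 : (1 + q) ^ (1 / q) ≤ 6 := by
      rw [one_div]
      exact aux6 hq1
    calc ((1 + q) * (|c| + Ig) ^ q) ^ (1 / q) = (1 + q) ^ (1 / q) * (|c| + Ig) := by
          rw [hsplitpow, hpowq]
      _ ≤ 6 * (|c| + Ig) := mul_le_mul_of_nonneg_right h6 hB0
      _ ≤ 6 * (1 + M ^ 2) * (|c| + Ih) := by
          have hKK : |c| + Ih = K := rfl
          nlinarith [hBbd]
end
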